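/- arXiv:1901.01127 — 10 statements merged into one kernel-verified Lean document; each statement's English description precedes it below -/
import Mathlib

section
/- Let (a_n) be a real sequence and α ∈ ℝ̄. If α is an accumulation point (cluster point) of the sequence (a_n) in ℝ̄, then α ∈ AAR_{(a_n)}. -/
open Filter Topology

/-- Arithmetic mean of the first `n` terms of a real sequence. -/
noncomputable def avgSeq (a : ℕ → ℝ) (n : ℕ) : ℝ := (∑ i ∈ Finset.range n, a i) / n

/-- `a` tends to `α ∈ ℝ̄` in average: the sequence of arithmetic means tends to `α`. -/
def avgTendsTo (a : ℕ → ℝ) (α : EReal) : Prop :=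
  Tendsto (fun n => ((avgSeq a n : ℝ) : EReal)) atTop (𝓝 α)

/-- The set of points of `ℝ̄` accessible in average by rearrangement of `a`. -/
def AAR (a : ℕ → ℝ) : Set EReal :=
  {α | ∃ p : ℕ → ℕ, Function.Bijective p ∧ avgTendsTo (fun n => a (p n)) α}

/-- The interleaving `(b_n)||(c_n)` (0-indexed: `a (2n) = b n`, `a (2n+1) = c n`). -/
noncomputable def interleave (b c : ℕ → ℝ) : ℕ → ℝ :=
  fun n => if n % 2 = 0 then b (n / 2) else c (n / 2)

noncomputable section
namespace StmtTwo

/-- smallest natural not in the list -/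
def minUnused (l : List ℕ) : ℕ :=
  Nat.find (p := fun x => x ∉ l) (by
    obtain ⟨x, hx⟩ := Infinite.exists_notMem_finset l.toFinset
    exact ⟨x, by simpa using hx⟩)

lemma minUnused_not_mem (l : List ℕ) : minUnused l ∉ l := by
  unfold minUnused
  exact Nat.find_spec (p := fun x => x ∉ l) _

lemma mem_of_lt_minUnused {l : List ℕ} {x : ℕ} (h : x < minUnused l) : x ∈ l := by
  have := Nat.find_min (p := fun x => x ∉ l) (by
    obtain ⟨x, hx⟩ := Infinite.exists_notMem_finset l.toFinset
    exact ⟨x, by simpa using hx⟩) (show x < minUnused l from h)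
  simpa using this

lemma minUnused_le_length {l : List ℕ} (h : l.Nodup) : minUnused l ≤ l.length := by
  by_contra hc
  push_neg at hc
  have hsub : Finset.range (l.length + 1) ⊆ l.toFinset := by
    intro x hx
    simp only [Finset.mem_range] at hx
    exact List.mem_toFinset.2 (mem_of_lt_minUnused (lt_of_lt_of_le hx hc))
  have := Finset.card_le_card hsub
  rw [Finset.card_range, List.toFinset_card_of_nodup h] at this
  omega

structure St where
  u : List ℕ
  c : ℕ
  W : ℝ

variable (a : ℕ → ℝ) (φ thr : ℕ → ℕ)

/-- one block of the construction -/
def step (k : ℕ) (s : St) : St :=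
  let m := minUnused s.u
  let M := max s.c (max (thr k) (s.u.length + 1))
  let W' := s.W + |a m|
  let len := (k+1) * (⌈W'⌉₊ + k + 1) + 2
  ⟨s.u ++ ((List.range (len - 1)).map (fun t => φ (M + t)) ++ [m]), M + (len - 1), W'⟩

def st : ℕ → St
  | 0 => ⟨[], 0, 0⟩
  | k+1 => step a φ thr k (st k)

def mk (k : ℕ) : ℕ := minUnused (st a φ thr k).u
def Mk (k : ℕ) : ℕ := max (st a φ thr k).c (max (thr k) ((st a φ thr k).u.length + 1))
def Wk (k : ℕ) : ℝ := (st a φ thr k).W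
def lenk (k : ℕ) : ℕ := (k+1) * (⌈Wk a φ thr k + |a (mk a φ thr k)|⌉₊ + k + 1) + 2
def nu (k : ℕ) : ℕ := (st a φ thr k).u.length

lemma st_succ (k : ℕ) : st a φ thr (k+1) =
    ⟨(st a φ thr k).u ++ (((List.range (lenk a φ thr k - 1)).map
        (fun t => φ (Mk a φ thr k + t))) ++ [mk a φ thr k]),
      Mk a φ thr k + (lenk a φ thr k - 1), Wk a φ thr k + |a (mk a φ thr k)|⟩ := rfl

lemma Wk_zero : Wk a φ thr 0 = 0 := rfl
lemma Wk_succ (k : ℕ) : Wk a φ thr (k+1) = Wk a φ thr k + |a (mk a φ thr k)| := rfl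
lemma nu_zero : nu a φ thr 0 = 0 := rfl
lemma nu_succ (k : ℕ) : nu a φ thr (k+1) = nu a φ thr k + lenk a φ thr k := by
  have h2 : 2 ≤ lenk a φ thr k := by unfold lenk; omega
  simp only [nu, st_succ, List.length_append, List.length_map, List.length_range,
    List.length_cons, List.length_nil]
  omega

lemma lenk_ge (k : ℕ) : 2 ≤ lenk a φ thr k := by unfold lenk; omega

lemma Wk_nonneg (k : ℕ) : 0 ≤ Wk a φ thr k := by
  induction k with
  | zero => simp [Wk_zero]
  | succ k ih => rw [Wk_succ]; positivity

lemma Wk_mono : Monotone (Wk a φ thr) := by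
  apply monotone_nat_of_le_succ
  intro k
  rw [Wk_succ]
  have := abs_nonneg (a (mk a φ thr k)); linarith

lemma nu_ge (k : ℕ) : 2 * k ≤ nu a φ thr k := by
  induction k with
  | zero => simp
  | succ k ih => have := lenk_ge a φ thr k; rw [nu_succ]; omega

lemma nu_strictMono : StrictMono (nu a φ thr) := by
  apply strictMono_nat_of_lt_succ
  intro k; have := lenk_ge a φ thr k; rw [nu_succ]; omega

/-- the key size requirement -/
lemma nu_key (k : ℕ) : (k : ℝ) * (Wk a φ thr k + k) ≤ nu a φ thr k := by
  cases k with
  | zero => simp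
  | succ k =>
    rw [nu_succ, Wk_succ]
    have h1 : (k+1 : ℝ) * ((⌈Wk a φ thr k + |a (mk a φ thr k)|⌉₊ : ℝ) + k + 1) + 2
        ≤ ((nu a φ thr k : ℝ) + (lenk a φ thr k : ℝ)) := by
      have : ((lenk a φ thr k : ℕ) : ℝ) = ((k:ℝ)+1) * ((⌈Wk a φ thr k + |a (mk a φ thr k)|⌉₊ : ℝ) + k + 1) + 2 := by
        unfold lenk; push_cast; ring
      rw [this]
      have : (0:ℝ) ≤ nu a φ thr k := by positivity
      linarith
    have h2 : Wk a φ thr k + |a (mk a φ thr k)| ≤ (⌈Wk a φ thr k + |a (mk a φ thr k)|⌉₊ : ℝ) :=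
      Nat.le_ceil _
    push_cast at h1 ⊢
    nlinarith [h1, h2, Nat.cast_nonneg (α := ℝ) (nu a φ thr k), Nat.cast_nonneg (α := ℝ) (lenk a φ thr k)]


lemma st_prefix_succ (k : ℕ) : (st a φ thr k).u <+: (st a φ thr (k+1)).u := by
  rw [st_succ]; exact List.prefix_append _ _

lemma st_prefix {k l : ℕ} (h : k ≤ l) : (st a φ thr k).u <+: (st a φ thr l).u := by
  induction l with
  | zero => simp_all
  | succ l ih =>
    rcases Nat.lt_or_ge k (l+1) with h' | h'
    · exact (ih (by omega)).trans (st_prefix_succ a φ thr l)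
    · have : k = l + 1 := by omega
      subst this; exact List.prefix_refl _

def perm (n : ℕ) : ℕ := ((st a φ thr (n+1)).u).getD n 0

lemma lt_nu_succ_self (n : ℕ) : n < nu a φ thr (n+1) := by
  have := nu_ge a φ thr (n+1); omega

lemma perm_eq {k n : ℕ} (h : n < nu a φ thr k) :
    perm a φ thr n = ((st a φ thr k).u)[n]'h := by
  unfold perm
  rcases Nat.le_total k (n+1) with hle | hle
  · rw [List.getD_eq_getElem _ _ (lt_nu_succ_self a φ thr n)]
    exact ((st_prefix a φ thr hle).getElem h).symm
  · rw [List.getD_eq_getElem _ _ (lt_nu_succ_self a φ thr n)]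
    exact (st_prefix a φ thr hle).getElem (lt_nu_succ_self a φ thr n)

/-- entries of block k -/
lemma perm_block {k i : ℕ} (h1 : nu a φ thr k ≤ i) (h2 : i < nu a φ thr (k+1)) :
    perm a φ thr i = if i = nu a φ thr (k+1) - 1 then mk a φ thr k
      else φ (Mk a φ thr k + (i - nu a φ thr k)) := by
  have hlen : nu a φ thr (k+1) = nu a φ thr k + lenk a φ thr k := nu_succ a φ thr k
  have h2' : i < nu a φ thr (k+1) := h2
  rw [perm_eq a φ thr h2']
  have hst := st_succ a φ thr k
  have hu : (st a φ thr (k+1)).u = (st a φ thr k).u ++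
      (((List.range (lenk a φ thr k - 1)).map (fun t => φ (Mk a φ thr k + t))) ++ [mk a φ thr k]) := by
    rw [hst]
  have hL2 : 2 ≤ lenk a φ thr k := lenk_ge a φ thr k
  rcases Nat.lt_or_ge i (nu a φ thr (k+1) - 1) with hcase | hcase
  · -- filler
    have hne : i ≠ nu a φ thr (k+1) - 1 := by omega
    rw [if_neg hne]
    have hlt : i - nu a φ thr k < ((List.range (lenk a φ thr k - 1)).map
        (fun t => φ (Mk a φ thr k + t))).length := by
      simp only [List.length_map, List.length_range]; omega
    simp only [hu]
    rw [List.getElem_append_right (by exact h1)]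
    simp only [show (st a φ thr k).u.length = nu a φ thr k from rfl]
    rw [List.getElem_append_left hlt]
    simp only [List.getElem_map, List.getElem_range]
  · -- bad element at end
    have heq : i = nu a φ thr (k+1) - 1 := by omega
    rw [if_pos heq]
    simp only [hu]
    have h1' : (st a φ thr k).u.length ≤ i := h1
    rw [List.getElem_append_right h1']
    simp only [show (st a φ thr k).u.length = nu a φ thr k from rfl]
    rw [List.getElem_append_right (by simp only [List.length_map, List.length_range]; omega)]
    simp


section Bij
variable {φ} (hφ : StrictMono φ)
include hφ

lemma st_invariant (k : ℕ) : ((st a φ thr k).u).Nodup ∧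
    ∀ x ∈ (st a φ thr k).u, x ≤ (st a φ thr k).u.length ∨ ∃ i < (st a φ thr k).c, x = φ i := by
  induction k with
  | zero => simp [st]
  | succ k ih =>
    obtain ⟨hnd, hinv⟩ := ih
    set s := st a φ thr k with hs
    set M := Mk a φ thr k with hMdef
    set L := lenk a φ thr k with hLdef
    set m := mk a φ thr k with hmdef
    have hm_le : m ≤ s.u.length := minUnused_le_length hnd
    have hM : s.u.length + 1 ≤ M := le_max_of_le_right (le_max_right _ _)
    have hcM : s.c ≤ M := le_max_left _ _
    have hlen_eq : (st a φ thr k).u.length = s.u.length := rfl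
    have hfill_not_mem : ∀ t, φ (M + t) ∉ s.u := by
      intro t hmem
      rcases hinv _ hmem with hle | ⟨i, hi, hxe⟩
      · have : M + t ≤ φ (M + t) := hφ.le_apply
        omega
      · have : φ i < φ (M + t) := hφ (by omega)
        omega
    constructor
    · rw [st_succ]
      simp only
      rw [List.nodup_append]
      refine ⟨hnd, ?_, ?_⟩
      · rw [List.nodup_append]
        refine ⟨?_, ?_, ?_⟩
        · exact List.Nodup.map (fun x y hxy => by
            have := hφ.injective hxy; omega) List.nodup_range
        · simp
        · intro x hx y hy hxy; subst hxy
          simp only [List.mem_map, List.mem_range] at hx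
          simp only [List.mem_singleton] at hy
          obtain ⟨t, ht, rfl⟩ := hx
          have h1 : Mk a φ thr k + t ≤ φ (Mk a φ thr k + t) := hφ.le_apply
          omega
      · intro x hx y hy hxy; subst hxy
        simp only [List.mem_append, List.mem_map, List.mem_range, List.mem_singleton] at hy
        rcases hy with ⟨t, ht, rfl⟩ | rfl
        · exact hfill_not_mem t hx
        · exact minUnused_not_mem s.u hx
    · rw [st_succ]
      simp only [List.mem_append, List.length_append, List.mem_map, List.mem_range,
        List.mem_singleton, List.length_map, List.length_range, List.length_cons,
        List.length_nil]
      intro x hx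
      rcases hx with hx | ⟨t, ht, rfl⟩ | rfl
      · rcases hinv x hx with hle | ⟨i, hi, rfl⟩
        · left; omega
        · right; exact ⟨i, by omega, rfl⟩
      · right; exact ⟨M + t, by omega, rfl⟩
      · left; omega

lemma st_nodup (k : ℕ) : ((st a φ thr k).u).Nodup := (st_invariant a thr hφ k).1

lemma mk_le_nu (k : ℕ) : mk a φ thr k ≤ nu a φ thr k :=
  minUnused_le_length (st_nodup a thr hφ k)

omit hφ in
lemma mk_mem_succ (k : ℕ) : mk a φ thr k ∈ (st a φ thr (k+1)).u := by
  rw [st_succ]; simp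

omit hφ in
lemma mem_st_mono {k l : ℕ} (h : k ≤ l) {x : ℕ} (hx : x ∈ (st a φ thr k).u) :
    x ∈ (st a φ thr l).u := (st_prefix a φ thr h).subset hx

omit hφ in
lemma mk_lt_succ (k : ℕ) : mk a φ thr k < mk a φ thr (k+1) := by
  have h1 : mk a φ thr k ∈ (st a φ thr (k+1)).u := mk_mem_succ a thr k
  have h2 : mk a φ thr (k+1) ∉ (st a φ thr (k+1)).u := minUnused_not_mem _
  rcases Nat.lt_trichotomy (mk a φ thr k) (mk a φ thr (k+1)) with h | h | h
  · exact h
  · exact absurd (h ▸ h1) h2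
  · exact absurd (mem_st_mono a thr (Nat.le_succ k) (mem_of_lt_minUnused h)) h2

omit hφ in
lemma mk_ge (k : ℕ) : k ≤ mk a φ thr k :=
  (strictMono_nat_of_lt_succ (mk_lt_succ a thr)).le_apply

lemma perm_injective : Function.Injective (perm a φ thr) := by
  intro m n hmn
  rcases Nat.le_total m n with h | h
  · have hm : m < nu a φ thr (n+1) := lt_of_le_of_lt h (lt_nu_succ_self a φ thr n)
    have hn : n < nu a φ thr (n+1) := lt_nu_succ_self a φ thr n
    rw [perm_eq a φ thr hm, perm_eq a φ thr hn] at hmn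
    exact ((st_nodup a thr hφ (n+1)).getElem_inj_iff).1 hmn
  · have hn : n < nu a φ thr (m+1) := lt_of_le_of_lt h (lt_nu_succ_self a φ thr m)
    have hm : m < nu a φ thr (m+1) := lt_nu_succ_self a φ thr m
    rw [perm_eq a φ thr hm, perm_eq a φ thr hn] at hmn
    exact ((st_nodup a thr hφ (m+1)).getElem_inj_iff).1 hmn

omit hφ in
lemma perm_surjective : Function.Surjective (perm a φ thr) := by
  intro x
  have hx : x ∈ (st a φ thr (x+1)).u := by
    apply mem_of_lt_minUnused
    exact lt_of_lt_of_le (Nat.lt_succ_self x) (mk_ge a thr (x+1))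
  obtain ⟨n, hn, hget⟩ := List.getElem_of_mem hx
  exact ⟨n, by rw [perm_eq a φ thr (show n < nu a φ thr (x+1) from hn)]; exact hget⟩


end Bij

lemma nu_mono : Monotone (nu a φ thr) := (nu_strictMono a φ thr).monotone

def blk (n : ℕ) : ℕ := Nat.findGreatest (fun k => nu a φ thr k ≤ n) n

lemma blk_spec1 (n : ℕ) : nu a φ thr (blk a φ thr n) ≤ n := by
  exact Nat.findGreatest_spec (m := 0) (P := fun k => nu a φ thr k ≤ n) (Nat.zero_le n)
    (by simp [nu_zero])

lemma le_blk {k n : ℕ} (h : nu a φ thr k ≤ n) : k ≤ blk a φ thr n := by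
  exact Nat.le_findGreatest (P := fun k => nu a φ thr k ≤ n)
    (le_trans (by have := nu_ge a φ thr k; omega) h) h

lemma blk_spec2 (n : ℕ) : n < nu a φ thr (blk a φ thr n + 1) := by
  by_contra hc
  push_neg at hc
  have := le_blk a φ thr hc
  omega

lemma blk_eq {k n : ℕ} (h1 : nu a φ thr k ≤ n) (h2 : n < nu a φ thr (k+1)) :
    blk a φ thr n = k := by
  have hle := le_blk a φ thr h1
  by_contra hne
  have hlt : k + 1 ≤ blk a φ thr n := by omega
  have := (nu_mono a φ thr) hlt
  have := blk_spec1 a φ thr n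
  omega

lemma sum_lower {r : ℝ} {K : ℕ} (hr : ∀ k, K ≤ k → ∀ i, thr k ≤ i → r ≤ a (φ i)) :
    ∀ n, nu a φ thr K ≤ n →
      (∑ i ∈ Finset.range (nu a φ thr K), a (perm a φ thr i))
        + ((n : ℝ) - (nu a φ thr K : ℝ)) * r
        - ((Wk a φ thr (blk a φ thr n) - Wk a φ thr K)
            + ((blk a φ thr n : ℝ) - (K : ℝ)) * |r|)
      ≤ ∑ i ∈ Finset.range n, a (perm a φ thr i) := by
  intro n hn
  induction n, hn using Nat.le_induction with
  | base =>
    have hb : blk a φ thr (nu a φ thr K) = K :=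
      blk_eq a φ thr le_rfl (nu_strictMono a φ thr (Nat.lt_succ_self K))
    rw [hb]
    simp
  | succ n hn ih =>
    set b := blk a φ thr n with hbdef
    have hb1 : nu a φ thr b ≤ n := blk_spec1 a φ thr n
    have hb2 : n < nu a φ thr (b+1) := blk_spec2 a φ thr n
    have hbK : K ≤ b := le_blk a φ thr hn
    have hWmono : Wk a φ thr K ≤ Wk a φ thr b := Wk_mono a φ thr hbK
    rw [Finset.sum_range_succ]
    rcases eq_or_lt_of_le (Nat.succ_le_of_lt hb2) with hbad | hgood
    · -- n is the bad position; block increments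
      have hblk : blk a φ thr (n+1) = b + 1 := by
        apply blk_eq a φ thr (le_of_eq hbad.symm)
        have h1 := nu_succ a φ thr (b+1)
        have h2 := lenk_ge a φ thr (b+1)
        omega
      have hperm : perm a φ thr n = mk a φ thr b := by
        rw [perm_block a φ thr hb1 hb2, if_pos (by omega)]
      have hval : -|a (mk a φ thr b)| ≤ a (perm a φ thr n) := by
        rw [hperm]; exact neg_abs_le _
      rw [hblk]
      rw [Wk_succ]
      have habs : 0 ≤ |r| := abs_nonneg r
      have hrle : r ≤ |r| := le_abs_self r
      push_cast
      push_cast at ih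
      linarith
    · -- filler position; block stays
      have hblk : blk a φ thr (n+1) = b := blk_eq a φ thr (le_trans hb1 (Nat.le_succ n)) hgood
      have hperm : perm a φ thr n = φ (Mk a φ thr b + (n - nu a φ thr b)) := by
        rw [perm_block a φ thr hb1 hb2, if_neg (by omega)]
      have hthr : thr b ≤ Mk a φ thr b + (n - nu a φ thr b) :=
        le_trans (le_max_of_le_right (le_max_left _ _)) (Nat.le_add_right _ _)
      have hval : r ≤ a (perm a φ thr n) := by
        rw [hperm]; exact hr b hbK _ hthr
      rw [hblk]
      push_cast
      push_cast at ih
      linarith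

set_option maxHeartbeats 1000000 in
lemma eventually_avg_ge {r ε : ℝ} (hε : 0 < ε) {K : ℕ}
    (hr : ∀ k, K ≤ k → ∀ i, thr k ≤ i → r ≤ a (φ i)) :
    ∀ᶠ n in atTop, r - ε ≤ avgSeq (fun i => a (perm a φ thr i)) n := by
  set C : ℝ := (∑ i ∈ Finset.range (nu a φ thr K), a (perm a φ thr i))
      - (nu a φ thr K : ℝ) * r with hCdef
  set B : ℕ := ⌈(1 + |r|)/(ε/2)⌉₊ + 1 with hBdef
  have hBbig : 1 + |r| ≤ (ε/2) * B := by
    have h1 : (1 + |r|)/(ε/2) ≤ (⌈(1 + |r|)/(ε/2)⌉₊ : ℝ) := Nat.le_ceil _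
    have h2 : ((⌈(1 + |r|)/(ε/2)⌉₊ : ℝ)) ≤ B := by rw [hBdef]; push_cast; linarith
    have h3 : (0:ℝ) < ε/2 := by linarith
    rw [div_le_iff₀ h3] at h1
    nlinarith
  clear_value C
  set N2 : ℕ := ⌈|C|/(ε/2)⌉₊ + 1 with hN2def
  have hN2big : |C| ≤ (ε/2) * N2 := by
    have h1 : |C|/(ε/2) ≤ (⌈|C|/(ε/2)⌉₊ : ℝ) := Nat.le_ceil _
    have h2 : ((⌈|C|/(ε/2)⌉₊ : ℝ)) ≤ N2 := by rw [hN2def]; push_cast; linarith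
    have h3 : (0:ℝ) < ε/2 := by linarith
    rw [div_le_iff₀ h3] at h1
    nlinarith
  clear_value B N2
  filter_upwards [eventually_ge_atTop (max (nu a φ thr (max B (max K 1))) N2)] with n hnge
  have hn1 : nu a φ thr (max B (max K 1)) ≤ n := le_trans (le_max_left _ _) hnge
  have hnN2 : N2 ≤ n := le_trans (le_max_right _ _) hnge
  have hnK : nu a φ thr K ≤ n :=
    le_trans (nu_mono a φ thr (le_trans (le_max_left _ _) (le_max_right _ _))) hn1
  set b := blk a φ thr n with hbdef
  clear_value b
  have hbB : max B (max K 1) ≤ b := by rw [hbdef]; exact le_blk a φ thr hn1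
  have hb1 : 1 ≤ b := le_trans (le_trans (le_max_right _ _) (le_max_right _ _)) hbB
  have hbK : K ≤ b := le_trans (le_trans (le_max_left _ _) (le_max_right _ _)) hbB
  have hbB' : B ≤ b := le_trans (le_max_left _ _) hbB
  have hnb : nu a φ thr b ≤ n := by rw [hbdef]; exact blk_spec1 a φ thr n
  have hkey : (b : ℝ) * (Wk a φ thr b + b) ≤ n :=
    le_trans (nu_key a φ thr b) (by exact_mod_cast hnb)
  have hW0 : 0 ≤ Wk a φ thr b := Wk_nonneg a φ thr b
  have hWK0 : 0 ≤ Wk a φ thr K := Wk_nonneg a φ thr K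
  have habs : (0:ℝ) ≤ |r| := abs_nonneg r
  -- the main sum bound
  have hsum := sum_lower a φ thr hr n hnK
  have hn0 : (0:ℝ) < n := by
    have : 1 ≤ b := hb1
    have : (1:ℕ) ≤ n := by
      have := nu_ge a φ thr (max B (max K 1))
      omega
    exact_mod_cast this
  -- bound the damage terms
  have hdamage : Wk a φ thr b + (b:ℝ) * |r| ≤ (ε/2) * n := by
    have h1 : Wk a φ thr b + (b:ℝ) * |r| ≤ (1 + |r|) * (Wk a φ thr b + b) := by
      have hb1' : (1:ℝ) ≤ b := by exact_mod_cast hb1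
      nlinarith
    have h2 : (1 + |r|) * (Wk a φ thr b + b) ≤ (ε/2) * (b : ℝ) * (Wk a φ thr b + b) := by
      have hbB'' : (B:ℝ) ≤ b := by exact_mod_cast hbB'
      have hpos : (0:ℝ) ≤ Wk a φ thr b + b := by positivity
      have hstep : 1 + |r| ≤ ε/2 * b := by nlinarith
      nlinarith
    have h3 : (ε/2) * (b:ℝ) * (Wk a φ thr b + b) ≤ (ε/2) * n := by
      have : (0:ℝ) < ε/2 := by linarith
      nlinarith
    linarith
  have hC : |C| ≤ (ε/2) * n := by
    have : (N2 : ℝ) ≤ n := by exact_mod_cast hnN2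
    nlinarith [hN2big, (by linarith : (0:ℝ) < ε/2)]
  -- conclude
  show r - ε ≤ avgSeq (fun i => a (perm a φ thr i)) n
  unfold avgSeq
  rw [le_div_iff₀ hn0]
  have hCabs : -|C| ≤ C := neg_abs_le C
  have hblkcast : (0:ℝ) ≤ ((K:ℝ)) * |r| := by positivity
  simp only [← hbdef] at hsum
  have e1 : C + (n:ℝ) * r - (Wk a φ thr b + (b:ℝ) * |r|)
      ≤ ∑ i ∈ Finset.range n, a (perm a φ thr i) := by
    rw [hCdef]
    have hbKr : ((K:ℝ)) ≤ (b:ℝ) := by exact_mod_cast hbK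
    have hWmono : Wk a φ thr K ≤ Wk a φ thr b := Wk_mono a φ thr hbK
    nlinarith [hsum]
  linarith [e1, hdamage, hC, hCabs]

lemma st_neg (k : ℕ) : st (fun i => -(a i)) φ thr k = st a φ thr k := by
  induction k with
  | zero => rfl
  | succ k ih => simp only [st, step, ih, abs_neg]

lemma perm_neg : perm (fun i => -(a i)) φ thr = perm a φ thr := by
  funext n
  unfold perm
  rw [st_neg]

lemma avgSeq_neg (g : ℕ → ℝ) (n : ℕ) : avgSeq (fun i => -(g i)) n = - avgSeq g n := by
  simp [avgSeq, neg_div]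

lemma eventually_avg_le {r ε : ℝ} (hε : 0 < ε) {K : ℕ}
    (hr : ∀ k, K ≤ k → ∀ i, thr k ≤ i → a (φ i) ≤ r) :
    ∀ᶠ n in atTop, avgSeq (fun i => a (perm a φ thr i)) n ≤ r + ε := by
  have h := eventually_avg_ge (fun i => -(a i)) φ thr hε (r := -r) (K := K)
    (fun k hk i hi => neg_le_neg (hr k hk i hi))
  rw [perm_neg] at h
  filter_upwards [h] with n hn
  have h2 := avgSeq_neg (fun i => a (perm a φ thr i)) n
  rw [h2] at hn
  linarith

end StmtTwo
end

/-- If `α ∈ ℝ̄` is an accumulation point of `(a_n)` (some subsequence tends to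
`α` in `ℝ̄`), then `α` is accessible in average by rearrangement of `(a_n)`. -/
theorem stmt2 (a : ℕ → ℝ) (α : EReal)
    (h : ∃ φ : ℕ → ℕ, StrictMono φ ∧
      Tendsto (fun k => ((a (φ k) : ℝ) : EReal)) atTop (𝓝 α)) :
    α ∈ AAR a := by
  obtain ⟨φ, hφ, hten⟩ := h
  induction α using EReal.rec with
  | bot =>
    have hb : Tendsto (fun k => a (φ k)) atTop atBot := by
      rw [tendsto_atBot]
      intro r
      filter_upwards [(EReal.tendsto_nhds_bot_iff_real.mp hten) r] with k hk
      exact le_of_lt (by exact_mod_cast hk)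
    have hthr : ∀ k : ℕ, ∃ N, ∀ i ≥ N, a (φ i) ≤ -(k:ℝ) := fun k =>
      eventually_atTop.mp (tendsto_atBot.mp hb (-(k:ℝ)))
    set thr : ℕ → ℕ := fun k => (hthr k).choose with hthrdef
    refine ⟨StmtTwo.perm a φ thr,
      ⟨StmtTwo.perm_injective a thr hφ, StmtTwo.perm_surjective a thr⟩, ?_⟩
    rw [avgTendsTo, EReal.tendsto_nhds_bot_iff_real]
    intro x
    have hK : (2 - x) ≤ (⌈2 - x⌉₊ : ℝ) := Nat.le_ceil _
    have hle := StmtTwo.eventually_avg_le a φ thr (r := x - 2) (ε := 1) one_pos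
      (K := ⌈2 - x⌉₊) (fun k hk i hi => by
        have h1 := (hthr k).choose_spec i hi
        have h2 : ((⌈2 - x⌉₊ : ℕ) : ℝ) ≤ (k : ℝ) := by exact_mod_cast hk
        linarith)
    filter_upwards [hle] with n hn
    exact_mod_cast lt_of_le_of_lt hn (by linarith)
  | coe A =>
    have ha : Tendsto (fun k => a (φ k)) atTop (𝓝 A) := EReal.tendsto_coe.mp hten
    have hthr : ∀ k : ℕ, ∃ N, ∀ i ≥ N, dist (a (φ i)) A < 1/((k:ℝ)+1) := fun k =>
      Metric.tendsto_atTop.mp ha (1/((k:ℝ)+1)) (by positivity)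
    set thr : ℕ → ℕ := fun k => (hthr k).choose with hthrdef
    refine ⟨StmtTwo.perm a φ thr,
      ⟨StmtTwo.perm_injective a thr hφ, StmtTwo.perm_surjective a thr⟩, ?_⟩
    rw [avgTendsTo, EReal.tendsto_coe]
    rw [Metric.tendsto_atTop]
    intro ε hε
    set K : ℕ := ⌈4/ε⌉₊ with hKdef
    have hKbig : 4/ε ≤ (K : ℝ) := Nat.le_ceil _
    have hεK : ∀ k : ℕ, K ≤ k → 1/((k:ℝ)+1) ≤ ε/4 := by
      intro k hk
      have h1 : (4:ℝ)/ε ≤ (k:ℝ) + 1 := by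
        have : (K:ℝ) ≤ k := by exact_mod_cast hk
        linarith
      rw [div_le_div_iff₀ (by positivity) (by linarith)]
      have h4 : (0:ℝ) < 4/ε := by positivity
      calc (1:ℝ) * 4 = 4 := by ring
        _ = ε * (4/ε) := by field_simp
        _ ≤ ε * ((k:ℝ)+1) := by nlinarith
    have hlow := StmtTwo.eventually_avg_ge a φ thr (r := A - ε/4) (ε := ε/4)
      (by positivity) (K := K) (fun k hk i hi => by
        have h1 := (hthr k).choose_spec i hi
        have h2 := hεK k hk
        rw [Real.dist_eq, abs_lt] at h1
        linarith)
    have hhigh := StmtTwo.eventually_avg_le a φ thr (r := A + ε/4) (ε := ε/4)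
      (by positivity) (K := K) (fun k hk i hi => by
        have h1 := (hthr k).choose_spec i hi
        have h2 := hεK k hk
        rw [Real.dist_eq, abs_lt] at h1
        linarith)
    obtain ⟨N, hN⟩ := eventually_atTop.mp (hlow.and hhigh)
    exact ⟨N, fun n hn => by
      obtain ⟨h1, h2⟩ := hN n hn
      rw [Real.dist_eq, abs_lt]
      constructor <;> linarith⟩
  | top =>
    have hb : Tendsto (fun k => a (φ k)) atTop atTop := by
      rw [tendsto_atTop]
      intro r
      filter_upwards [(EReal.tendsto_nhds_top_iff_real.mp hten) r] with k hk
      exact le_of_lt (by exact_mod_cast hk)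
    have hthr : ∀ k : ℕ, ∃ N, ∀ i ≥ N, (k:ℝ) ≤ a (φ i) := fun k =>
      eventually_atTop.mp (tendsto_atTop.mp hb (k:ℝ))
    set thr : ℕ → ℕ := fun k => (hthr k).choose with hthrdef
    refine ⟨StmtTwo.perm a φ thr,
      ⟨StmtTwo.perm_injective a thr hφ, StmtTwo.perm_surjective a thr⟩, ?_⟩
    rw [avgTendsTo, EReal.tendsto_nhds_top_iff_real]
    intro x
    have hK : (x + 2) ≤ (⌈x + 2⌉₊ : ℝ) := Nat.le_ceil _
    have hge := StmtTwo.eventually_avg_ge a φ thr (r := x + 2) (ε := 1) one_pos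
      (K := ⌈x + 2⌉₊) (fun k hk i hi => by
        have h1 := (hthr k).choose_spec i hi
        have h2 : ((⌈x + 2⌉₊ : ℕ) : ℝ) ≤ (k : ℝ) := by exact_mod_cast hk
        linarith)
    filter_upwards [hge] with n hn
    exact_mod_cast lt_of_lt_of_le (by linarith : x < x + 2 - 1) hn
end

section
/- Let (a_n), (b_n) be real sequences with a_n → a and b_n → b, where a, b ∈ ℝ and a < b, and let α, β > 0 with α + β = 1. Then there exists a merge (d_n) of the two sequences (a_n) and (b_n) such that (d_n) tends to αa + βb in average. -/
open Filter Topology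

/-- `d` is a merge of `a` and `b`: `ℕ` is partitioned into two disjoint infinite
sets (the ranges of the strictly monotone maps `f`, `g`) such that the terms of
`d` along their increasing enumerations are exactly `a` and `b` respectively. -/
def IsMerge (d a b : ℕ → ℝ) : Prop :=
  ∃ f g : ℕ → ℕ, StrictMono f ∧ StrictMono g ∧
    Disjoint (Set.range f) (Set.range g) ∧
    Set.range f ∪ Set.range g = Set.univ ∧
    (∀ n, d (f n) = a n) ∧ (∀ n, d (g n) = b n)

/-- If `a_n → A`, `b_n → B` with `A < B` and `α, β > 0`, `α + β = 1`, then the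
two sequences can be merged into a sequence tending to `αA + βB` in average. -/
theorem stmt3 (a b : ℕ → ℝ) (A B : ℝ) (ha : Tendsto a atTop (𝓝 A))
    (hb : Tendsto b atTop (𝓝 B)) (hAB : A < B)
    (α β : ℝ) (hα : 0 < α) (hβ : 0 < β) (hαβ : α + β = 1) :
    ∃ d : ℕ → ℝ, IsMerge d a b ∧ avgTendsTo d ((α * A + β * B : ℝ) : EReal) := by
  classical
  have hα1 : α < 1 := by linarith
  set p : ℕ → Prop := fun m => ⌊α * ((m : ℝ) + 1)⌋ = ⌊α * (m : ℝ)⌋ + 1 with hp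
  set q : ℕ → Prop := fun m => ¬ p m with hq
  set cp : ℕ → ℕ := fun n => Nat.count p n with hcp
  set cq : ℕ → ℕ := fun n => Nat.count q n with hcq
  set d : ℕ → ℝ := fun m => if p m then a (cp m) else b (cq m) with hd
  -- floor step dichotomy
  have hstep : ∀ m : ℕ, ⌊α * ((m : ℝ) + 1)⌋ = ⌊α * (m : ℝ)⌋ + 1 ∨
      ⌊α * ((m : ℝ) + 1)⌋ = ⌊α * (m : ℝ)⌋ := by
    intro m
    have hm : (0:ℝ) ≤ (m:ℝ) := Nat.cast_nonneg m
    have h1 : ⌊α * (m : ℝ)⌋ ≤ ⌊α * ((m : ℝ) + 1)⌋ :=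
      Int.floor_le_floor (by nlinarith)
    have h2 : ⌊α * ((m : ℝ) + 1)⌋ ≤ ⌊α * (m : ℝ)⌋ + 1 := by
      have h3 : α * ((m : ℝ) + 1) ≤ α * (m : ℝ) + 1 := by nlinarith
      calc ⌊α * ((m : ℝ) + 1)⌋ ≤ ⌊α * (m : ℝ) + 1⌋ := Int.floor_le_floor h3
        _ = ⌊α * (m : ℝ)⌋ + 1 := by
            exact_mod_cast Int.floor_add_intCast (α * (m : ℝ)) 1
    omega
  -- count formula
  have hcount : ∀ n : ℕ, (cp n : ℤ) = ⌊α * (n : ℝ)⌋ := by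
    intro n
    induction n with
    | zero => simp [hcp]
    | succ n ih =>
      have hsucc : cp (n + 1) = cp n + if p n then 1 else 0 := Nat.count_succ p n
      rcases hstep n with h | h
      · have hpn : p n := h
        rw [hsucc, if_pos hpn]
        push_cast
        rw [ih]
        omega
      · have hpn : ¬ p n := by intro hc; have : ⌊α * ((n:ℝ) + 1)⌋ = ⌊α * (n:ℝ)⌋ + 1 := hc; omega
        rw [hsucc, if_neg hpn]
        push_cast
        rw [ih]
        omega
  have hcountR : ∀ n : ℕ, (cp n : ℝ) = (⌊α * (n : ℝ)⌋ : ℤ) := by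
    intro n; exact_mod_cast hcount n
  -- cp n + cq n = n
  have hpq : ∀ n : ℕ, cp n + cq n = n := by
    intro n
    induction n with
    | zero => simp [hcp, hcq]
    | succ n ih =>
      have h1 : cp (n + 1) = cp n + if p n then 1 else 0 := Nat.count_succ p n
      have h2 : cq (n + 1) = cq n + if q n then 1 else 0 := Nat.count_succ q n
      by_cases h : p n
      · have hqn : ¬ q n := not_not_intro h
        rw [h1, h2, if_pos h, if_neg hqn]; omega
      · have hqn : q n := h
        rw [h1, h2, if_neg h, if_pos hqn]; omega
  -- sum splitting
  have hsum : ∀ n : ℕ, ∑ i ∈ Finset.range n, d i =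
      (∑ j ∈ Finset.range (cp n), a j) + (∑ j ∈ Finset.range (cq n), b j) := by
    intro n
    induction n with
    | zero => simp [hcp, hcq]
    | succ n ih =>
      have h1 : cp (n + 1) = cp n + if p n then 1 else 0 := Nat.count_succ p n
      have h2 : cq (n + 1) = cq n + if q n then 1 else 0 := Nat.count_succ q n
      rw [Finset.sum_range_succ, ih]
      by_cases h : p n
      · have hqn : ¬ q n := not_not_intro h
        rw [h1, h2, if_pos h, if_neg hqn]
        have hdn : d n = a (cp n) := by rw [hd]; simp only; rw [if_pos h]
        rw [hdn, Finset.sum_range_succ]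
        ring_nf
      · have hqn : q n := h
        rw [h1, h2, if_neg h, if_pos hqn]
        have hdn : d n = b (cq n) := by rw [hd]; simp only; rw [if_neg h]
        rw [hdn, Finset.sum_range_succ]
        ring_nf
  -- ratio limits
  have hlow : Tendsto (fun n : ℕ => α - 1 / (n : ℝ)) atTop (𝓝 α) := by
    have h0 : Tendsto (fun n : ℕ => 1 / (n : ℝ)) atTop (𝓝 0) :=
      tendsto_one_div_atTop_nhds_zero_nat
    simpa using tendsto_const_nhds.sub h0
  have hcpR : Tendsto (fun n : ℕ => (cp n : ℝ) / n) atTop (𝓝 α) := by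
    apply tendsto_of_tendsto_of_tendsto_of_le_of_le' hlow tendsto_const_nhds
    · filter_upwards [eventually_ge_atTop 1] with n hn
      have hnpos : (0:ℝ) < n := by exact_mod_cast hn
      rw [hcountR n, le_div_iff₀ hnpos]
      have h := (Int.sub_one_lt_floor (α * (n : ℝ))).le
      calc (α - 1 / (n : ℝ)) * n = α * n - 1 := by field_simp
        _ ≤ _ := h
    · filter_upwards [eventually_ge_atTop 1] with n hn
      have hnpos : (0:ℝ) < n := by exact_mod_cast hn
      rw [hcountR n, div_le_iff₀ hnpos]
      exact Int.floor_le _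
  have hβeq : β = 1 - α := by linarith
  have hcqR : Tendsto (fun n : ℕ => (cq n : ℝ) / n) atTop (𝓝 β) := by
    rw [hβeq]
    apply (tendsto_const_nhds.sub hcpR).congr'
    filter_upwards [eventually_ge_atTop 1] with n hn
    have hnpos : (0:ℝ) < n := by exact_mod_cast hn
    have h := hpq n
    have hcqn : (cq n : ℝ) = (n : ℝ) - cp n := by
      have : (cp n : ℝ) + cq n = n := by exact_mod_cast congrArg (Nat.cast : ℕ → ℝ) h
      linarith
    rw [hcqn, sub_div, div_self hnpos.ne']
  -- counts tend to infinity
  have hcpTop : Tendsto cp atTop atTop := by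
    rw [← tendsto_natCast_atTop_iff (R := ℝ)]
    refine tendsto_atTop_mono' atTop (f₁ := fun n : ℕ => α * n - 1) ?_ ?_
    · filter_upwards with n
      rw [hcountR n]
      exact (Int.sub_one_lt_floor (α * (n : ℝ))).le
    · exact tendsto_atTop_add_const_right atTop (-1)
        (Tendsto.const_mul_atTop hα tendsto_natCast_atTop_atTop)
  have hcqTop : Tendsto cq atTop atTop := by
    rw [← tendsto_natCast_atTop_iff (R := ℝ)]
    refine tendsto_atTop_mono' atTop (f₁ := fun n : ℕ => β * n) ?_ ?_
    · filter_upwards with n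
      have h := hpq n
      have hcqn : (cq n : ℝ) = (n : ℝ) - cp n := by
        have : (cp n : ℝ) + cq n = n := by exact_mod_cast congrArg (Nat.cast : ℕ → ℝ) h
        linarith
      rw [hcqn, hcountR n, hβeq]
      have := Int.floor_le (α * (n : ℝ))
      nlinarith
    · exact Tendsto.const_mul_atTop hβ tendsto_natCast_atTop_atTop
  -- infinitude
  have hPinf : (setOf p).Infinite := by
    by_contra hfin
    rw [Set.not_infinite] at hfin
    obtain ⟨n, hn⟩ := (hcpTop.eventually (eventually_gt_atTop hfin.toFinset.card)).exists
    simp only [hcp] at hn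
    exact absurd (Nat.count_le_card hfin n) (by rw [not_le]; convert hn using 2; ext x; exact hfin.mem_toFinset.trans (Set.Finite.mem_toFinset _).symm)
  have hQinf : (setOf q).Infinite := by
    by_contra hfin
    rw [Set.not_infinite] at hfin
    obtain ⟨n, hn⟩ := (hcqTop.eventually (eventually_gt_atTop hfin.toFinset.card)).exists
    simp only [hcq] at hn
    exact absurd (Nat.count_le_card hfin n) (by rw [not_le]; convert hn using 2; ext x; exact hfin.mem_toFinset.trans (Set.Finite.mem_toFinset _).symm)
  -- Cesàro limits
  have hA : Tendsto (fun n => avgSeq a n) atTop (𝓝 A) := by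
    have h := ha.cesaro
    simpa only [avgSeq, div_eq_inv_mul] using h
  have hB : Tendsto (fun n => avgSeq b n) atTop (𝓝 B) := by
    have h := hb.cesaro
    simpa only [avgSeq, div_eq_inv_mul] using h
  -- main convergence
  have hmain : Tendsto (fun n => avgSeq d n) atTop (𝓝 (α * A + β * B)) := by
    have h1 : Tendsto (fun n : ℕ => (cp n : ℝ) / n * avgSeq a (cp n)
        + (cq n : ℝ) / n * avgSeq b (cq n)) atTop (𝓝 (α * A + β * B)) :=
      (hcpR.mul ((hA.comp hcpTop))).add (hcqR.mul ((hB.comp hcqTop)))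
    apply h1.congr'
    filter_upwards [eventually_ge_atTop 1, hcpTop.eventually (eventually_ge_atTop 1),
      hcqTop.eventually (eventually_ge_atTop 1)] with n hn hcpn hcqn
    have hnpos : (0:ℝ) < n := by exact_mod_cast hn
    have hcpp : (0:ℝ) < cp n := by exact_mod_cast hcpn
    have hcqq : (0:ℝ) < cq n := by exact_mod_cast hcqn
    simp only [Function.comp, avgSeq]
    rw [hsum n]
    field_simp
  -- assemble the merge
  refine ⟨d, ⟨Nat.nth p, Nat.nth q, Nat.nth_strictMono hPinf, Nat.nth_strictMono hQinf,
      ?_, ?_, ?_, ?_⟩, ?_⟩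
  · rw [Nat.range_nth_of_infinite hPinf, Nat.range_nth_of_infinite hQinf]
    rw [Set.disjoint_right]
    intro m hm
    exact hm
  · rw [Nat.range_nth_of_infinite hPinf, Nat.range_nth_of_infinite hQinf]
    ext m
    simp only [Set.mem_union, Set.mem_setOf_eq, Set.mem_univ, iff_true]
    exact or_not
  · intro n
    have h1 : p (Nat.nth p n) := Nat.nth_mem_of_infinite hPinf n
    have h2 : cp (Nat.nth p n) = n := Nat.count_nth_of_infinite hPinf n
    rw [hd]
    simp only
    rw [if_pos h1, h2]
  · intro n
    have h1 : q (Nat.nth q n) := Nat.nth_mem_of_infinite hQinf n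
    have h2 : cq (Nat.nth q n) = n := Nat.count_nth_of_infinite hQinf n
    have h1' : ¬ p (Nat.nth q n) := h1
    rw [hd]
    simp only
    rw [if_neg h1', h2]
  · exact EReal.tendsto_coe.2 hmain
end

section
/- Let (a_n) be a bounded real sequence. Then AAR_{(a_n)} equals the closed interval [liminf_{n→∞} a_n, limsup_{n→∞} a_n]. -/
open Filter Topology

noncomputable def pickAux (a : ℕ → ℝ) (α : ℝ) (n : ℕ) (used : Finset ℕ) (D : ℝ) : ℕ :=
  if IsSquare n then sInf {k | k ∉ used}
  else if D ≤ 0 then sInf {k | k ∉ used ∧ α - 1/(n+1) < a k}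
  else sInf {k | k ∉ used ∧ a k < α + 1/(n+1)}

noncomputable def buildState (a : ℕ → ℝ) (α : ℝ) : ℕ → Finset ℕ × ℝ
  | 0 => (∅, 0)
  | n+1 =>
    let s := buildState a α n
    let k := pickAux a α n s.1 s.2
    (insert k s.1, s.2 + (a k - α))

noncomputable def buildP (a : ℕ → ℝ) (α : ℝ) (n : ℕ) : ℕ :=
  pickAux a α n (buildState a α n).1 (buildState a α n).2

section build

variable (a : ℕ → ℝ) (α : ℝ)

lemma buildState_succ (n : ℕ) :
    buildState a α (n+1) =
      (insert (buildP a α n) (buildState a α n).1,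
        (buildState a α n).2 + (a (buildP a α n) - α)) := rfl

lemma buildState_fst (n : ℕ) :
    (buildState a α n).1 = Finset.image (buildP a α) (Finset.range n) := by
  induction n with
  | zero => rfl
  | succ n ih => rw [buildState_succ, Finset.range_add_one, Finset.image_insert, ih]

lemma buildState_snd (n : ℕ) :
    (buildState a α n).2 = ∑ i ∈ Finset.range n, (a (buildP a α i) - α) := by
  induction n with
  | zero => rfl
  | succ n ih => rw [buildState_succ, Finset.sum_range_succ, ih]

variable {a α}
variable (hU : ∀ ε : ℝ, 0 < ε → {k | α - ε < a k}.Infinite)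
    (hL : ∀ ε : ℝ, 0 < ε → {k | a k < α + ε}.Infinite)

include hU hL in
lemma buildP_spec (n : ℕ) :
    buildP a α n ∉ (buildState a α n).1 ∧
      (¬ IsSquare n →
        ((buildState a α n).2 ≤ 0 → α - 1/(n+1) < a (buildP a α n)) ∧
        (¬ (buildState a α n).2 ≤ 0 → a (buildP a α n) < α + 1/(n+1))) := by
  have hε : (0:ℝ) < 1/(n+1) := by positivity
  set used := (buildState a α n).1 with hu
  set D := (buildState a α n).2 with hD
  unfold buildP pickAux
  rw [← hu, ← hD]
  split_ifs with h1 h2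
  · refine ⟨?_, by tauto⟩
    have hne : {k | k ∉ used}.Nonempty := by
      have := (Set.Finite.infinite_compl (used.finite_toSet)).nonempty
      exact this
    exact Nat.sInf_mem hne
  · have hne : {k | k ∉ used ∧ α - 1/(n+1) < a k}.Nonempty := by
      obtain ⟨k, hk1, hk2⟩ := ((hU _ hε).diff (used.finite_toSet)).nonempty
      exact ⟨k, hk2, hk1⟩
    have hmem := Nat.sInf_mem hne
    exact ⟨hmem.1, fun _ => ⟨fun _ => hmem.2, fun h => absurd h2 h⟩⟩
  · have hne : {k | k ∉ used ∧ a k < α + 1/(n+1)}.Nonempty := by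
      obtain ⟨k, hk1, hk2⟩ := ((hL _ hε).diff (used.finite_toSet)).nonempty
      exact ⟨k, hk2, hk1⟩
    have hmem := Nat.sInf_mem hne
    exact ⟨hmem.1, fun _ => ⟨fun h => absurd h h2, fun _ => hmem.2⟩⟩

include hU hL in
lemma buildP_injective : Function.Injective (buildP a α) := by
  intro i j hij
  by_contra hne
  wlog h : i < j generalizing i j
  · exact this hij.symm (Ne.symm hne) (by omega)
  have h1 : buildP a α i ∈ (buildState a α j).1 := by
    rw [buildState_fst]
    exact Finset.mem_image_of_mem _ (Finset.mem_range.2 h)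
  rw [hij] at h1
  exact (buildP_spec hU hL j).1 h1

omit hU hL in
lemma buildP_surjective : Function.Surjective (buildP a α) := by
  have hmono : ∀ {i j' : ℕ}, i ≤ j' →
      (buildState a α i).1 ⊆ (buildState a α j').1 := by
    intro i j' hij
    rw [buildState_fst, buildState_fst]
    exact Finset.image_subset_image (Finset.range_subset_range.2 hij)
  have key : ∀ j : ℕ, ∀ m < j, m ∈ (buildState a α (j*j+1)).1 := by
    intro j
    induction j with
    | zero => omega
    | succ j ih =>
      intro m hm
      have hle : j*j+1 ≤ (j+1)*(j+1) := by nlinarith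
      rcases Nat.lt_or_ge m j with hmj | hmj
      · exact hmono (by nlinarith) (ih m hmj)
      · have hmj' : m = j := by omega
        rw [hmj']
        by_cases hjin : j ∈ (buildState a α ((j+1)*(j+1))).1
        · exact hmono (Nat.le_succ _) hjin
        · have hsq : IsSquare ((j+1)*(j+1)) := ⟨j+1, rfl⟩
          have hval : buildP a α ((j+1)*(j+1)) =
              sInf {k | k ∉ (buildState a α ((j+1)*(j+1))).1} := by
            unfold buildP pickAux
            rw [if_pos hsq]
          have hj_mem : j ∈ {k | k ∉ (buildState a α ((j+1)*(j+1))).1} := hjin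
          have hlb : ∀ k ∈ {k | k ∉ (buildState a α ((j+1)*(j+1))).1}, j ≤ k := by
            intro k hk
            by_contra hkj
            push_neg at hkj
            exact hk (hmono hle (ih k hkj))
          have hmem := Nat.sInf_mem ⟨j, hj_mem⟩
          have h1 := Nat.sInf_le hj_mem
          have h2 := hlb _ hmem
          have heq : buildP a α ((j+1)*(j+1)) = j := by omega
          have : j ∈ (buildState a α ((j+1)*(j+1)+1)).1 := by
            rw [buildState_succ, heq]
            exact Finset.mem_insert_self _ _
          exact this
  intro m
  have := key (m+1) m (Nat.lt_succ_self m)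
  rw [buildState_fst] at this
  obtain ⟨n, _, hn⟩ := Finset.mem_image.1 this
  exact ⟨n, hn⟩

variable {M : ℝ} (hM : ∀ n, |a n| ≤ M)

include hU hL hM in
lemma D_bound (n : ℕ) :
    |(buildState a α n).2| ≤
      (M + |α|) * ((((Finset.range n).filter (fun i => IsSquare i)).card : ℝ) + 1)
        + ∑ i ∈ Finset.range n, 1/((i:ℝ)+1) := by
  have hC : (0:ℝ) ≤ M + |α| := by
    have := abs_nonneg (a 0); have := hM 0; have := abs_nonneg α; linarith
  induction n with
  | zero =>
    rw [show (buildState a α 0).2 = 0 from rfl]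
    simpa using hC
  | succ n ih =>
    have hE : (0:ℝ) ≤ ∑ i ∈ Finset.range n, 1/((i:ℝ)+1) :=
      Finset.sum_nonneg (fun i _ => by positivity)
    have hF : (0:ℝ) ≤ (((Finset.range n).filter (fun i => IsSquare i)).card : ℝ) :=
      Nat.cast_nonneg _
    have hEsucc : ∑ i ∈ Finset.range (n+1), 1/((i:ℝ)+1)
        = (∑ i ∈ Finset.range n, 1/((i:ℝ)+1)) + 1/((n:ℝ)+1) := Finset.sum_range_succ _ _
    have hak : |a (buildP a α n) - α| ≤ M + |α| := by
      have h1 := hM (buildP a α n)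
      have h2 := abs_sub_abs_le_abs_sub (a (buildP a α n)) α
      have := abs_sub (a (buildP a α n)) α
      calc |a (buildP a α n) - α| ≤ |a (buildP a α n)| + |α| := abs_sub _ _
        _ ≤ M + |α| := by linarith
    have hDsucc : (buildState a α (n+1)).2
        = (buildState a α n).2 + (a (buildP a α n) - α) := by
      rw [buildState_succ]
    have hspec := buildP_spec hU hL n
    have hpos : (0:ℝ) < 1/((n:ℝ)+1) := by positivity
    have ihl := abs_le.1 ih
    by_cases hsq : IsSquare n
    · have hFsucc : (((Finset.range (n+1)).filter (fun i => IsSquare i)).card : ℝ)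
          = (((Finset.range n).filter (fun i => IsSquare i)).card : ℝ) + 1 := by
        rw [Finset.range_add_one, Finset.filter_insert, if_pos hsq,
          Finset.card_insert_of_notMem (by simp)]
        push_cast; ring
      rw [hDsucc, hFsucc, hEsucc, abs_le]
      obtain ⟨hak1, hak2⟩ := abs_le.1 hak
      obtain ⟨ih1, ih2⟩ := ihl
      constructor <;> nlinarith
    · have hFsucc : (((Finset.range (n+1)).filter (fun i => IsSquare i)).card : ℝ)
          = (((Finset.range n).filter (fun i => IsSquare i)).card : ℝ) := by
        rw [Finset.range_add_one, Finset.filter_insert, if_neg hsq]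
      rw [hDsucc, hFsucc, hEsucc]
      obtain ⟨hlow, hhigh⟩ := hspec.2 hsq
      rw [abs_le]
      obtain ⟨hak1, hak2⟩ := abs_le.1 hak
      obtain ⟨ih1, ih2⟩ := ihl
      by_cases hD : (buildState a α n).2 ≤ 0
      · have h1 := hlow hD
        constructor <;> nlinarith
      · have h1 := hhigh hD
        push_neg at hD
        constructor <;> nlinarith

include hU hL hM in
lemma buildP_tendsto :
    Tendsto (fun n => avgSeq (fun i => a (buildP a α i)) n) atTop (𝓝 α) := by
  have hC : (0:ℝ) ≤ M + |α| := by
    have := abs_nonneg (a 0); have := hM 0; have := abs_nonneg α; linarith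
  set C := M + |α| with hCdef
  set b := fun i => a (buildP a α i) with hbdef
  set E : ℕ → ℝ := fun n => ∑ i ∈ Finset.range n, 1/((i:ℝ)+1) with hEdef
  set F : ℕ → ℕ := fun n => ((Finset.range n).filter (fun i => IsSquare i)).card with hFdef
  have hFle : ∀ n : ℕ, F n ≤ Nat.sqrt n + 1 := by
    intro n
    have : F n ≤ (Finset.range (Nat.sqrt n + 1)).card := by
      apply Finset.card_le_card_of_injOn (fun i => Nat.sqrt i)
      · intro i hi
        simp only [Finset.mem_coe, Finset.mem_filter, Finset.mem_range] at hi
        simp only [Finset.mem_coe, Finset.mem_range]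
        have := Nat.sqrt_le_sqrt hi.1.le
        omega
      · intro i hi j hj hij
        simp only [Finset.mem_coe, Finset.mem_filter] at hi hj
        obtain ⟨ri, hri⟩ := hi.2
        obtain ⟨rj, hrj⟩ := hj.2
        simp only at hij
        rw [hri, hrj, Nat.sqrt_eq, Nat.sqrt_eq] at hij
        rw [hri, hrj, hij]
    simpa using this
  have hkey : ∀ n : ℕ, 1 ≤ n →
      |avgSeq b n - α| ≤ C*(1/((Nat.sqrt n : ℝ))) + 2*C*(1/(n:ℝ)) + (E n)/n := by
    intro n hn
    have hn0 : (0:ℝ) < n := by exact_mod_cast hn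
    have hs1 : 1 ≤ Nat.sqrt n := by
      have := Nat.sqrt_pos.2 (by omega : 0 < n); omega
    have hs0 : (0:ℝ) < (Nat.sqrt n : ℝ) := by exact_mod_cast hs1
    have hss : (Nat.sqrt n : ℝ) * (Nat.sqrt n : ℝ) ≤ (n:ℝ) := by
      have h := Nat.sqrt_le' n
      have h2 : ((Nat.sqrt n ^ 2 : ℕ) : ℝ) ≤ (n : ℝ) := by exact_mod_cast h
      push_cast at h2
      nlinarith
    have hD := D_bound hU hL hM n
    have hsum : (buildState a α n).2 = (∑ i ∈ Finset.range n, b i) - n*α := by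
      rw [buildState_snd, Finset.sum_sub_distrib, Finset.sum_const, Finset.card_range,
        nsmul_eq_mul]
    have havg : avgSeq b n - α = (buildState a α n).2 / n := by
      rw [hsum, avgSeq]
      field_simp
    rw [havg, abs_div, abs_of_pos hn0, div_le_iff₀ hn0]
    have hexp : (C*(1/((Nat.sqrt n : ℝ))) + 2*C*(1/(n:ℝ)) + (E n)/n) * n
        = C*((n:ℝ)/(Nat.sqrt n : ℝ)) + 2*C + E n := by
      field_simp
    rw [hexp]
    have h1 : C*((F n : ℝ)+1) ≤ C*((Nat.sqrt n : ℝ)+2) := by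
      apply mul_le_mul_of_nonneg_left _ hC
      have := hFle n
      have : (F n : ℝ) ≤ (Nat.sqrt n : ℝ) + 1 := by exact_mod_cast this
      linarith
    have h2 : C*(Nat.sqrt n : ℝ) ≤ C*((n:ℝ)/(Nat.sqrt n : ℝ)) :=
      mul_le_mul_of_nonneg_left ((le_div_iff₀ hs0).2 hss) hC
    nlinarith
  have hsqrt : Tendsto Nat.sqrt atTop atTop := by
    apply tendsto_atTop_atTop.2
    intro k
    refine ⟨k*k, fun n hn => ?_⟩
    have := Nat.sqrt_le_sqrt hn
    rwa [Nat.sqrt_eq] at this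
  have hs : Tendsto (fun n : ℕ => ((Nat.sqrt n : ℝ))) atTop atTop :=
    tendsto_natCast_atTop_atTop.comp hsqrt
  have t1 : Tendsto (fun n : ℕ => C*(1/((Nat.sqrt n : ℝ)))) atTop (𝓝 0) := by
    have := hs.inv_tendsto_atTop
    have h := this.const_mul C
    simpa [one_div, mul_zero] using h
  have t2 : Tendsto (fun n : ℕ => 2*C*(1/(n:ℝ))) atTop (𝓝 0) := by
    have h := tendsto_one_div_atTop_nhds_zero_nat.const_mul (2*C)
    simpa using h
  have t3 : Tendsto (fun n : ℕ => (E n)/n) atTop (𝓝 0) := by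
    have h0 : Tendsto (fun i : ℕ => 1/((i:ℝ)+1)) atTop (𝓝 0) := by
      have := tendsto_one_div_add_atTop_nhds_zero_nat (𝕜 := ℝ)
      simpa using this
    have := h0.cesaro
    apply this.congr
    intro n
    simp [hEdef, smul_eq_mul, div_eq_inv_mul]
  have hg : Tendsto (fun n : ℕ => C*(1/((Nat.sqrt n : ℝ))) + 2*C*(1/(n:ℝ)) + (E n)/n)
      atTop (𝓝 0) := by
    have := (t1.add t2).add t3
    simpa using this
  have habs : Tendsto (fun n => |avgSeq b n - α|) atTop (𝓝 0) :=
    squeeze_zero' (Eventually.of_forall fun n => abs_nonneg _) (eventually_atTop.2 ⟨1, hkey⟩) hg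
  have hsub : Tendsto (fun n => avgSeq b n - α) atTop (𝓝 0) :=
    (tendsto_zero_iff_abs_tendsto_zero _).2 habs
  have := hsub.add_const α
  simpa using this

end build

section cesaro

lemma avg_le_limsup {b : ℕ → ℝ} {M x : ℝ} (hM : ∀ n, |b n| ≤ M)
    (hx : Tendsto (avgSeq b) atTop (𝓝 x)) : x ≤ limsup b atTop := by
  have hbdd : IsBoundedUnder (· ≤ ·) atTop b :=
    isBoundedUnder_of ⟨M, fun n => (abs_le.1 (hM n)).2⟩
  set U := limsup b atTop with hUdef
  by_contra hcon
  push_neg at hcon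
  set ε := (x - U)/2 with hεdef
  have hε : 0 < ε := by simp [hεdef]; linarith
  have hev : ∀ᶠ n in atTop, b n < U + ε :=
    eventually_lt_of_limsup_lt (by linarith) hbdd
  obtain ⟨N, hN⟩ := eventually_atTop.1 hev
  set K := ∑ i ∈ Finset.range N, (b i - (U+ε)) with hKdef
  have hbound : ∀ n, N+1 ≤ n → avgSeq b n ≤ K/n + (U+ε) := by
    intro n hn1
    have hn : N ≤ n := by omega
    have hn0' : (0:ℝ) < n := by
      have : 0 < n := by omega
      exact_mod_cast this
    have hsplit : ∑ i ∈ Finset.range n, (b i - (U+ε))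
        = K + ∑ i ∈ Finset.Ico N n, (b i - (U+ε)) := by
      rw [hKdef, Finset.range_eq_Ico,
        ← Finset.sum_Ico_consecutive _ (Nat.zero_le N) hn, ← Finset.range_eq_Ico]
    have hneg : ∑ i ∈ Finset.Ico N n, (b i - (U+ε)) ≤ 0 := by
      apply Finset.sum_nonpos
      intro i hi
      have := hN i (Finset.mem_Ico.1 hi).1
      linarith
    have hsum : ∑ i ∈ Finset.range n, b i ≤ K + n*(U+ε) := by
      have h1 : ∑ i ∈ Finset.range n, (b i - (U+ε))
          = (∑ i ∈ Finset.range n, b i) - n*(U+ε) := by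
        rw [Finset.sum_sub_distrib, Finset.sum_const, Finset.card_range, nsmul_eq_mul]
      rw [h1] at hsplit
      linarith
    rw [avgSeq, div_le_iff₀ hn0']
    have : (K/n + (U+ε)) * n = K + n*(U+ε) := by field_simp
    rw [this]
    exact hsum
  have htend : Tendsto (fun n : ℕ => K/n + (U+ε)) atTop (𝓝 (0 + (U+ε))) := by
    apply Tendsto.add_const
    have h := tendsto_one_div_atTop_nhds_zero_nat.const_mul K
    simpa [div_eq_mul_inv, mul_comm] using h
  have hle : x ≤ 0 + (U+ε) :=
    le_of_tendsto_of_tendsto hx htend (eventually_atTop.2 ⟨N+1, hbound⟩)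
  rw [zero_add] at hle
  simp only [hεdef] at hle
  linarith

lemma liminf_le_avg {b : ℕ → ℝ} {M x : ℝ} (hM : ∀ n, |b n| ≤ M)
    (hx : Tendsto (avgSeq b) atTop (𝓝 x)) : liminf b atTop ≤ x := by
  have hbdd : IsBoundedUnder (· ≥ ·) atTop b :=
    isBoundedUnder_of ⟨-M, fun n => (abs_le.1 (hM n)).1⟩
  set L := liminf b atTop with hLdef
  by_contra hcon
  push_neg at hcon
  set ε := (L - x)/2 with hεdef
  have hε : 0 < ε := by simp [hεdef]; linarith
  have hev : ∀ᶠ n in atTop, L - ε < b n :=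
    eventually_lt_of_lt_liminf (by linarith) hbdd
  obtain ⟨N, hN⟩ := eventually_atTop.1 hev
  set K := ∑ i ∈ Finset.range N, (b i - (L-ε)) with hKdef
  have hbound : ∀ n, N+1 ≤ n → K/n + (L-ε) ≤ avgSeq b n := by
    intro n hn1
    have hn : N ≤ n := by omega
    have hn0' : (0:ℝ) < n := by
      have : 0 < n := by omega
      exact_mod_cast this
    have hsplit : ∑ i ∈ Finset.range n, (b i - (L-ε))
        = K + ∑ i ∈ Finset.Ico N n, (b i - (L-ε)) := by
      rw [hKdef, Finset.range_eq_Ico,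
        ← Finset.sum_Ico_consecutive _ (Nat.zero_le N) hn, ← Finset.range_eq_Ico]
    have hneg : 0 ≤ ∑ i ∈ Finset.Ico N n, (b i - (L-ε)) := by
      apply Finset.sum_nonneg
      intro i hi
      have := hN i (Finset.mem_Ico.1 hi).1
      linarith
    have hsum : K + n*(L-ε) ≤ ∑ i ∈ Finset.range n, b i := by
      have h1 : ∑ i ∈ Finset.range n, (b i - (L-ε))
          = (∑ i ∈ Finset.range n, b i) - n*(L-ε) := by
        rw [Finset.sum_sub_distrib, Finset.sum_const, Finset.card_range, nsmul_eq_mul]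
      rw [h1] at hsplit
      linarith
    rw [avgSeq, le_div_iff₀ hn0']
    have : (K/n + (L-ε)) * n = K + n*(L-ε) := by field_simp
    rw [this]
    exact hsum
  have htend : Tendsto (fun n : ℕ => K/n + (L-ε)) atTop (𝓝 (0 + (L-ε))) := by
    apply Tendsto.add_const
    have h := tendsto_one_div_atTop_nhds_zero_nat.const_mul K
    simpa [div_eq_mul_inv, mul_comm] using h
  have hle : 0 + (L-ε) ≤ x :=
    le_of_tendsto_of_tendsto htend hx (eventually_atTop.2 ⟨N+1, hbound⟩)
  rw [zero_add] at hle
  simp only [hεdef] at hle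
  linarith

lemma map_perm_atTop {p : ℕ → ℕ} (hp : Function.Bijective p) :
    Filter.map p atTop = atTop := by
  rw [← Nat.cofinite_eq_atTop]
  exact le_antisymm hp.injective.tendsto_cofinite hp.surjective.le_map_cofinite

lemma limsup_perm (u : ℕ → ℝ) {p : ℕ → ℕ} (hp : Function.Bijective p) :
    limsup (fun n => u (p n)) atTop = limsup u atTop := by
  rw [show (fun n => u (p n)) = u ∘ p from rfl, limsup_comp, map_perm_atTop hp]

lemma liminf_perm (u : ℕ → ℝ) {p : ℕ → ℕ} (hp : Function.Bijective p) :
    liminf (fun n => u (p n)) atTop = liminf u atTop := by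
  rw [show (fun n => u (p n)) = u ∘ p from rfl, liminf_comp, map_perm_atTop hp]

end cesaro

section glue

lemma limsup_coe_ereal {u : ℕ → ℝ} {M : ℝ} (hM : ∀ n, |u n| ≤ M) :
    limsup (fun n => ((u n : ℝ) : EReal)) atTop = ((limsup u atTop : ℝ) : EReal) := by
  have h1 : IsBoundedUnder (· ≤ ·) atTop u :=
    isBoundedUnder_of ⟨M, fun n => (abs_le.1 (hM n)).2⟩
  have h2 : IsCoboundedUnder (· ≤ ·) atTop u :=
    (isBoundedUnder_of ⟨-M, fun n => (abs_le.1 (hM n)).1⟩ :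
      IsBoundedUnder (· ≥ ·) atTop u).isCoboundedUnder_le
  have := Monotone.map_limsup_of_continuousAt (F := atTop)
    EReal.coe_strictMono.monotone u (continuous_coe_real_ereal.continuousAt) h1 h2
  rw [show (fun n => ((u n : ℝ) : EReal)) = Real.toEReal ∘ u from rfl, ← this]

lemma liminf_coe_ereal {u : ℕ → ℝ} {M : ℝ} (hM : ∀ n, |u n| ≤ M) :
    liminf (fun n => ((u n : ℝ) : EReal)) atTop = ((liminf u atTop : ℝ) : EReal) := by
  have h1 : IsBoundedUnder (· ≥ ·) atTop u :=
    isBoundedUnder_of ⟨-M, fun n => (abs_le.1 (hM n)).1⟩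
  have h2 : IsCoboundedUnder (· ≥ ·) atTop u :=
    (isBoundedUnder_of ⟨M, fun n => (abs_le.1 (hM n)).2⟩ :
      IsBoundedUnder (· ≤ ·) atTop u).isCoboundedUnder_ge
  have := Monotone.map_liminf_of_continuousAt (F := atTop)
    EReal.coe_strictMono.monotone u (continuous_coe_real_ereal.continuousAt) h2 h1
  rw [show (fun n => ((u n : ℝ) : EReal)) = Real.toEReal ∘ u from rfl, ← this]

lemma avg_abs_le {b : ℕ → ℝ} {M : ℝ} (hM : ∀ n, |b n| ≤ M) (n : ℕ) :
    |avgSeq b n| ≤ M := by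
  have hM0 : 0 ≤ M := le_trans (abs_nonneg _) (hM 0)
  rcases Nat.eq_zero_or_pos n with rfl | hn
  · simpa [avgSeq] using hM0
  have hn0 : (0:ℝ) < n := by exact_mod_cast hn
  rw [avgSeq, abs_div, abs_of_pos hn0, div_le_iff₀ hn0]
  calc |∑ i ∈ Finset.range n, b i| ≤ ∑ i ∈ Finset.range n, |b i| :=
        Finset.abs_sum_le_sum_abs _ _
    _ ≤ ∑ _i ∈ Finset.range n, M := Finset.sum_le_sum (fun i _ => hM i)
    _ = M * n := by rw [Finset.sum_const, Finset.card_range, nsmul_eq_mul]; ring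

end glue

/-- For a bounded real sequence, the set of points accessible in average by
rearrangement is exactly the interval `[liminf aₙ, limsup aₙ]` in `ℝ̄`. -/
theorem stmt4 (a : ℕ → ℝ) (hbd : ∃ M : ℝ, ∀ n, |a n| ≤ M) :
    AAR a = Set.Icc (liminf (fun n => ((a n : ℝ) : EReal)) atTop)
      (limsup (fun n => ((a n : ℝ) : EReal)) atTop) := by
  obtain ⟨M, hM⟩ := hbd
  have hM0 : (0:ℝ) ≤ M := le_trans (abs_nonneg _) (hM 0)
  rw [limsup_coe_ereal hM, liminf_coe_ereal hM]
  set L := liminf a atTop with hLdef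
  set U := limsup a atTop with hUdef
  have hbddA : IsBoundedUnder (· ≤ ·) atTop a :=
    isBoundedUnder_of ⟨M, fun n => (abs_le.1 (hM n)).2⟩
  have hbddB : IsBoundedUnder (· ≥ ·) atTop a :=
    isBoundedUnder_of ⟨-M, fun n => (abs_le.1 (hM n)).1⟩
  ext α
  simp only [AAR, Set.mem_setOf_eq, Set.mem_Icc]
  constructor
  · rintro ⟨p, hp, hten⟩
    have hMb : ∀ n, |a (p n)| ≤ M := fun n => hM _
    have havgb := avg_abs_le hMb
    unfold avgTendsTo at hten
    induction α with
    | bot =>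
      exfalso
      rw [EReal.tendsto_nhds_bot_iff_real] at hten
      obtain ⟨N, hN⟩ := eventually_atTop.1 (hten (-M - 1))
      have h1 := hN N (le_refl N)
      have h2 : avgSeq (fun n => a (p n)) N < -M - 1 := by exact_mod_cast h1
      have := (abs_le.1 (havgb N)).1
      linarith
    | coe x =>
      rw [EReal.tendsto_coe] at hten
      have hle1 : liminf (fun n => a (p n)) atTop ≤ x := liminf_le_avg hMb hten
      have hle2 : x ≤ limsup (fun n => a (p n)) atTop := avg_le_limsup hMb hten
      rw [liminf_perm a hp] at hle1
      rw [limsup_perm a hp] at hle2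
      exact ⟨EReal.coe_le_coe_iff.2 hle1, EReal.coe_le_coe_iff.2 hle2⟩
    | top =>
      exfalso
      rw [EReal.tendsto_nhds_top_iff_real] at hten
      obtain ⟨N, hN⟩ := eventually_atTop.1 (hten (M + 1))
      have h1 := hN N (le_refl N)
      have h2 : (M + 1 : ℝ) < avgSeq (fun n => a (p n)) N := by exact_mod_cast h1
      have := (abs_le.1 (havgb N)).2
      linarith
  · rintro ⟨h1, h2⟩
    induction α with
    | bot => exact absurd h1 (by simp)
    | top => exact absurd h2 (by simp)
    | coe x =>
      rw [EReal.coe_le_coe_iff] at h1 h2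
      have hUinf : ∀ ε : ℝ, 0 < ε → {k | x - ε < a k}.Infinite := by
        intro ε hε
        have hlt : x - ε < U := by linarith [h2]
        have hcob : IsCoboundedUnder (· ≤ ·) atTop a := hbddB.isCoboundedUnder_le
        have hfreq : ∃ᶠ n in atTop, x - ε < a n := frequently_lt_of_lt_limsup hcob hlt
        exact Nat.frequently_atTop_iff_infinite.1 hfreq
      have hLinf : ∀ ε : ℝ, 0 < ε → {k | a k < x + ε}.Infinite := by
        intro ε hε
        have hlt : L < x + ε := by linarith [h1]
        have hcob : IsCoboundedUnder (· ≥ ·) atTop a := hbddA.isCoboundedUnder_ge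
        have hfreq : ∃ᶠ n in atTop, a n < x + ε := frequently_lt_of_liminf_lt hcob hlt
        exact Nat.frequently_atTop_iff_infinite.1 hfreq
      refine ⟨buildP a x, ⟨buildP_injective hUinf hLinf, buildP_surjective⟩, ?_⟩
      unfold avgTendsTo
      rw [EReal.tendsto_coe]
      exact buildP_tendsto hUinf hLinf hM
end

section
/- Let (a_n) be a real sequence with m = liminf a_n and M = limsup a_n, where m, M ∈ ℝ and m < M. Then there exists a bijection p : ℕ → ℕ such that the sequence of arithmetic means of (a_{p(n)}), namely n ↦ (a_{p(1)} + ⋯ + a_{p(n)})/n, does not converge to any point of ℝ̄. -/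
open Filter Topology

section Construction

private lemma exists_not_mem_list (l : List ℕ) : ∃ n, n ∉ l := by
  have : ({n | n ∈ l} : Set ℕ).Finite := l.finite_toSet
  obtain ⟨n, hn⟩ := this.infinite_compl.nonempty
  exact ⟨n, hn⟩

/-- least natural number not occurring in `l` -/
noncomputable def leastUnused (l : List ℕ) : ℕ := Nat.find (exists_not_mem_list l)

lemma leastUnused_not_mem (l : List ℕ) : leastUnused l ∉ l := Nat.find_spec (exists_not_mem_list l)

lemma leastUnused_min {l : List ℕ} {y : ℕ} (hy : y ∉ l) : leastUnused l ≤ y :=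
  Nat.find_min' (exists_not_mem_list l) hy

private lemma alg_aux (S : ℝ) (N : ℕ) {v c : ℝ} (hvc : v < c) :
    ∃ j : ℕ, 1 ≤ j ∧ S + j * v < c * (N + j) := by
  obtain ⟨j, hj⟩ := exists_nat_gt ((S - c * N) / (c - v))
  refine ⟨max j 1, le_max_right _ _, ?_⟩
  have h1 : (S - c * N) / (c - v) < (max j 1 : ℕ) :=
    lt_of_lt_of_le hj (by exact_mod_cast le_max_left j 1)
  have h2 : S - c * N < (max j 1 : ℕ) * (c - v) := (div_lt_iff₀ (by linarith)).1 h1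
  nlinarith [h2]

variable (a : ℕ → ℝ)

private lemma sum_map_range (f : ℕ → ℝ) :
    ∀ l : List ℕ, ∑ i ∈ Finset.range l.length, f (l.getD i 0) = (l.map f).sum := by
  intro l
  induction l using List.reverseRecOn with
  | nil => simp
  | append_singleton l x ih =>
    rw [List.length_append, List.length_singleton, Finset.sum_range_succ]
    have h1 : ∀ i ∈ Finset.range l.length, f ((l ++ [x]).getD i 0) = f (l.getD i 0) := by
      intro i hi
      rw [Finset.mem_range] at hi
      rw [List.getD_eq_getElem _ _ (by simp; omega), List.getElem_append_left hi,
        List.getD_eq_getElem _ _ hi]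
    rw [Finset.sum_congr rfl h1, ih]
    have h2 : (l ++ [x]).getD l.length 0 = x := by
      rw [List.getD_eq_getElem _ _ (by simp), List.getElem_append_right (le_refl _)]
      simp
    simp [h2]

lemma exists_block_lt {s : Set ℕ} (hs : s.Infinite) {v c : ℝ} (hv : ∀ x ∈ s, a x < v)
    (hvc : v < c) (l : List ℕ) :
    ∃ t : List ℕ, t.Nodup ∧ (∀ x ∈ t, x ∉ l) ∧
      (l.map a).sum + (t.map a).sum < c * (l.length + t.length) := by
  obtain ⟨j, hj1, hj⟩ := alg_aux ((l.map a).sum) l.length hvc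
  obtain ⟨T, hTs, hTcard⟩ := (hs.diff l.finite_toSet).exists_subset_card_eq j
  refine ⟨T.toList, T.nodup_toList, ?_, ?_⟩
  · intro x hx
    rw [Finset.mem_toList] at hx
    exact (hTs hx).2
  · have hTne : T.Nonempty := Finset.card_pos.1 (by omega)
    have hsum : (T.toList.map a).sum = ∑ x ∈ T, a x := Finset.sum_map_toList T a
    have hlt : ∑ x ∈ T, a x < ∑ _x ∈ T, v :=
      Finset.sum_lt_sum_of_nonempty hTne (fun x hx => hv x (hTs hx).1)
    rw [Finset.sum_const, hTcard, nsmul_eq_mul] at hlt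
    have hlen : T.toList.length = j := by rw [Finset.length_toList, hTcard]
    rw [hsum, hlen]
    linarith

private lemma sum_map_neg (l : List ℕ) :
    (l.map fun n => -(a n)).sum = -((l.map a).sum) := by
  induction l with
  | nil => simp
  | cons x t ih => simp [ih]; ring

lemma exists_block_gt {s : Set ℕ} (hs : s.Infinite) {v c : ℝ} (hv : ∀ x ∈ s, v < a x)
    (hvc : c < v) (l : List ℕ) :
    ∃ t : List ℕ, t.Nodup ∧ (∀ x ∈ t, x ∉ l) ∧
      c * (l.length + t.length) < (l.map a).sum + (t.map a).sum := by
  obtain ⟨t, h1, h2, h3⟩ :=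
    exists_block_lt (fun n => -(a n)) hs (v := -v) (c := -c)
      (fun x hx => by simpa using neg_lt_neg (hv x hx)) (by linarith) l
  rw [sum_map_neg, sum_map_neg] at h3
  exact ⟨t, h1, h2, by linarith⟩

end Construction

/-- Bundled data for the construction. -/
structure RearrSetup where
  a : ℕ → ℝ
  v1 : ℝ
  c1 : ℝ
  c2 : ℝ
  v2 : ℝ
  L : Set ℕ
  H : Set ℕ
  hL : L.Infinite
  hH : H.Infinite
  hv1 : ∀ x ∈ L, a x < v1
  hv2 : ∀ x ∈ H, v2 < a x
  h1 : v1 < c1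
  h2 : c2 < v2

namespace RearrSetup

/-- The rearranged prefix list after `k` stages. -/
noncomputable def B (S : RearrSetup) : ℕ → List ℕ
  | 0 => []
  | (k + 1) =>
      let l := B S k
      let l' := l ++ [leastUnused l]
      if k % 2 = 0 then l' ++ (exists_block_lt S.a S.hL S.hv1 S.h1 l').choose
      else l' ++ (exists_block_gt S.a S.hH S.hv2 S.h2 l').choose

variable (S : RearrSetup)

lemma B_succ (k : ℕ) :
    S.B (k + 1) =
      (S.B k ++ [leastUnused (S.B k)]) ++
        (if k % 2 = 0 then
          (exists_block_lt S.a S.hL S.hv1 S.h1 (S.B k ++ [leastUnused (S.B k)])).choose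
        else
          (exists_block_gt S.a S.hH S.hv2 S.h2 (S.B k ++ [leastUnused (S.B k)])).choose) := by
  conv_lhs => rw [B]
  split <;> simp_all

/-- common shape of the step: there exists a tail with the nodup/fresh properties. -/
lemma B_step (k : ℕ) : ∃ t : List ℕ,
    S.B (k + 1) = (S.B k ++ [leastUnused (S.B k)]) ++ t ∧ t.Nodup ∧
      (∀ x ∈ t, x ∉ S.B k ++ [leastUnused (S.B k)]) := by
  rw [S.B_succ k]
  by_cases hk : k % 2 = 0
  · simp only [hk, if_pos]
    obtain ⟨ht1, ht2, _⟩ :=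
      (exists_block_lt S.a S.hL S.hv1 S.h1 (S.B k ++ [leastUnused (S.B k)])).choose_spec
    exact ⟨_, rfl, ht1, ht2⟩
  · simp only [hk, if_neg, ite_false]
    obtain ⟨ht1, ht2, _⟩ :=
      (exists_block_gt S.a S.hH S.hv2 S.h2 (S.B k ++ [leastUnused (S.B k)])).choose_spec
    exact ⟨_, rfl, ht1, ht2⟩

lemma B_nodup : ∀ k, (S.B k).Nodup := by
  intro k
  induction k with
  | zero => simp [B]
  | succ k ih =>
    obtain ⟨t, heq, ht1, ht2⟩ := S.B_step k
    rw [heq]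
    have hul : (S.B k ++ [leastUnused (S.B k)]).Nodup := by
      rw [List.nodup_append]
      exact ⟨ih, List.nodup_singleton _, by
        intro x hx y hx' hxy
        rw [List.mem_singleton] at hx'
        subst hx'
        exact leastUnused_not_mem _ (by rw [← hxy]; exact hx)⟩
    rw [List.nodup_append]
    exact ⟨hul, ht1, fun x hx y hy hxy => ht2 y hy (by rw [← hxy]; exact hx)⟩

lemma B_prefix (k : ℕ) : S.B k <+: S.B (k + 1) := by
  obtain ⟨t, heq, -, -⟩ := S.B_step k
  rw [heq, List.append_assoc]
  exact List.prefix_append _ _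

lemma B_prefix_le {k k' : ℕ} (h : k ≤ k') : S.B k <+: S.B k' := by
  induction h with
  | refl => exact List.prefix_refl _
  | step _ ih => exact ih.trans (S.B_prefix _)

lemma B_len_lt (k : ℕ) : (S.B k).length < (S.B (k + 1)).length := by
  obtain ⟨t, heq, -, -⟩ := S.B_step k
  rw [heq]
  simp

lemma B_len (k : ℕ) : k ≤ (S.B k).length := by
  induction k with
  | zero => simp
  | succ k ih => have := S.B_len_lt k; omega

lemma B_mem : ∀ k, ∀ n < k, n ∈ S.B k := by
  intro k
  induction k with
  | zero => omega
  | succ k ih =>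
    intro n hn
    rcases Nat.lt_succ_iff_lt_or_eq.1 hn with h | rfl
    · exact (S.B_prefix k).subset (ih n h)
    · by_cases hmem : n ∈ S.B n
      · exact (S.B_prefix n).subset hmem
      · have hle : leastUnused (S.B n) ≤ n := leastUnused_min hmem
        have heq : leastUnused (S.B n) = n := by
          rcases lt_or_eq_of_le hle with h | h
          · exact absurd (ih _ h) (leastUnused_not_mem _)
          · exact h
        obtain ⟨t, heqB, -, -⟩ := S.B_step n
        have hmem2 : leastUnused (S.B n) ∈ S.B (n + 1) := by rw [heqB]; simp
        rwa [heq] at hmem2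

lemma B_sum_lt {k : ℕ} (hk : k % 2 = 0) :
    ((S.B (k + 1)).map S.a).sum < S.c1 * ((S.B (k + 1)).length : ℝ) := by
  rw [S.B_succ k]
  simp only [hk, if_pos]
  obtain ⟨-, -, hsum⟩ :=
    (exists_block_lt S.a S.hL S.hv1 S.h1 (S.B k ++ [leastUnused (S.B k)])).choose_spec
  rw [List.map_append, List.sum_append]
  push_cast [List.length_append] at hsum ⊢
  linarith

lemma B_sum_gt {k : ℕ} (hk : k % 2 = 1) :
    S.c2 * ((S.B (k + 1)).length : ℝ) < ((S.B (k + 1)).map S.a).sum := by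
  obtain ⟨-, -, hsum⟩ :=
    (exists_block_gt S.a S.hH S.hv2 S.h2 (S.B k ++ [leastUnused (S.B k)])).choose_spec
  set t := (exists_block_gt S.a S.hH S.hv2 S.h2 (S.B k ++ [leastUnused (S.B k)])).choose with ht
  rw [S.B_succ k]
  simp only [hk, Nat.one_ne_zero, if_neg, ite_false, ← ht]
  rw [List.map_append, List.sum_append]
  push_cast [List.length_append] at hsum ⊢
  linarith

/-- The rearrangement permutation. -/
noncomputable def perm (n : ℕ) : ℕ := (S.B (n + 1)).getD n 0

lemma perm_eq_getD {k n : ℕ} (h : n < (S.B k).length) : (S.B k).getD n 0 = S.perm n := by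
  have h1 : n < (S.B (n + 1)).length := lt_of_lt_of_le (Nat.lt_succ_self n) (S.B_len (n + 1))
  rw [perm, List.getD_eq_getElem _ _ h, List.getD_eq_getElem _ _ h1]
  rcases le_total k (n + 1) with hle | hle
  · exact (S.B_prefix_le hle).getElem h
  · exact ((S.B_prefix_le hle).getElem h1).symm

lemma perm_injective : Function.Injective S.perm := by
  intro i j hij
  set k := max i j + 1 with hk
  have hi : i < (S.B k).length := lt_of_lt_of_le (by omega) (S.B_len k)
  have hj : j < (S.B k).length := lt_of_lt_of_le (by omega) (S.B_len k)
  have hgi := S.perm_eq_getD hi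
  have hgj := S.perm_eq_getD hj
  rw [List.getD_eq_getElem _ _ hi] at hgi
  rw [List.getD_eq_getElem _ _ hj] at hgj
  exact (S.B_nodup k).getElem_inj_iff.1 (by rw [hgi, hgj, hij])

lemma perm_surjective : Function.Surjective S.perm := by
  intro n
  have hmem : n ∈ S.B (n + 1) := S.B_mem (n + 1) n (Nat.lt_succ_self n)
  obtain ⟨i, hi, hget⟩ := List.getElem_of_mem hmem
  refine ⟨i, ?_⟩
  rw [← S.perm_eq_getD hi, List.getD_eq_getElem _ _ hi, hget]

lemma sum_perm (k : ℕ) :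
    ∑ i ∈ Finset.range (S.B k).length, S.a (S.perm i) = ((S.B k).map S.a).sum := by
  rw [← sum_map_range S.a (S.B k)]
  refine Finset.sum_congr rfl fun i hi => ?_
  rw [Finset.mem_range] at hi
  rw [S.perm_eq_getD hi]

end RearrSetup

namespace RearrSetup

variable (S : RearrSetup)

lemma freq_lt : ∃ᶠ n in atTop, 0 < n ∧ avgSeq (fun i => S.a (S.perm i)) n < S.c1 := by
  rw [Filter.frequently_atTop]
  intro b
  set k := 2 * b with hk
  have hk2 : k % 2 = 0 := by omega
  refine ⟨(S.B (k + 1)).length, le_trans (by omega) (S.B_len (k + 1)), ?_, ?_⟩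
  · exact lt_of_lt_of_le (Nat.succ_pos k) (S.B_len (k + 1))
  · have hpos : (0 : ℝ) < ((S.B (k + 1)).length : ℝ) := by
      exact_mod_cast lt_of_lt_of_le (Nat.succ_pos k) (S.B_len (k + 1))
    rw [avgSeq, S.sum_perm (k + 1), div_lt_iff₀ hpos]
    exact S.B_sum_lt hk2

lemma freq_gt : ∃ᶠ n in atTop, 0 < n ∧ S.c2 < avgSeq (fun i => S.a (S.perm i)) n := by
  rw [Filter.frequently_atTop]
  intro b
  set k := 2 * b + 1 with hk
  have hk2 : k % 2 = 1 := by omega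
  refine ⟨(S.B (k + 1)).length, le_trans (by omega) (S.B_len (k + 1)), ?_, ?_⟩
  · exact lt_of_lt_of_le (Nat.succ_pos k) (S.B_len (k + 1))
  · have hpos : (0 : ℝ) < ((S.B (k + 1)).length : ℝ) := by
      exact_mod_cast lt_of_lt_of_le (Nat.succ_pos k) (S.B_len (k + 1))
    rw [avgSeq, S.sum_perm (k + 1), lt_div_iff₀ hpos]
    exact S.B_sum_gt hk2

end RearrSetup

/-- If `m = liminf aₙ` and `M = limsup aₙ` are finite with `m < M`, then there is
a rearrangement of `(a_n)` whose sequence of arithmetic means converges to no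
point of `ℝ̄`. -/
theorem stmt5 (a : ℕ → ℝ) (m M : ℝ)
    (hm : liminf (fun n => ((a n : ℝ) : EReal)) atTop = (m : EReal))
    (hM : limsup (fun n => ((a n : ℝ) : EReal)) atTop = (M : EReal))
    (hmM : m < M) :
    ∃ p : ℕ → ℕ, Function.Bijective p ∧
      ∀ α : EReal, ¬ avgTendsTo (fun n => a (p n)) α := by
  show ∃ p : ℕ → ℕ, Function.Bijective p ∧
      ∀ α : EReal, ¬ Filter.Tendsto (fun n => ((avgSeq (fun n => a (p n)) n : ℝ) : EReal))
        Filter.atTop (nhds α)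
  set ε := (M - m) / 8 with hε
  have hε0 : 0 < ε := by rw [hε]; linarith
  have hLfreq : ∃ᶠ n in Filter.atTop, a n < m + ε := by
    have h : Filter.liminf (fun n => ((a n : ℝ) : EReal)) Filter.atTop < ((m + ε : ℝ) : EReal) := by
      rw [hm]; exact_mod_cast (by linarith : m < m + ε)
    exact (Filter.frequently_lt_of_liminf_lt (by isBoundedDefault) h).mono fun n hn => EReal.coe_lt_coe_iff.1 hn
  have hHfreq : ∃ᶠ n in Filter.atTop, M - ε < a n := by
    have h : ((M - ε : ℝ) : EReal) < Filter.limsup (fun n => ((a n : ℝ) : EReal)) Filter.atTop := by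
      rw [hM]; exact_mod_cast (by linarith : M - ε < M)
    exact (Filter.frequently_lt_of_lt_limsup (by isBoundedDefault) h).mono fun n hn => EReal.coe_lt_coe_iff.1 hn
  have hLinf : {n | a n < m + ε}.Infinite := Nat.frequently_atTop_iff_infinite.1 hLfreq
  have hHinf : {n | M - ε < a n}.Infinite := Nat.frequently_atTop_iff_infinite.1 hHfreq
  set S : RearrSetup :=
    ⟨a, m + ε, m + 2 * ε, M - 2 * ε, M - ε, {n | a n < m + ε}, {n | M - ε < a n},
      hLinf, hHinf, fun x hx => hx, fun x hx => hx, by linarith, by linarith⟩ with hS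
  refine ⟨S.perm, ⟨S.perm_injective, S.perm_surjective⟩, ?_⟩
  intro α hα
  have hc : S.c1 < S.c2 := by rw [hS]; simp only; linarith
  have hfl := S.freq_lt
  have hfg := S.freq_gt
  have h1 : α ∈ Set.Iic ((S.c1 : ℝ) : EReal) := by
    rw [← isClosed_Iic.closure_eq]
    refine mem_closure_of_frequently_of_tendsto ?_ hα
    exact hfl.mono fun n hn => by
      simp only [Set.mem_Iic]
      exact_mod_cast le_of_lt hn.2
  have h2 : α ∈ Set.Ici ((S.c2 : ℝ) : EReal) := by
    rw [← isClosed_Ici.closure_eq]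
    refine mem_closure_of_frequently_of_tendsto ?_ hα
    exact hfg.mono fun n hn => by
      simp only [Set.mem_Ici]
      exact_mod_cast le_of_lt hn.2
  have : ((S.c2 : ℝ) : EReal) ≤ ((S.c1 : ℝ) : EReal) := le_trans h2 h1
  rw [EReal.coe_le_coe_iff] at this
  linarith
end

section
/- Let (c_n) be a monotone nondecreasing sequence of positive reals with c_n → +∞, and let (c'_n) be any rearrangement of (c_n) (i.e. c'_n = c_{p(n)} for a bijection p : ℕ → ℕ). Then limsup_{n→∞} c_n / (c_1 + ⋯ + c_{n-1}) ≤ limsup_{n→∞} c'_n / (c'_1 + ⋯ + c'_{n-1}). -/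
open Filter Topology

/-- For a nondecreasing sequence of positive reals tending to `+∞` and any of
its rearrangements, `limsup cₙ / (c₁ + ⋯ + c₍ₙ₋₁₎) ≤
limsup c'ₙ / (c'₁ + ⋯ + c'₍ₙ₋₁₎)` (limsups in the extended reals). -/
theorem stmt6 (c : ℕ → ℝ) (hpos : ∀ n, 0 < c n) (hmono : Monotone c)
    (htop : Tendsto c atTop atTop) (p : ℕ → ℕ) (hp : Function.Bijective p) :
    limsup (fun n => ((c n / ∑ i ∈ Finset.range n, c i : ℝ) : EReal)) atTop ≤
      limsup (fun n => ((c (p n) / ∑ i ∈ Finset.range n, c (p i) : ℝ) : EReal)) atTop := by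
  have hex : ∀ n : ℕ, ∃ k, n ≤ p k := fun n => (hp.2 n).imp fun k hk => hk.ge
  set m : ℕ → ℕ := fun n => Nat.find (hex n) with hm
  have hpm : ∀ n, n ≤ p (m n) := fun n => Nat.find_spec (hex n)
  have hlt : ∀ n i, i < m n → p i < n := fun n i hi =>
    lt_of_not_ge (Nat.find_min (hex n) hi)
  have hmt : Tendsto m atTop atTop := by
    apply tendsto_atTop_atTop.2
    intro b
    refine ⟨(Finset.range b).sup p + 1, fun n hn => ?_⟩
    rw [hm]
    rw [Nat.le_find_iff]
    intro k hk hkn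
    have : p k ≤ (Finset.range b).sup p :=
      Finset.le_sup (Finset.mem_range.2 hk)
    omega
  set v : ℕ → EReal := fun n => ((c (p n) / ∑ i ∈ Finset.range n, c (p i) : ℝ) : EReal) with hv
  have hev : ∀ᶠ n in atTop,
      ((c n / ∑ i ∈ Finset.range n, c i : ℝ) : EReal) ≤ (v ∘ m) n := by
    filter_upwards [eventually_ge_atTop (p 0 + 1)] with n hn
    have h1 : 1 ≤ m n := by
      rw [hm, Nat.le_find_iff]
      intro k hk
      interval_cases k
      omega
    have hn1 : 1 ≤ n := le_trans (Nat.succ_le_succ (Nat.zero_le _)) hn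
    have hS'pos : 0 < ∑ i ∈ Finset.range (m n), c (p i) :=
      Finset.sum_pos (fun i _ => hpos _) ⟨0, Finset.mem_range.2 h1⟩
    have hsub : ∑ i ∈ Finset.range (m n), c (p i) ≤ ∑ i ∈ Finset.range n, c i := by
      rw [← Finset.sum_image (fun i _ j _ h => hp.1 h)]
      apply Finset.sum_le_sum_of_subset_of_nonneg
      · intro j hj
        simp only [Finset.mem_image, Finset.mem_range] at hj ⊢
        obtain ⟨i, hi, rfl⟩ := hj
        exact hlt n i hi
      · exact fun j _ _ => (hpos j).le
    have hdiv : c n / ∑ i ∈ Finset.range n, c i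
        ≤ c (p (m n)) / ∑ i ∈ Finset.range (m n), c (p i) :=
      div_le_div₀ (hpos _).le (hmono (hpm n)) hS'pos hsub
    simp only [hv, Function.comp]
    exact_mod_cast hdiv
  calc limsup (fun n => ((c n / ∑ i ∈ Finset.range n, c i : ℝ) : EReal)) atTop
      ≤ limsup (v ∘ m) atTop := limsup_le_limsup hev
    _ = limsup v (map m atTop) := limsup_comp v m atTop
    _ ≤ limsup v atTop := limsup_le_limsup_of_le hmt
end

section
/- Let (c_n) be a sequence of positive reals with c_n → +∞ and c_n / (c_1 + ⋯ + c_{n-1}) → 0. If (c'_n) is a rearrangement of (c_n) (i.e. c'_n = c_{p(n)} for a bijection p : ℕ → ℕ) that is monotone nondecreasing, then c'_n / (c'_1 + ⋯ + c'_{n-1}) → 0. -/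
open Filter Topology

/-- If a sequence of positive reals tending to `+∞` is balanced, i.e.
`cₙ / (c₁ + ⋯ + c₍ₙ₋₁₎) → 0`, then so is any nondecreasing rearrangement of it. -/
theorem stmt7 (c : ℕ → ℝ) (hpos : ∀ n, 0 < c n) (htop : Tendsto c atTop atTop)
    (hbal : Tendsto (fun n => c n / ∑ i ∈ Finset.range n, c i) atTop (𝓝 0))
    (p : ℕ → ℕ) (hp : Function.Bijective p) (hmono : Monotone (fun n => c (p n))) :
    Tendsto (fun n => c (p n) / ∑ i ∈ Finset.range n, c (p i)) atTop (𝓝 0) := by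
  have hinj := hp.injective
  have hsurj := hp.surjective
  set S : ℕ → ℝ := fun n => ∑ i ∈ Finset.range n, c i with hS
  set T : ℕ → ℝ := fun n => ∑ i ∈ Finset.range n, c (p i) with hT
  -- A n : indices not hit by p on [0, n)
  set A : ℕ → Set ℕ := fun n => {i | ∀ k < n, p k ≠ i} with hA
  have hAne : ∀ n, (A n).Nonempty := by
    intro n
    exact ⟨p n, fun k hk hpk => absurd (hinj hpk) (Nat.ne_of_lt hk)⟩
  set M : ℕ → ℕ := fun n => sInf (A n) with hM
  have hMmem : ∀ n, ∀ k < n, p k ≠ M n := fun n => Nat.sInf_mem (hAne n)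
  -- S (M n) ≤ T n
  have hST : ∀ n, S (M n) ≤ T n := by
    intro n
    have hsub : Finset.range (M n) ⊆ Finset.image p (Finset.range n) := by
      intro i hi
      rw [Finset.mem_range] at hi
      have hiA : i ∉ A n := Nat.notMem_of_lt_sInf hi
      simp only [hA, Set.mem_setOf_eq, not_forall] at hiA
      obtain ⟨k, hk, hpk⟩ := hiA
      rw [not_not] at hpk
      exact Finset.mem_image.mpr ⟨k, Finset.mem_range.mpr hk, hpk⟩
    calc S (M n) ≤ ∑ i ∈ Finset.image p (Finset.range n), c i :=
          Finset.sum_le_sum_of_subset_of_nonneg hsub (fun i _ _ => (hpos i).le)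
      _ = T n := Finset.sum_image (fun a _ b _ h => hinj h)
  -- c (p n) ≤ c (M n)
  have hdM : ∀ n, c (p n) ≤ c (M n) := by
    intro n
    obtain ⟨k, hpk⟩ := hsurj (M n)
    have hnk : n ≤ k := by
      by_contra h
      exact hMmem n k (Nat.lt_of_not_le h) hpk
    calc c (p n) ≤ c (p k) := hmono hnk
      _ = c (M n) := by rw [hpk]
  -- M → ∞
  have hMtop : Tendsto M atTop atTop := by
    rw [tendsto_atTop_atTop]
    intro L
    set B : Finset ℕ := Finset.image (fun i => (Equiv.ofBijective p hp).symm i)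
      (Finset.range L) with hB
    refine ⟨B.sup id + 1, fun n hn => ?_⟩
    by_contra h
    push_neg at h
    have hMA : M n ∈ A n := Nat.sInf_mem (hAne n)
    set k := (Equiv.ofBijective p hp).symm (M n) with hk
    have hpk : p k = M n := (Equiv.ofBijective p hp).apply_symm_apply (M n)
    have hkB : k ∈ B := Finset.mem_image.mpr ⟨M n, Finset.mem_range.mpr h, rfl⟩
    have hkn : k < n := lt_of_lt_of_le (Nat.lt_succ_of_le (Finset.le_sup (f := id) hkB)) hn
    exact hMA k hkn hpk
  -- main estimate
  rw [NormedAddCommGroup.tendsto_nhds_zero]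
  intro ε hε
  have hbal' := NormedAddCommGroup.tendsto_nhds_zero.mp hbal (ε / 2) (by positivity)
  filter_upwards [hMtop.eventually hbal', hMtop.eventually (eventually_ge_atTop 1),
    eventually_ge_atTop 1] with n hb hM1 hn1
  have hSpos : 0 < S (M n) := by
    apply Finset.sum_pos (fun i _ => hpos i)
    exact ⟨0, Finset.mem_range.mpr hM1⟩
  have hTpos : 0 < T n := by
    apply Finset.sum_pos (fun i _ => hpos (p i))
    exact ⟨0, Finset.mem_range.mpr hn1⟩
  have hb' : c (M n) / S (M n) < ε / 2 := by
    have : ‖c (M n) / S (M n)‖ = c (M n) / S (M n) := by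
      rw [Real.norm_eq_abs, abs_of_nonneg (div_nonneg (hpos _).le hSpos.le)]
    rw [this] at hb
    exact hb
  have h1 : c (p n) < ε / 2 * T n := by
    calc c (p n) ≤ c (M n) := hdM n
      _ < ε / 2 * S (M n) := (div_lt_iff₀ hSpos).mp hb'
      _ ≤ ε / 2 * T n := by
          apply mul_le_mul_of_nonneg_left (hST n) (by positivity)
  have h2 : c (p n) / T n < ε := by
    rw [div_lt_iff₀ hTpos]
    calc c (p n) < ε / 2 * T n := h1
      _ ≤ ε * T n := by nlinarith
  rw [Real.norm_eq_abs, abs_of_nonneg (div_nonneg (hpos _).le hTpos.le)]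
  exact h2
end

section
/- Let (a_n) = (b_n)||(c_n), where b_n ≡ 0 and (c_n) is a sequence of positive reals with c_n → +∞. If c_n / (c_1 + ⋯ + c_{n-1}) → 0 as n → ∞, then 1 ∈ AAR_{(a_n)}, i.e. 1 is accessible in average by rearrangement of (a_n). -/
open Filter Topology

namespace Stmt8Aux

variable (c : ℕ → ℝ)

/-- Partial sums of `c`. -/
noncomputable def S (k : ℕ) : ℝ := ∑ i ∈ Finset.range k, c i

/-- Position at which the `k`-th term of `c` is placed. -/
noncomputable def Nf (k : ℕ) : ℕ := ⌈S c k⌉₊ + k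

variable {c}

lemma S_nonneg (hpos : ∀ n, 0 < c n) (k : ℕ) : 0 ≤ S c k :=
  Finset.sum_nonneg fun i _ => (hpos i).le

lemma S_mono (hpos : ∀ n, 0 < c n) : Monotone (S c) := fun _ _ h =>
  Finset.sum_le_sum_of_subset_of_nonneg (Finset.range_subset_range.2 h) fun i _ _ => (hpos i).le

lemma S_succ (k : ℕ) : S c (k + 1) = S c k + c k := Finset.sum_range_succ c k

lemma S_pos (hpos : ∀ n, 0 < c n) {k : ℕ} (hk : 1 ≤ k) : 0 < S c k := by
  calc (0:ℝ) < c 0 := hpos 0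
    _ = S c 1 := by simp [S]
    _ ≤ S c k := S_mono hpos hk

lemma Nf_zero : Nf c 0 = 0 := by simp [Nf, S]

lemma Nf_strictMono (hpos : ∀ n, 0 < c n) : StrictMono (Nf c) := by
  apply strictMono_nat_of_lt_succ
  intro k
  have := Nat.ceil_mono (S_mono hpos (Nat.le_succ k))
  simp only [Nat.succ_eq_add_one] at this
  simp only [Nf]
  omega

lemma self_le_Nf (k : ℕ) : k ≤ Nf c k := Nat.le_add_left k _

lemma le_Nf (k : ℕ) : S c k + k ≤ (Nf c k : ℝ) := by
  have := Nat.le_ceil (S c k)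
  simp only [Nf]
  push_cast
  linarith

lemma Nf_le (hpos : ∀ n, 0 < c n) (k : ℕ) : (Nf c k : ℝ) ≤ S c k + k + 1 := by
  have := (Nat.ceil_lt_add_one (S_nonneg hpos k)).le
  simp only [Nf]
  push_cast
  linarith

lemma Nf_gap (hpos : ∀ n, 0 < c n) {k : ℕ} (h1 : 1 ≤ c k) : Nf c k + 2 ≤ Nf c (k + 1) := by
  have h2 : (⌈S c k⌉₊ : ℝ) < S c (k + 1) := by
    have := Nat.ceil_lt_add_one (S_nonneg hpos k)
    rw [S_succ]; linarith
  have h3 : ⌈S c k⌉₊ < ⌈S c (k + 1)⌉₊ := Nat.lt_ceil.2 h2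
  simp only [Nf]
  omega

lemma Kex (N : ℕ) : ∃ k, ¬ Nf c k < N := ⟨N, not_lt.2 (self_le_Nf N)⟩

/-- Number of terms of `c` placed among the first `N` positions. -/
noncomputable def K (c : ℕ → ℝ) (N : ℕ) : ℕ := Nat.find (Kex (c := c) N)

lemma lt_K_iff (hpos : ∀ n, 0 < c n) {k N : ℕ} : k < K c N ↔ Nf c k < N := by
  constructor
  · intro h
    exact not_not.1 (Nat.find_min (Kex (c := c) N) h)
  · intro h
    by_contra hc
    have h1 : ¬ Nf c (K c N) < N := Nat.find_spec (Kex (c := c) N)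
    exact h1 (lt_of_le_of_lt ((Nf_strictMono hpos).monotone (not_lt.1 hc)) h)

lemma N_le_Nf_K (hpos : ∀ n, 0 < c n) (N : ℕ) : N ≤ Nf c (K c N) :=
  not_lt.1 (Nat.find_spec (Kex (c := c) N))

lemma K_pos (hpos : ∀ n, 0 < c n) {N : ℕ} (hN : 1 ≤ N) : 1 ≤ K c N :=
  (lt_K_iff hpos).2 (by rw [Nf_zero]; omega)

lemma K_tendsto (hpos : ∀ n, 0 < c n) : Tendsto (K c) atTop atTop := by
  rw [tendsto_atTop]
  intro b
  filter_upwards [eventually_ge_atTop (Nf c b + 1)] with N hN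
  exact ((lt_K_iff hpos).2 (by omega)).le

lemma S_div_tendsto (hpos : ∀ n, 0 < c n) (htop : Tendsto c atTop atTop) :
    Tendsto (fun k => S c k / (k + 1 : ℝ)) atTop atTop := by
  rw [tendsto_atTop]
  intro M
  set M' : ℝ := max M 0 with hM'
  have hM0 : 0 ≤ M' := le_max_right _ _
  obtain ⟨m, hm⟩ := (htop.eventually (eventually_ge_atTop (2 * M' + 2))).exists_forall_of_atTop
  filter_upwards [eventually_ge_atTop (2 * m + 1)] with k hk
  have hmk : m ≤ k := by omega
  have h1 : ∑ i ∈ Finset.Ico m k, c i ≤ S c k := by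
    apply Finset.sum_le_sum_of_subset_of_nonneg
    · intro x hx
      simp only [Finset.mem_Ico] at hx
      exact Finset.mem_range.2 hx.2
    · exact fun i _ _ => (hpos i).le
  have h2 : ((k - m : ℕ) : ℝ) * (2 * M' + 2) ≤ ∑ i ∈ Finset.Ico m k, c i := by
    have := Finset.card_nsmul_le_sum (Finset.Ico m k) c (2 * M' + 2)
      (fun i hi => hm i (Finset.mem_Ico.1 hi).1)
    rwa [Nat.card_Ico, nsmul_eq_mul] at this
  have hcast : ((k - m : ℕ) : ℝ) = (k : ℝ) - m := by
    rw [Nat.cast_sub hmk]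
  have h3 : M * ((k : ℝ) + 1) ≤ S c k := by
    have hk' : (2 * m + 1 : ℝ) ≤ k := by exact_mod_cast hk
    have hMM : M ≤ M' := le_max_left _ _
    nlinarith [S_nonneg hpos k]
  rw [le_div_iff₀ (by positivity)]
  linarith

/-- The main analytic lemma: if the partial sums of `q` up to `N` equal `S c (K c N)`,
then the averages of `q` tend to `1`. -/
lemma avg_tendsto (hpos : ∀ n, 0 < c n) (htop : Tendsto c atTop atTop)
    (hbal : Tendsto (fun n => c n / ∑ i ∈ Finset.range n, c i) atTop (𝓝 0))
    (q : ℕ → ℝ) (hq : ∀ N, ∑ i ∈ Finset.range N, q i = S c (K c N)) :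
    Tendsto (fun N => (∑ i ∈ Finset.range N, q i) / N) atTop (𝓝 1) := by
  have hKt : Tendsto (K c) atTop atTop := K_tendsto hpos
  -- lower bound function
  set f : ℕ → ℝ := fun k => S c k / (S c k + k + 1) with hf_def
  have hf : Tendsto f atTop (𝓝 1) := by
    have h0 : Tendsto (fun k : ℕ => ((k : ℝ) + 1) / S c k) atTop (𝓝 0) := by
      have := (S_div_tendsto hpos htop).inv_tendsto_atTop
      refine this.congr fun k => ?_
      simp only [Pi.inv_apply, inv_div]
    have h1 : Tendsto (fun k : ℕ => (1 + ((k : ℝ) + 1) / S c k)⁻¹) atTop (𝓝 1) := by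
      have := (tendsto_const_nhds.add h0).inv₀ (by norm_num : (1 + 0 : ℝ) ≠ 0)
      simpa using this
    refine h1.congr' ?_
    filter_upwards [eventually_ge_atTop 1] with k hk
    have hS : S c k ≠ 0 := (S_pos hpos hk).ne'
    rw [hf_def]
    field_simp
    ring
  -- upper bound function
  set g : ℕ → ℝ := fun k => 1 + c (k - 1) / S c (k - 1) with hg_def
  have hg : Tendsto g atTop (𝓝 1) := by
    have h0 : Tendsto (fun k : ℕ => c (k - 1) / S c (k - 1)) atTop (𝓝 0) :=
      hbal.comp (tendsto_sub_atTop_nat 1)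
    have h1 : Tendsto (fun k : ℕ => (1:ℝ) + c (k - 1) / S c (k - 1)) atTop (𝓝 (1 + 0)) :=
      Tendsto.add tendsto_const_nhds h0
    simpa using h1
  have key : Tendsto (fun N => S c (K c N) / (N : ℝ)) atTop (𝓝 1) := by
    apply tendsto_of_tendsto_of_tendsto_of_le_of_le' (hf.comp hKt) (hg.comp hKt)
    · -- lower bound
      filter_upwards [eventually_ge_atTop 1] with N hN
      have hNpos : (0 : ℝ) < N := by exact_mod_cast hN
      have h1 : (N : ℝ) ≤ S c (K c N) + K c N + 1 :=
        le_trans (by exact_mod_cast N_le_Nf_K hpos N) (Nf_le hpos _)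
      have hSnn := S_nonneg hpos (K c N)
      simp only [Function.comp, hf_def]
      gcongr
      all_goals linarith
    · -- upper bound
      filter_upwards [hKt.eventually (eventually_ge_atTop 2), eventually_ge_atTop 1]
        with N hK2 hN1
      set k := K c N with hk_def
      set m := k - 1 with hm_def
      have hkm : k = m + 1 := by omega
      have hm1 : 1 ≤ m := by omega
      have hSm : 0 < S c m := S_pos hpos hm1
      have hNf : Nf c m < N := (lt_K_iff hpos).1 (by omega)
      have hNlb : S c m + m + 1 ≤ (N : ℝ) := by
        have h1 : (Nf c m : ℝ) + 1 ≤ N := by exact_mod_cast hNf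
        have h2 := le_Nf (c := c) m
        linarith
      have hck : 0 < c m := hpos m
      have step1 : S c k / (N : ℝ) ≤ S c k / (S c m + m + 1) := by
        gcongr
        all_goals first | exact S_nonneg hpos k | positivity | linarith
      have step2 : S c k / (S c m + m + 1) ≤ (S c m + c m) / S c m := by
        rw [hkm, S_succ]
        gcongr
        all_goals first | positivity | linarith
      have step3 : (S c m + c m) / S c m = g k := by
        rw [hg_def]
        simp only [← hm_def]
        field_simp
      calc S c k / (N : ℝ) ≤ (S c m + c m) / S c m := step1.trans step2
        _ = g k := step3
  exact key.congr' (by filter_upwards with N using by rw [hq N])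

/-- An explicit bijection `ℕ ⊕ ℕ ≃ ℕ`, `inl k ↦ 2k+1`, `inr m ↦ 2m`. -/
def esum : ℕ ⊕ ℕ ≃ ℕ where
  toFun := Sum.elim (fun k => 2 * k + 1) (fun m => 2 * m)
  invFun n := if n % 2 = 1 then Sum.inl (n / 2) else Sum.inr (n / 2)
  left_inv x := by
    rcases x with k | m
    · simp only [Sum.elim_inl]
      simp only [show (2 * k + 1) % 2 = 1 by omega, if_true]
      congr 1
      omega
    · simp only [Sum.elim_inr]
      simp only [show ¬ (2 * m % 2 = 1) by omega, if_false]
      congr 1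
      omega
  right_inv n := by
    dsimp only
    by_cases h : n % 2 = 1
    · rw [if_pos h]
      simp only [Sum.elim_inl]
      omega
    · rw [if_neg h]
      simp only [Sum.elim_inr]
      omega

lemma esum_inl (k : ℕ) : esum (Sum.inl k) = 2 * k + 1 := rfl
lemma esum_inr (m : ℕ) : esum (Sum.inr m) = 2 * m := rfl

end Stmt8Aux

open Stmt8Aux in
/-- For `(a_n) = (0)||(c_n)` with `c_n > 0`, `c_n → +∞` and
`cₙ / (c₁ + ⋯ + c₍ₙ₋₁₎) → 0`, the point `1` is accessible in average by
rearrangement of `(a_n)`. -/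
theorem stmt8 (c : ℕ → ℝ) (hpos : ∀ n, 0 < c n) (htop : Tendsto c atTop atTop)
    (hbal : Tendsto (fun n => c n / ∑ i ∈ Finset.range n, c i) atTop (𝓝 0)) :
    (1 : EReal) ∈ AAR (interleave (fun _ => 0) c) := by
  classical
  set a := interleave (fun _ => 0) c with ha
  set T : Set ℕ := Set.range (Nf c) with hT
  have hNfinj : Function.Injective (Nf c) := (Nf_strictMono hpos).injective
  -- the complement of T is infinite
  have hTcinf : (Tᶜ : Set ℕ).Infinite := by
    apply Set.infinite_of_forall_exists_gt
    intro x
    obtain ⟨k₀, hk₀⟩ := (htop.eventually (eventually_ge_atTop (1:ℝ))).exists_forall_of_atTop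
    set k := max k₀ (x + 1) with hk
    refine ⟨Nf c k + 1, ?_, ?_⟩
    · simp only [Set.mem_compl_iff, hT, Set.mem_range]
      rintro ⟨j, hj⟩
      rcases le_or_gt j k with h | h
      · have := (Nf_strictMono hpos).monotone h
        omega
      · have h1 : k + 1 ≤ j := h
        have h2 := (Nf_strictMono hpos).monotone h1
        have h3 := Nf_gap hpos (hk₀ k (le_max_left _ _))
        omega
    · have := self_le_Nf (c := c) k
      omega
  haveI : Infinite ↥(Tᶜ) := hTcinf.to_subtype
  letI : Denumerable ↥(Tᶜ) := Nat.Subtype.denumerable _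
  -- the pieces of the bijection
  let eT : ℕ ≃ T := Equiv.ofInjective (Nf c) hNfinj
  let eC : ↥(Tᶜ) ≃ ℕ := Denumerable.eqv _
  let p : ℕ ≃ ℕ := (Equiv.Set.sumCompl T).symm.trans ((eT.symm.sumCongr eC).trans esum)
  -- values of a ∘ p
  have hpT : ∀ k : ℕ, a (p (Nf c k)) = c k := by
    intro k
    have hmem : Nf c k ∈ T := ⟨k, rfl⟩
    have h1 : (Equiv.Set.sumCompl T).symm (Nf c k) = Sum.inl ⟨Nf c k, hmem⟩ :=
      Equiv.Set.sumCompl_symm_apply_of_mem hmem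
    have h2 : eT.symm ⟨Nf c k, hmem⟩ = k := by
      have : (⟨Nf c k, hmem⟩ : T) = eT k := rfl
      rw [this, Equiv.symm_apply_apply]
    have hp : p (Nf c k) = 2 * k + 1 := by
      simp only [p, Equiv.trans_apply, h1, Equiv.sumCongr_apply, Sum.map_inl, h2]
      rfl
    rw [hp, ha]
    have h3 : (2 * k + 1) % 2 = 1 := by omega
    have h4 : (2 * k + 1) / 2 = k := by omega
    simp [interleave, h3, h4]
  have hpTc : ∀ x : ℕ, x ∉ T → a (p x) = 0 := by
    intro x hx
    have h1 : (Equiv.Set.sumCompl T).symm x = Sum.inr ⟨x, hx⟩ :=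
      Equiv.Set.sumCompl_symm_apply_of_notMem hx
    have hp : p x = 2 * (eC ⟨x, hx⟩) := by
      simp only [p, Equiv.trans_apply, h1, Equiv.sumCongr_apply, Sum.map_inr]
      rfl
    rw [hp, ha]
    simp [interleave, Nat.mul_mod_right]
  -- partial sums of a ∘ p
  have hsum : ∀ N, ∑ i ∈ Finset.range N, a (p i) = S c (K c N) := by
    intro N
    have h1 : ∑ i ∈ Finset.range N, a (p i)
        = ∑ i ∈ (Finset.range N).filter (· ∈ T), a (p i) := by
      rw [Finset.sum_filter_of_ne]
      intro x _ hx
      by_contra hxT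
      exact hx (hpTc x hxT)
    have h2 : (Finset.range N).filter (· ∈ T) = (Finset.range (K c N)).image (Nf c) := by
      ext x
      simp only [Finset.mem_filter, Finset.mem_range, Finset.mem_image, hT, Set.mem_range]
      constructor
      · rintro ⟨hxN, k, rfl⟩
        exact ⟨k, (lt_K_iff hpos).2 hxN, rfl⟩
      · rintro ⟨k, hk, rfl⟩
        exact ⟨(lt_K_iff hpos).1 hk, k, rfl⟩
    rw [h1, h2, Finset.sum_image (fun x _ y _ h => hNfinj h)]
    exact Finset.sum_congr rfl fun k _ => hpT k
  have hmain : Tendsto (fun N => (∑ i ∈ Finset.range N, a (p i)) / (N : ℝ)) atTop (𝓝 1) :=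
    avg_tendsto hpos htop hbal _ hsum
  refine ⟨p, p.bijective, ?_⟩
  show Tendsto (fun n => ((avgSeq (fun n => a (p n)) n : ℝ) : EReal)) atTop (𝓝 1)
  rw [show (1 : EReal) = ((1 : ℝ) : EReal) from rfl, EReal.tendsto_coe]
  exact hmain
end

section
/- Let (a_n) = (b_n)||(c_n), where b_n ≡ 0 and (c_n) is a monotone nondecreasing sequence of positive reals with c_n → +∞. If 1 ∈ AAR_{(a_n)}, i.e. 1 is accessible in average by rearrangement of (a_n), then c_n / (c_1 + ⋯ + c_{n-1}) → 0 as n → ∞. -/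
open Filter Topology

set_option maxHeartbeats 1000000 in
/-- For `(a_n) = (0)||(c_n)` with `(c_n)` nondecreasing, positive, `c_n → +∞`:
if `1` is accessible in average by rearrangement of `(a_n)`, then
`cₙ / (c₁ + ⋯ + c₍ₙ₋₁₎) → 0`. -/
theorem stmt9 (c : ℕ → ℝ) (hpos : ∀ n, 0 < c n) (hmono : Monotone c)
    (htop : Tendsto c atTop atTop)
    (h1 : (1 : EReal) ∈ AAR (interleave (fun _ => 0) c)) :
    Tendsto (fun n => c n / ∑ i ∈ Finset.range n, c i) atTop (𝓝 0) := by
  classical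
  set S : ℕ → ℝ := fun n => ∑ i ∈ Finset.range n, c i with hSdef
  by_contra hcon
  rw [Metric.tendsto_atTop] at hcon
  push_neg at hcon
  obtain ⟨ε, hεpos, hfreq⟩ := hcon
  set ε' : ℝ := min ε 1 with hε'def
  have hε'pos : 0 < ε' := lt_min hεpos one_pos
  have hε'le1 : ε' ≤ 1 := min_le_right _ _
  obtain ⟨p, hpbij, htend⟩ := h1
  set a : ℕ → ℝ := interleave (fun _ => 0) c with hadef
  have haodd : ∀ k, a (2 * k + 1) = c k := by
    intro k
    have h2 : ¬ ((2 * k + 1) % 2 = 0) := by omega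
    have h3 : (2 * k + 1) / 2 = k := by omega
    simp [hadef, interleave, h2, h3]
  have hanonneg : ∀ m, 0 ≤ a m := by
    intro m
    by_cases h : m % 2 = 0 <;> simp [hadef, interleave, h, (hpos (m / 2)).le]
  set T : ℕ → ℝ := fun N => ∑ i ∈ Finset.range N, a (p i) with hTdef
  have hTsucc : ∀ N, T (N + 1) = T N + a (p N) := fun N => Finset.sum_range_succ _ N
  have hTnonneg : ∀ N, 0 ≤ T N := fun N => Finset.sum_nonneg fun i _ => hanonneg _
  have hTmono : Monotone T := monotone_nat_of_le_succ fun N => by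
    rw [hTsucc]; linarith [hanonneg (p N)]
  have htendR : Tendsto (fun N => T N / N) atTop (𝓝 1) := by
    have h := htend
    rw [avgTendsTo, show (1 : EReal) = ((1 : ℝ) : EReal) by norm_cast,
      EReal.tendsto_coe] at h
    exact h
  set δ : ℝ := ε' / 8 with hδdef
  have hδpos : 0 < δ := by positivity
  have hδle : δ ≤ 1 / 8 := by rw [hδdef]; linarith
  have hδ1 : (0 : ℝ) ≤ 1 - δ := by linarith
  obtain ⟨M0, hM0⟩ := Metric.tendsto_atTop.mp htendR δ hδpos
  set M1 : ℕ := max M0 1 with hM1def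
  have hMbound : ∀ M : ℕ, M1 ≤ M → (1 - δ) * M ≤ T M ∧ T M ≤ (1 + δ) * M := by
    intro M hM
    have h1 : dist (T M / M) 1 < δ := hM0 M (le_trans (le_max_left _ _) hM)
    have hM1' : (1 : ℕ) ≤ M := le_trans (le_max_right _ _) hM
    have hMpos : (0 : ℝ) < M := by exact_mod_cast hM1'
    rw [Real.dist_eq, abs_sub_lt_iff] at h1
    constructor
    · have : 1 - δ < T M / M := by linarith [h1.2]
      have := (lt_div_iff₀ hMpos).mp this
      linarith
    · have : T M / M < 1 + δ := by linarith [h1.1]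
      have := (div_lt_iff₀ hMpos).mp this
      linarith
  -- S tends to infinity
  have hStop : Tendsto S atTop atTop := by
    apply tendsto_atTop_mono (fun n => ?_)
      (Tendsto.atTop_mul_const (hpos 0) tendsto_natCast_atTop_atTop)
    calc (n : ℝ) * c 0 = ∑ _i ∈ Finset.range n, c 0 := by
          rw [Finset.sum_const, Finset.card_range, nsmul_eq_mul]
      _ ≤ S n := Finset.sum_le_sum fun i _ => hmono (Nat.zero_le i)
  obtain ⟨n1, hn1⟩ := eventually_atTop.mp (tendsto_atTop.mp hStop (3 / ε'))
  obtain ⟨n2, hn2⟩ := eventually_atTop.mp (tendsto_atTop.mp htop (T M1 + 1))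
  obtain ⟨n, hnge, hndist⟩ := hfreq (max n1 n2)
  have hn1' : 3 / ε' ≤ S n := hn1 n (le_trans (le_max_left _ _) hnge)
  have hn2' : T M1 < c n := by
    have := hn2 n (le_trans (le_max_right _ _) hnge)
    linarith
  have hspos : 0 < S n := lt_of_lt_of_le (by positivity) hn1'
  have hratio : ε' ≤ c n / S n := by
    have h := hndist
    rw [Real.dist_eq, sub_zero, abs_of_nonneg (div_nonneg (hpos n).le hspos.le)] at h
    exact le_trans (min_le_left _ _) h
  have hcn : ε' * S n ≤ c n := (le_div_iff₀ hspos).mp hratio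
  -- first time a big term appears
  obtain ⟨N0, hN0⟩ := hpbij.2 (2 * n + 1)
  have hex : ∃ N, c n ≤ a (p N) := ⟨N0, by rw [hN0, haodd]⟩
  set N := Nat.find hex with hNdef
  have hbig : c n ≤ a (p N) := Nat.find_spec hex
  have hsmall : ∀ k, k < N → a (p k) < c n := fun k hk =>
    lt_of_not_ge (Nat.find_min hex hk)
  -- T N ≤ S n
  have hTN : T N ≤ S n := by
    set K := (Finset.range N).filter (fun k => p k % 2 = 1) with hKdef
    have hKeq : T N = ∑ k ∈ K, a (p k) := by
      refine (Finset.sum_subset (Finset.filter_subset _ _) ?_).symm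
      intro k hk hkK
      have h2 : p k % 2 = 0 := by
        simp only [hKdef, Finset.mem_filter, hk, true_and] at hkK
        omega
      simp [hadef, interleave, h2]
    have hval : ∀ k ∈ K, a (p k) = c (p k / 2) := by
      intro k hk
      have h2 : p k % 2 = 1 := (Finset.mem_filter.mp hk).2
      have h3 : ¬ (p k % 2 = 0) := by omega
      simp [hadef, interleave, h3]
    have hlt : ∀ k ∈ K, p k / 2 < n := by
      intro k hk
      by_contra h
      push_neg at h
      have hmo : c n ≤ c (p k / 2) := hmono h
      have hkN : k < N := Finset.mem_range.mp (Finset.mem_filter.mp hk).1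
      have hs := hsmall k hkN
      rw [hval k hk] at hs
      linarith
    have hinj : ∀ x ∈ K, ∀ y ∈ K, p x / 2 = p y / 2 → x = y := by
      intro x hx y hy hxy
      have h2x : p x % 2 = 1 := (Finset.mem_filter.mp hx).2
      have h2y : p y % 2 = 1 := (Finset.mem_filter.mp hy).2
      exact hpbij.1 (by omega)
    have hsub : K.image (fun k => p k / 2) ⊆ Finset.range n := by
      intro j hj
      obtain ⟨k, hk, rfl⟩ := Finset.mem_image.mp hj
      exact Finset.mem_range.mpr (hlt k hk)
    calc T N = ∑ k ∈ K, a (p k) := hKeq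
      _ = ∑ k ∈ K, c (p k / 2) := Finset.sum_congr rfl hval
      _ = ∑ j ∈ K.image (fun k => p k / 2), c j := (Finset.sum_image hinj).symm
      _ ≤ ∑ j ∈ Finset.range n, c j :=
          Finset.sum_le_sum_of_subset_of_nonneg hsub fun j _ _ => (hpos j).le
  -- N ≥ M1
  have hNge : M1 ≤ N := by
    by_contra h
    push_neg at h
    have h2 : T (N + 1) ≤ T M1 := hTmono h
    have h3 : a (p N) ≤ T (N + 1) := by rw [hTsucc]; linarith [hTnonneg N]
    linarith
  obtain ⟨hl1, hu1⟩ := hMbound N hNge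
  obtain ⟨hl2, hu2⟩ := hMbound (N + 1) (le_trans hNge (Nat.le_succ N))
  have hcast : ((N + 1 : ℕ) : ℝ) = (N : ℝ) + 1 := by push_cast; ring
  rw [hcast] at hl2 hu2
  have hNr : (0 : ℝ) ≤ (N : ℝ) := Nat.cast_nonneg N
  have key1 : c n ≤ 2 * δ * N + 1 + δ := by
    have heq : a (p N) = T (N + 1) - T N := by rw [hTsucc]; ring
    nlinarith [hbig]
  have key2 : (1 - δ) * N ≤ S n := le_trans hl1 hTN
  have e1 : 2 * δ * ((1 - δ) * N) ≤ 2 * δ * S n :=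
    mul_le_mul_of_nonneg_left key2 (by positivity)
  have e2' : c n * (1 - δ) ≤ (2 * δ * N + 1 + δ) * (1 - δ) :=
    mul_le_mul_of_nonneg_right key1 hδ1
  have e2 : c n * (1 - δ) ≤ 2 * δ * S n + 1 := by nlinarith [sq_nonneg δ]
  have e3 : 3 ≤ ε' * S n := by
    rw [div_le_iff₀ hε'pos] at hn1'
    linarith
  have e4 : ε' * S n * (1 - δ) ≤ c n * (1 - δ) := mul_le_mul_of_nonneg_right hcn hδ1
  have e5 : ε' * (ε' * S n) ≤ 1 * (ε' * S n) :=
    mul_le_mul_of_nonneg_right hε'le1 (by positivity)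
  nlinarith [e2, e4, e5, e3, hδdef]
end

section
/- Let (a_n) = (b_n)||(c_n), where b_n ≡ 0 and c_n → +∞. If 1 ∈ AAR_{(a_n)}, then AAR_{(a_n)} is the extended-real closed interval [0, +∞], i.e. AAR_{(a_n)} = {α ∈ ℝ̄ : 0 ≤ α}. -/
open Filter Topology Finset
open scoped Classical

/-- Cesàro-type: if `w → ∞`, partial sums eventually dominate `C * k`. -/
lemma cesaro_event (w : ℕ → ℝ) (hw : Tendsto w atTop atTop) (C : ℝ) :
    ∀ᶠ k in atTop, C * k ≤ ∑ j ∈ Finset.range k, w j := by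
  obtain ⟨J, hJ⟩ := (hw.eventually_ge_atTop (|C| + 1)).exists_forall_of_atTop
  set D : ℝ := |C| + 1 with hD
  set A : ℝ := ∑ j ∈ Finset.range J, w j with hA
  have key : ∀ k, J ≤ k → A + D * (k - J : ℝ) ≤ ∑ j ∈ Finset.range k, w j := by
    intro k hk
    induction k, hk using Nat.le_induction with
    | base => simp [hA]
    | succ n hn ih =>
      rw [Finset.sum_range_succ]
      have hwn := hJ n hn
      push_cast
      nlinarith [ih]
  rw [eventually_atTop]
  refine ⟨max J (Nat.ceil (D * J - A)), fun k hk => ?_⟩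
  have hk1 : J ≤ k := le_trans (le_max_left _ _) hk
  have hk2 : (D * J - A : ℝ) ≤ k := by
    calc (D * J - A : ℝ) ≤ Nat.ceil (D * J - A) := Nat.le_ceil _
    _ ≤ k := by exact_mod_cast le_trans (le_max_right _ _) hk
  have h3 := key k hk1
  have hCD : C + 1 ≤ D := by cases abs_cases C <;> simp [hD] <;> linarith
  have h5 : (0:ℝ) ≤ (D - C - 1) * k := mul_nonneg (by linarith) (Nat.cast_nonneg k)
  nlinarith [h3, hk2]

lemma exists_lb (w : ℕ → ℝ) (hw : Tendsto w atTop atTop) :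
    ∃ W : ℝ, 0 ≤ W ∧ ∀ k, -W ≤ w k := by
  obtain ⟨J, hJ⟩ := (hw.eventually_ge_atTop 0).exists_forall_of_atTop
  refine ⟨∑ j ∈ Finset.range J, |w j|, by positivity, fun k => ?_⟩
  rcases Nat.lt_or_ge k J with h | h
  · have h1 : |w k| ≤ ∑ j ∈ Finset.range J, |w j| :=
      Finset.single_le_sum (f := fun j => |w j|) (fun i _ => abs_nonneg _)
        (Finset.mem_range.2 h)
    have := neg_abs_le (w k); linarith
  · have h2 : (0:ℝ) ≤ ∑ j ∈ Finset.range J, |w j| := by positivity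
    linarith [hJ k h]

lemma sum_eq_sum_nth (x : ℕ → ℝ) (P : ℕ → Prop)
    (hx : ∀ n, ¬ P n → x n = 0) (m : ℕ) :
    ∑ i ∈ Finset.range m, x i = ∑ k ∈ Finset.range (Nat.count P m), x (Nat.nth P k) := by
  induction m with
  | zero => simp
  | succ n ih =>
    rw [Finset.sum_range_succ, Nat.count_succ]
    by_cases h : P n
    · rw [if_pos h, Finset.sum_range_succ, ih, Nat.nth_count h]
    · rw [if_neg h, hx n h, add_zero, ih, Nat.add_zero]

open scoped Classical

/-- Gadget: given `x` with infinitely many zeros and nonzeros, and a set `S` with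
`S`, `Sᶜ` infinite, there is a bijection `q` putting the nonzeros of `x` (in order)
exactly on `S`. -/
lemma gadget (x : ℕ → ℝ) (S : ℕ → Prop)
    (hz : {n | x n = 0}.Infinite) (hnz : {n | x n ≠ 0}.Infinite)
    (hs : {n | S n}.Infinite) (hsc : {n | ¬ S n}.Infinite) :
    ∃ q : ℕ → ℕ, Function.Bijective q ∧
      ∀ m, ∑ i ∈ Finset.range m, x (q i)
        = ∑ k ∈ Finset.range (Nat.count S m), x (Nat.nth (fun n => x n ≠ 0) k) := by
  set NZ : ℕ → Prop := fun n => x n ≠ 0 with hNZ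
  set Z : ℕ → Prop := fun n => x n = 0 with hZ
  set Sc : ℕ → Prop := fun n => ¬ S n with hSc'
  set q : ℕ → ℕ := fun n =>
    if S n then Nat.nth NZ (Nat.count S n) else Nat.nth Z (Nat.count Sc n) with hq
  set r : ℕ → ℕ := fun m =>
    if x m = 0 then Nat.nth Sc (Nat.count Z m) else Nat.nth S (Nat.count NZ m) with hr
  have hqS : ∀ n, S n → q n = Nat.nth NZ (Nat.count S n) := fun n h => if_pos h
  have hqSc : ∀ n, ¬ S n → q n = Nat.nth Z (Nat.count Sc n) := fun n h => if_neg h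
  have hlinv : Function.LeftInverse r q := by
    intro n
    by_cases h : S n
    · rw [hqS n h]
      have h1 : NZ (Nat.nth NZ (Nat.count S n)) := Nat.nth_mem_of_infinite hnz _
      simp only [hr, if_neg h1]
      rw [Nat.count_nth_of_infinite hnz, Nat.nth_count h]
    · rw [hqSc n h]
      have h1 : Z (Nat.nth Z (Nat.count Sc n)) := Nat.nth_mem_of_infinite hz _
      simp only [hr, if_pos h1]
      rw [Nat.count_nth_of_infinite hz, Nat.nth_count h]
      exact if_pos h1
  have hrinv : Function.RightInverse r q := by
    intro m
    by_cases h : x m = 0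
    · have h0 : Z m := h
      simp only [hr, if_pos h]
      have h1 : Sc (Nat.nth Sc (Nat.count Z m)) := Nat.nth_mem_of_infinite hsc _
      rw [hqSc _ h1, Nat.count_nth_of_infinite hsc, Nat.nth_count h0]
    · have h0 : NZ m := h
      simp only [hr, if_neg h]
      have h1 : S (Nat.nth S (Nat.count NZ m)) := Nat.nth_mem_of_infinite hs _
      rw [hqS _ h1, Nat.count_nth_of_infinite hs, Nat.nth_count h0]
  refine ⟨q, Function.bijective_iff_has_inverse.2 ⟨r, hlinv, hrinv⟩, fun m => ?_⟩
  have hxq0 : ∀ n, ¬ S n → x (q n) = 0 := by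
    intro n h
    rw [hqSc n h]
    exact Nat.nth_mem_of_infinite hz _
  rw [sum_eq_sum_nth (fun i => x (q i)) S hxq0 m]
  apply Finset.sum_congr rfl
  intro k _
  have h1 : S (Nat.nth S k) := Nat.nth_mem_of_infinite hs _
  rw [hqS _ h1, Nat.count_nth_of_infinite hs]


/-- Greedy scheduler: `Kf cond m` counts the accepted steps before time `m`. -/
noncomputable def Kf (cond : ℕ → ℕ → Prop) : ℕ → ℕ
  | 0 => 0
  | m + 1 => Kf cond m + (if cond m (Kf cond m) then 1 else 0)

lemma Kf_mono (cond : ℕ → ℕ → Prop) : Monotone (Kf cond) := by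
  apply monotone_nat_of_le_succ
  intro n
  rw [Kf]
  split <;> omega

lemma Kf_succ_le (cond : ℕ → ℕ → Prop) (m : ℕ) : Kf cond (m + 1) ≤ Kf cond m + 1 := by
  rw [Kf]; split <;> omega

lemma Kf_count (cond : ℕ → ℕ → Prop) (inst : DecidablePred fun i => cond i (Kf cond i)) (m : ℕ) :
    @Nat.count (fun i => cond i (Kf cond i)) inst m = Kf cond m := by
  letI := inst
  induction m with
  | zero => simp [Kf]
  | succ n ih =>
    rw [Nat.count_succ, ih, Kf]
    by_cases h : cond n (Kf cond n) <;> simp [h]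

lemma Kf_tendsto (cond : ℕ → ℕ → Prop) (h : ∀ j, ∀ᶠ m in atTop, cond m j) :
    Tendsto (Kf cond) atTop atTop := by
  apply tendsto_atTop_atTop_of_monotone (Kf_mono cond)
  intro j
  induction j with
  | zero => exact ⟨0, Nat.zero_le _⟩
  | succ n ih =>
    obtain ⟨m₀, hm₀⟩ := ih
    obtain ⟨M, hM⟩ := (h (Kf cond m₀)).exists_forall_of_atTop
    set m₁ := max m₀ M with hm₁
    rcases Nat.lt_or_ge (Kf cond m₀) (Kf cond m₁) with hlt | hge
    · exact ⟨m₁, by omega⟩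
    · have heq : Kf cond m₁ = Kf cond m₀ :=
        le_antisymm hge (Kf_mono cond (le_max_left _ _))
      refine ⟨m₁ + 1, ?_⟩
      have : cond m₁ (Kf cond m₁) := heq ▸ hM m₁ (le_max_right _ _)
      rw [Kf, if_pos this]
      omega

lemma Kf_infinite (cond : ℕ → ℕ → Prop) (h : ∀ j, ∀ᶠ m in atTop, cond m j) :
    {m | cond m (Kf cond m)}.Infinite := by
  rw [← Nat.frequently_atTop_iff_infinite]
  rw [frequently_atTop]
  intro M
  by_contra hc
  push_neg at hc
  have hconst : ∀ t, Kf cond (M + t) = Kf cond M := by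
    intro t
    induction t with
    | zero => rfl
    | succ s ih =>
      have hnc : ¬ cond (M+s) (Kf cond (M+s)) := hc (M+s) (Nat.le_add_right _ _)
      rw [show M + (s+1) = (M+s)+1 from rfl, Kf, if_neg hnc, ih, add_zero]
  obtain ⟨m, hm⟩ := ((h (Kf cond M)).and (eventually_ge_atTop M)).exists
  have he : Kf cond m = Kf cond M := by
    rw [show m = M + (m - M) by omega]; exact hconst _
  exact hc m hm.2 (he ▸ hm.1)

lemma Kf_lin_lower (cond : ℕ → ℕ → Prop) (M : ℕ)
    (hall : ∀ m, M ≤ m → cond m (Kf cond m)) :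
    ∀ t, t ≤ Kf cond (M + t) := by
  intro t
  induction t with
  | zero => exact Nat.zero_le _
  | succ s ih =>
    rw [show M + (s+1) = (M+s)+1 from rfl, Kf, if_pos (hall _ (Nat.le_add_right _ _))]
    omega


lemma inter_ne (c : ℕ → ℝ) (n : ℕ) (h : interleave (fun _ => 0) c n ≠ 0) :
    n % 2 = 1 ∧ interleave (fun _ => 0) c n = c (n / 2) := by
  unfold interleave at *
  by_cases h2 : n % 2 = 0
  · simp [h2] at h
  · have : n % 2 = 1 := by omega
    simp [this] at *

lemma x_zero_infinite (c : ℕ → ℝ) (p : ℕ → ℕ) (hp : Function.Bijective p) :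
    {n | interleave (fun _ => 0) c (p n) = 0}.Infinite := by
  set e := Equiv.ofBijective p hp with he
  apply Set.infinite_of_injective_forall_mem
    (f := fun k : ℕ => e.symm (2 * k))
  · intro k k' hkk'
    have := e.symm.injective hkk'
    omega
  · intro k
    show interleave (fun _ => 0) c (p (e.symm (2 * k))) = 0
    rw [show p (e.symm (2*k)) = 2*k from e.apply_symm_apply (2*k)]
    simp [interleave, Nat.mul_mod_right]

lemma x_nonzero_infinite (c : ℕ → ℝ) (htop : Tendsto c atTop atTop)
    (p : ℕ → ℕ) (hp : Function.Bijective p) :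
    {n | interleave (fun _ => 0) c (p n) ≠ 0}.Infinite := by
  obtain ⟨N, hN⟩ := (htop.eventually_ge_atTop 1).exists_forall_of_atTop
  set e := Equiv.ofBijective p hp with he
  apply Set.infinite_of_injective_forall_mem
    (f := fun k : ℕ => e.symm (2 * (N + k) + 1))
  · intro k k' hkk'
    have := e.symm.injective hkk'
    omega
  · intro k
    show interleave (fun _ => 0) c (p (e.symm (2 * (N + k) + 1))) ≠ 0
    rw [show p (e.symm (2*(N+k)+1)) = 2*(N+k)+1 from e.apply_symm_apply _]
    have h2 : (2*(N+k)+1) % 2 = 1 := by omega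
    have h3 : (2*(N+k)+1) / 2 = N + k := by omega
    simp only [interleave, h2, h3]
    have := hN (N+k) (Nat.le_add_right _ _)
    norm_num
    linarith

lemma x_w_tendsto (c : ℕ → ℝ) (htop : Tendsto c atTop atTop)
    (p : ℕ → ℕ) (hp : Function.Bijective p) :
    Tendsto (fun k => interleave (fun _ => 0) c
      (p (Nat.nth (fun n => interleave (fun _ => 0) c (p n) ≠ 0) k))) atTop atTop := by
  set x : ℕ → ℝ := fun n => interleave (fun _ => 0) c (p n) with hx
  set NZ : ℕ → Prop := fun n => x n ≠ 0 with hNZ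
  have hnz : {n | x n ≠ 0}.Infinite := x_nonzero_infinite c htop p hp
  set ν : ℕ → ℕ := fun k => Nat.nth NZ k with hν
  have hmem : ∀ k, x (ν k) ≠ 0 := fun k => Nat.nth_mem_of_infinite hnz k
  set g : ℕ → ℕ := fun k => p (ν k) / 2 with hg
  have hodd : ∀ k, p (ν k) % 2 = 1 := fun k => (inter_ne c _ (hmem k)).1
  have hval : ∀ k, x (ν k) = c (g k) := fun k => (inter_ne c _ (hmem k)).2
  have hginj : Function.Injective g := by
    intro k k' hkk'
    have h1 := hodd k
    have h2 := hodd k'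
    have h3 : p (ν k) = p (ν k') := by
      simp only [hg] at hkk'
      omega
    have h4 : ν k = ν k' := hp.injective h3
    exact (Nat.nth_strictMono hnz).injective h4
  have := htop.comp hginj.nat_tendsto_atTop
  exact Tendsto.congr (fun k => (hval k).symm) this


lemma constructAAR (c : ℕ → ℝ) (htop : Tendsto c atTop atTop)
    (p : ℕ → ℕ) (hp : Function.Bijective p) (S : ℕ → Prop)
    (hs : {n | S n}.Infinite) (hsc : {n | ¬ S n}.Infinite) (α : EReal)
    (hlim : Tendsto (fun m => (((∑ k ∈ Finset.range (Nat.count S m),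
        interleave (fun _ => 0) c (p (Nat.nth
          (fun n => interleave (fun _ => 0) c (p n) ≠ 0) k))) / m : ℝ) : EReal))
      atTop (𝓝 α)) :
    α ∈ AAR (interleave (fun _ => 0) c) := by
  obtain ⟨q, hqb, hqs⟩ := gadget (fun n => interleave (fun _ => 0) c (p n)) S
    (x_zero_infinite c p hp) (x_nonzero_infinite c htop p hp) hs hsc
  refine ⟨p ∘ q, hp.comp hqb, ?_⟩
  unfold avgTendsTo
  have heq : ∀ m, avgSeq (fun n => interleave (fun _ => 0) c ((p ∘ q) n)) m
      = (∑ k ∈ Finset.range (Nat.count S m), interleave (fun _ => 0) c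
          (p (Nat.nth (fun n => interleave (fun _ => 0) c (p n) ≠ 0) k))) / m := by
    intro m
    rw [avgSeq]
    simp only [Function.comp_apply]
    rw [hqs m]
  exact hlim.congr (fun m => by rw [heq m])

lemma count_even_eq (inst : DecidablePred (fun i : ℕ => i % 2 = 0)) (m : ℕ) :
    @Nat.count (fun i => i % 2 = 0) inst m = (m + 1) / 2 := by
  letI := inst
  induction m with
  | zero => simp
  | succ n ih =>
    rw [Nat.count_succ, ih]
    by_cases h : n % 2 = 0
    · rw [if_pos h]; omega
    · rw [if_neg h]; omega

lemma top_mem_AAR (c : ℕ → ℝ) (htop : Tendsto c atTop atTop) :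
    (⊤ : EReal) ∈ AAR (interleave (fun _ => 0) c) := by
  have hid : Function.Bijective (id : ℕ → ℕ) := Function.bijective_id
  set x : ℕ → ℝ := fun n => interleave (fun _ => 0) c (id n) with hx
  set w : ℕ → ℝ := fun k => x (Nat.nth (fun n => x n ≠ 0) k) with hw'
  have hw : Tendsto w atTop atTop := x_w_tendsto c htop id hid
  apply constructAAR c htop id hid (fun i => i % 2 = 0)
  · apply Set.infinite_of_injective_forall_mem (f := fun k : ℕ => 2 * k)
    · intro a b hab; dsimp only at hab; omega
    · intro k; show (2 * k) % 2 = 0; omega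
  · apply Set.infinite_of_injective_forall_mem (f := fun k : ℕ => 2 * k + 1)
    · intro a b hab; dsimp only at hab; omega
    · intro k; show ¬ (2 * k + 1) % 2 = 0; omega
  · rw [EReal.tendsto_nhds_top_iff_real]
    intro b
    obtain ⟨k₁, hk₁⟩ := (cesaro_event w hw (2 * |b| + 2)).exists_forall_of_atTop
    rw [eventually_atTop]
    refine ⟨max (2 * k₁ + 2) 1, fun m hm => ?_⟩
    have hm1 : 1 ≤ m := le_trans (le_max_right _ _) hm
    have hm2 : 2 * k₁ + 2 ≤ m := le_trans (le_max_left _ _) hm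
    rw [count_even_eq (fun a => Classical.propDecidable _)]
    set k := (m + 1) / 2 with hk
    have hkk₁ : k₁ ≤ k := by omega
    have h2k : m ≤ 2 * k := by omega
    have hU := hk₁ k hkk₁
    rw [EReal.coe_lt_coe_iff]
    have hmpos : (0:ℝ) < m := by exact_mod_cast hm1
    rw [lt_div_iff₀ hmpos]
    have hck : (m:ℝ) ≤ 2 * k := by exact_mod_cast h2k
    have habs : b ≤ |b| := le_abs_self b
    nlinarith [abs_nonneg b, Nat.cast_nonneg (α := ℝ) k]


lemma zero_mem_AAR (c : ℕ → ℝ) (htop : Tendsto c atTop atTop) :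
    (0 : EReal) ∈ AAR (interleave (fun _ => 0) c) := by
  have hid : Function.Bijective (id : ℕ → ℕ) := Function.bijective_id
  set x : ℕ → ℝ := fun n => interleave (fun _ => 0) c (id n) with hx
  set w : ℕ → ℝ := fun k => x (Nat.nth (fun n => x n ≠ 0) k) with hw'
  have hw : Tendsto w atTop atTop := x_w_tendsto c htop id hid
  set U : ℕ → ℝ := fun k => ∑ j ∈ Finset.range k, w j with hU
  set cond : ℕ → ℕ → Prop := fun m k =>
    (|U k| + |w k| + 1) * ((k : ℝ) + 1) ≤ (m : ℝ) ∧ 2 * (k : ℝ) + 2 ≤ (m : ℝ) with hcond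
  set K : ℕ → ℕ := Kf cond with hK
  have hall : ∀ j, ∀ᶠ m in atTop, cond m j := by
    intro j
    have h1 := (tendsto_natCast_atTop_atTop (R := ℝ)).eventually_ge_atTop
      ((|U j| + |w j| + 1) * ((j : ℝ) + 1))
    have h2 := (tendsto_natCast_atTop_atTop (R := ℝ)).eventually_ge_atTop (2 * (j : ℝ) + 2)
    filter_upwards [h1, h2] with m hm1 hm2
    exact ⟨hm1, hm2⟩
  have hKtop : Tendsto K atTop atTop := Kf_tendsto cond hall
  have hSinf : {m | cond m (Kf cond m)}.Infinite := Kf_infinite cond hall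
  have hScinf : {m | ¬ cond m (Kf cond m)}.Infinite := by
    rw [← Nat.frequently_atTop_iff_infinite, frequently_atTop]
    intro M
    by_contra hc
    push_neg at hc
    have hlin := Kf_lin_lower cond M hc
    have h1 := hlin (M + 2)
    have h2 := (hc (M + (M + 2)) (by omega)).2
    have h3 : (2 : ℝ) * (Kf cond (M + (M + 2)) : ℝ) + 2 ≤ ((M + (M + 2) : ℕ) : ℝ) := h2
    have h4 : 2 * (Kf cond (M + (M + 2))) + 2 ≤ M + (M + 2) := by exact_mod_cast h3
    omega
  have hinv : ∀ m, |U (K m)| * (K m : ℝ) ≤ (m : ℝ) := by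
    intro m
    induction m with
    | zero => simp [hK, Kf]
    | succ n ih =>
      by_cases h : cond n (Kf cond n)
      · have hKs : K (n + 1) = K n + 1 := by rw [hK, Kf, if_pos h]
        rw [hKs]
        have hUs : U (K n + 1) = U (K n) + w (K n) := Finset.sum_range_succ _ _
        rw [hUs]
        have habs : |U (K n) + w (K n)| ≤ |U (K n)| + |w (K n)| := abs_add_le _ _
        have h5 : (|U (K n)| + |w (K n)| + 1) * ((K n : ℝ) + 1) ≤ (n : ℝ) := h.1
        have h6 : ((K n + 1 : ℕ) : ℝ) = (K n : ℝ) + 1 := by push_cast; ring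
        rw [h6]
        have h7 : (0:ℝ) ≤ (K n : ℝ) + 1 := by positivity
        have h8 : ((n:ℝ)) ≤ ((n+1 : ℕ):ℝ) := by push_cast; linarith
        calc |U (K n) + w (K n)| * ((K n : ℝ) + 1)
            ≤ (|U (K n)| + |w (K n)| + 1) * ((K n : ℝ) + 1) := by nlinarith [abs_nonneg (w (K n))]
          _ ≤ (n : ℝ) := h5
          _ ≤ ((n+1 : ℕ) : ℝ) := h8
      · have hKs : K (n + 1) = K n := by rw [hK, Kf, if_neg h, add_zero]
        rw [hKs]
        have h8 : ((n:ℝ)) ≤ ((n+1 : ℕ):ℝ) := by push_cast; linarith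
        linarith [ih]
  have hlim : Tendsto (fun m => U (K m) / (m : ℝ)) atTop (𝓝 0) := by
    rw [Metric.tendsto_atTop]
    intro ε hε
    obtain ⟨N₁, hN₁⟩ := (hKtop.eventually_ge_atTop (max 1 (Nat.ceil (2 / ε)))).exists_forall_of_atTop
    refine ⟨max N₁ 1, fun m hm => ?_⟩
    have hm1 : 1 ≤ m := le_trans (le_max_right _ _) hm
    have hKm := hN₁ m (le_trans (le_max_left _ _) hm)
    have hK1 : 1 ≤ K m := le_trans (le_max_left _ _) hKm
    have hK2 : (2 / ε : ℝ) ≤ (K m : ℝ) := by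
      calc (2/ε : ℝ) ≤ (Nat.ceil (2/ε) : ℝ) := Nat.le_ceil _
      _ ≤ (K m : ℝ) := by exact_mod_cast le_trans (le_max_right _ _) hKm
    have hmpos : (0:ℝ) < m := by exact_mod_cast hm1
    have hKpos : (0:ℝ) < (K m : ℝ) := by exact_mod_cast hK1
    rw [Real.dist_eq, sub_zero, abs_div, abs_of_nonneg (le_of_lt hmpos)]
    have h1 : |U (K m)| ≤ (m : ℝ) / (K m : ℝ) := by
      rw [le_div_iff₀ hKpos]
      exact hinv m
    have h2 : |U (K m)| / (m:ℝ) ≤ 1 / (K m : ℝ) := by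
      rw [div_le_div_iff₀ hmpos hKpos]
      calc |U (K m)| * (K m : ℝ) ≤ (m:ℝ) := hinv m
      _ = 1 * (m:ℝ) := (one_mul _).symm
    have h3 : 1 / (K m : ℝ) ≤ ε / 2 := by
      rw [div_le_div_iff₀ hKpos (by norm_num : (0:ℝ) < 2)]
      have h9 : ε * (2/ε) ≤ ε * (K m : ℝ) := mul_le_mul_of_nonneg_left hK2 (le_of_lt hε)
      have h10 : ε * (2/ε) = 2 := by field_simp
      linarith
    linarith [h2, h3, hε]
  apply constructAAR c htop id hid (fun m => cond m (Kf cond m)) hSinf hScinf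
  have : Tendsto (fun m => ((U (K m) / (m:ℝ) : ℝ) : EReal)) atTop (𝓝 ((0:ℝ) : EReal)) :=
    EReal.tendsto_coe.mpr hlim
  rw [EReal.coe_zero] at this
  apply this.congr
  intro m
  congr 1
  rw [Kf_count]


lemma sum_nth_prefix (x : ℕ → ℝ) (P : ℕ → Prop) (hP : (setOf P).Infinite)
    (hx0 : ∀ n, ¬ P n → x n = 0) (k : ℕ) :
    ∑ i ∈ Finset.range (Nat.nth P k), x i = ∑ j ∈ Finset.range k, x (Nat.nth P j) := by
  rw [sum_eq_sum_nth x P hx0 (Nat.nth P k), Nat.count_nth_of_infinite hP k]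

lemma sum_nth_prefix_succ (x : ℕ → ℝ) (P : ℕ → Prop) (hP : (setOf P).Infinite)
    (hx0 : ∀ n, ¬ P n → x n = 0) (k : ℕ) :
    ∑ i ∈ Finset.range (Nat.nth P k + 1), x i = ∑ j ∈ Finset.range (k + 1), x (Nat.nth P j) := by
  rw [sum_eq_sum_nth x P hx0 (Nat.nth P k + 1), Nat.count_nth_succ_of_infinite hP k]

set_option maxHeartbeats 1000000 in
lemma real_mem_AAR (c : ℕ → ℝ) (htop : Tendsto c atTop atTop)
    (p : ℕ → ℕ) (hp : Function.Bijective p)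
    (havg : Tendsto (fun n => avgSeq (fun i => interleave (fun _ => 0) c (p i)) n)
      atTop (𝓝 1)) (r : ℝ) (hr : 0 < r) :
    ((r : ℝ) : EReal) ∈ AAR (interleave (fun _ => 0) c) := by
  set x : ℕ → ℝ := fun n => interleave (fun _ => 0) c (p n) with hx
  have hnz : {n | x n ≠ 0}.Infinite := x_nonzero_infinite c htop p hp
  set NZ : ℕ → Prop := fun n => x n ≠ 0 with hNZ
  have hx0 : ∀ n, ¬ NZ n → x n = 0 := fun n hn => not_not.1 hn
  set ν : ℕ → ℕ := fun k => Nat.nth NZ k with hν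
  set w : ℕ → ℝ := fun k => x (ν k) with hw'
  have hw : Tendsto w atTop atTop := x_w_tendsto c htop p hp
  set U : ℕ → ℝ := fun k => ∑ j ∈ Finset.range k, w j with hU
  set T : ℕ → ℝ := fun n => ∑ i ∈ Finset.range n, x i with hT
  have hUt : ∀ k, T (ν k) = U k := fun k => sum_nth_prefix x NZ hnz hx0 k
  have hUt1 : ∀ k, T (ν k + 1) = U k + w k := by
    intro k
    have h5 := sum_nth_prefix_succ x NZ hnz hx0 k
    rw [show ∑ j ∈ Finset.range (k+1), x (Nat.nth NZ j)
      = (∑ j ∈ Finset.range k, x (Nat.nth NZ j)) + x (Nat.nth NZ k)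
      from Finset.sum_range_succ _ _] at h5
    exact h5
  have hνge : ∀ k, k ≤ ν k := fun k => Nat.le_nth (fun hf => absurd hf hnz)
  obtain ⟨W₀, hW₀0, hW₀⟩ := exists_lb w hw
  obtain ⟨K₀, hK₀⟩ := (hw.eventually_ge_atTop r).exists_forall_of_atTop
  set cond : ℕ → ℕ → Prop := fun m k => U k + w k ≤ r * ((m : ℝ) + 1) with hcond
  set K : ℕ → ℕ := Kf cond with hK
  have hall : ∀ j, ∀ᶠ m in atTop, cond m j := by
    intro j
    have h1 := (tendsto_natCast_atTop_atTop (R := ℝ)).eventually_ge_atTop ((U j + w j) / r)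
    filter_upwards [h1] with m hm
    show U j + w j ≤ r * ((m : ℝ) + 1)
    rw [div_le_iff₀ hr] at hm
    nlinarith [hm]
  have hKtop : Tendsto K atTop atTop := Kf_tendsto cond hall
  have hSinf : {m | cond m (Kf cond m)}.Infinite := Kf_infinite cond hall
  have hK0 : K 0 = 0 := rfl
  have hKstep : ∀ n, cond n (K n) → K (n+1) = K n + 1 := by
    intro n h; rw [hK, Kf, if_pos h]
  have hKsame : ∀ n, ¬ cond n (K n) → K (n+1) = K n := by
    intro n h; rw [hK, Kf, if_neg h, add_zero]
  have hU0 : U 0 = 0 := Finset.sum_range_zero _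
  have hUsucc : ∀ k, U (k+1) = U k + w k := fun k => Finset.sum_range_succ _ _
  -- upper bound
  have hupper : ∀ m, U (K m) ≤ r * m := by
    intro m
    induction m with
    | zero => rw [hK0, hU0]; simp
    | succ n ih =>
      by_cases h : cond n (K n)
      · rw [hKstep n h, hUsucc]
        have h' : U (K n) + w (K n) ≤ r * ((n:ℝ)+1) := h
        push_cast
        linarith [h']
      · rw [hKsame n h]
        push_cast
        nlinarith [ih, hr.le]
  -- S complement infinite
  have hScinf : {m | ¬ cond m (Kf cond m)}.Infinite := by
    rw [← Nat.frequently_atTop_iff_infinite, frequently_atTop]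
    intro M
    by_contra hc
    push_neg at hc
    have hlin := Kf_lin_lower cond M hc
    obtain ⟨k₁, hk₁⟩ := (cesaro_event w hw (2 * r + 1)).exists_forall_of_atTop
    set t := k₁ + Nat.ceil (r * M) + 1 with ht
    have h1 : t ≤ K (M + t) := hlin t
    have h2 : k₁ ≤ K (M + t) := by omega
    have h3 := hk₁ (K (M + t)) h2
    have h4 := hupper (M + t)
    have h5 : (t : ℝ) ≤ (K (M + t) : ℝ) := by exact_mod_cast h1
    have h6 : r * M ≤ (t : ℝ) - 1 := by
      have := Nat.le_ceil (r * M)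
      have h7 : (Nat.ceil (r * M) : ℝ) ≤ (t : ℝ) - 1 := by
        rw [ht]; push_cast; linarith
      linarith
    have h8 : ((M + t : ℕ) : ℝ) = (M : ℝ) + t := by push_cast; ring
    rw [h8] at h4
    nlinarith [mul_le_mul_of_nonneg_left h5 (by linarith : (0:ℝ) ≤ 2 * r + 1),
      mul_nonneg hr.le (Nat.cast_nonneg (α := ℝ) t)]
  -- lower invariant
  have hlower : ∀ m, r * m - r - w (K m) - W₀ - (r + W₀) * ((min (K m) K₀ : ℕ) : ℝ)
      ≤ U (K m) := by
    intro m
    induction m with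
    | zero =>
      rw [hK0, hU0]
      have e0 : min 0 K₀ = 0 := by omega
      rw [e0]
      simp only [Nat.cast_zero]
      have := hW₀ 0
      nlinarith [hW₀ 0, hr.le]
    | succ n ih =>
      by_cases h : cond n (K n)
      · have hks := hKstep n h
        rw [hks, hUsucc]
        rcases Nat.lt_or_ge (K n) K₀ with hlt | hge
        · have e1 : min (K n) K₀ = K n := by omega
          have e2 : min (K n + 1) K₀ = K n + 1 := by omega
          rw [e2]
          rw [e1] at ih
          have := hW₀ (K n + 1)
          push_cast
          push_cast at ih
          nlinarith [ih]
        · have e1 : min (K n) K₀ = K₀ := by omega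
          have e2 : min (K n + 1) K₀ = K₀ := by omega
          rw [e2]
          rw [e1] at ih
          have := hK₀ (K n + 1) (by omega)
          push_cast
          push_cast at ih
          nlinarith [ih]
      · have hks := hKsame n h
        rw [hks]
        have h2 : ¬ (U (K n) + w (K n) ≤ r * ((n : ℝ) + 1)) := h
        push_neg at h2
        have hE : (0:ℝ) ≤ (r + W₀) * ((min (K n) K₀ : ℕ) : ℝ) :=
          mul_nonneg (by linarith) (Nat.cast_nonneg _)
        have hn1 : ((n+1:ℕ):ℝ) = (n:ℝ)+1 := by push_cast; ring
        rw [hn1]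
        nlinarith [h2, hE]
  -- w (K m) / m tends to 0
  have hwm : Tendsto (fun m => w (K m) / (m : ℝ)) atTop (𝓝 0) := by
    rw [Metric.tendsto_atTop]
    intro ε hε
    set δ : ℝ := min (1/2) (ε / (16 * (r + 1))) with hδ
    have hδpos : 0 < δ := by
      apply lt_min (by norm_num)
      positivity
    have hδhalf : δ ≤ 1/2 := min_le_left _ _
    have hδε : δ ≤ ε / (16 * (r + 1)) := min_le_right _ _
    obtain ⟨N₁, hN₁⟩ := (Metric.tendsto_atTop.1 havg (δ/2) (by positivity))
    have hTbound : ∀ n, max N₁ 1 ≤ n → |T n - n| ≤ δ * n := by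
      intro n hn
      have hn1 : 1 ≤ n := le_trans (le_max_right _ _) hn
      have hnN : N₁ ≤ n := le_trans (le_max_left _ _) hn
      have := hN₁ n hnN
      rw [Real.dist_eq] at this
      have hnpos : (0:ℝ) < n := by exact_mod_cast hn1
      have havgn : avgSeq (fun i => interleave (fun _ => 0) c (p i)) n = T n / n := rfl
      rw [havgn] at this
      have h2 : |T n / (n:ℝ) - 1| ≤ δ/2 := le_of_lt this
      have h3 : T n / (n:ℝ) - 1 = (T n - n) / n := by field_simp
      rw [h3, abs_div, abs_of_pos hnpos] at h2
      rw [div_le_iff₀ hnpos] at h2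
      nlinarith [abs_nonneg (T n - (n:ℝ)), hnpos, hδpos]
    obtain ⟨M₁, hM₁⟩ := (hKtop.eventually_ge_atTop (max N₁ 1)).exists_forall_of_atTop
    obtain ⟨M₂, hM₂⟩ := ((tendsto_natCast_atTop_atTop (R := ℝ)).eventually_ge_atTop
      (max (4/ε) (2*W₀/ε))).exists_forall_of_atTop
    refine ⟨max (max M₁ M₂) 1, fun m hm => ?_⟩
    have hm1 : 1 ≤ m := le_trans (le_max_right _ _) hm
    have hmM₁ : M₁ ≤ m := le_trans (le_trans (le_max_left _ _) (le_max_left _ _)) hm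
    have hmM₂ : M₂ ≤ m := le_trans (le_trans (le_max_right _ _) (le_max_left _ _)) hm
    have hmpos : (0:ℝ) < m := by exact_mod_cast hm1
    have hm4ε : 4/ε ≤ (m:ℝ) := le_trans (le_max_left _ _) (hM₂ m hmM₂)
    have hmWε : 2*W₀/ε ≤ (m:ℝ) := le_trans (le_max_right _ _) (hM₂ m hmM₂)
    set k := K m with hk
    set n := ν k with hn
    have hkN : max N₁ 1 ≤ k := hM₁ m hmM₁
    have hnN : max N₁ 1 ≤ n := le_trans hkN (hνge k)
    have hnN1 : max N₁ 1 ≤ n + 1 := le_trans hnN (Nat.le_succ n)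
    have hb1 := hTbound n hnN
    have hb2 := hTbound (n+1) hnN1
    have hTU : T n = U k := hUt k
    have hTU1 : T (n+1) = U k + w k := hUt1 k
    have hUup : U k ≤ r * m := hupper m
    have hnpos : (0:ℝ) ≤ (n:ℝ) := Nat.cast_nonneg n
    -- (1-δ) n ≤ T n = U k ≤ r m  and δ ≤ 1/2 gives n ≤ 2 r m
    have hn2rm : (n:ℝ) ≤ 2 * (r * m) := by
      have h5 : (n:ℝ) - δ * n ≤ T n := by
        have := abs_le.1 hb1
        linarith [this.1]
      have h6 : T n ≤ r * m := by rw [hTU]; exact hUup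
      nlinarith [h5, h6, mul_nonneg (by linarith [hδhalf] : (0:ℝ) ≤ 1/2 - δ) hnpos]
    -- w k = T(n+1) - T n ≤ 2 δ n + 1 + δ
    have hwk_up : w k ≤ 2 * δ * n + 1 + δ := by
      have h5 := (abs_le.1 hb2).2
      have h6 := (abs_le.1 hb1).1
      have h7 : ((n+1 : ℕ):ℝ) = (n:ℝ) + 1 := by push_cast; ring
      rw [h7] at h5
      nlinarith [h5, h6]
    have hδr : 2 * δ * ((n:ℝ)) ≤ (ε/4) * m := by
      have h8 : 2 * δ * (n:ℝ) ≤ 2 * δ * (2 * (r * m)) :=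
        mul_le_mul_of_nonneg_left hn2rm (by positivity)
      have h9 : 4 * δ * (r+1) ≤ ε / 4 := by
        have h10 := mul_le_mul_of_nonneg_left hδε (by positivity : (0:ℝ) ≤ 4*(r+1))
        have h11 : 4*(r+1) * (ε/(16*(r+1))) = ε/4 := by
          field_simp
          ring
        nlinarith [h10, h11]
      nlinarith [hmpos.le, hr.le, hδpos.le, mul_nonneg (mul_nonneg hδpos.le hr.le) hmpos.le]
    have h2small : 1 + δ ≤ (ε/2) * m := by
      have : ε * (m:ℝ) ≥ 4 := by
        rw [div_le_iff₀ hε] at hm4ε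
        nlinarith [hm4ε]
      nlinarith [hδhalf]
    have hup : w k ≤ (3*ε/4) * m := by nlinarith [hwk_up, hδr, h2small]
    have hlow : -((3*ε/4) * m) ≤ w k := by
      have h5 := hW₀ k
      have h6 : W₀ ≤ (ε/2) * m := by
        rw [div_le_iff₀ hε] at hmWε
        nlinarith [hmWε]
      nlinarith [h5, h6, hε.le, hmpos.le]
    rw [Real.dist_eq, sub_zero, abs_div, abs_of_pos hmpos, div_lt_iff₀ hmpos]
    rw [abs_le] at *
    have : |w k| ≤ (3*ε/4) * m := abs_le.2 ⟨hlow, hup⟩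
    nlinarith [this, hε, hmpos]
  -- U (K m) / m tends to r
  set B : ℝ := r + W₀ + (r + W₀) * K₀ with hB
  have hBnn : 0 ≤ B := by positivity
  have hUlim : Tendsto (fun m => U (K m) / (m:ℝ)) atTop (𝓝 r) := by
    have hLten : Tendsto (fun m : ℕ => r - B / (m:ℝ) - w (K m) / m) atTop (𝓝 r) := by
      have h1 : Tendsto (fun m : ℕ => B / (m:ℝ)) atTop (𝓝 0) :=
        tendsto_const_div_atTop_nhds_zero_nat B
      have h2 := (h1.add hwm)
      rw [add_zero] at h2
      have h3 := (tendsto_const_nhds (x := r) (f := atTop (α := ℕ))).sub h2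
      rw [sub_zero] at h3
      exact h3.congr (fun m => by ring)
    apply tendsto_of_tendsto_of_tendsto_of_le_of_le' hLten tendsto_const_nhds
    · filter_upwards [eventually_ge_atTop 1] with m hm1
      have hmpos : (0:ℝ) < m := by exact_mod_cast hm1
      have hmin : ((min (K m) K₀ : ℕ) : ℝ) ≤ (K₀ : ℝ) := by
        exact_mod_cast min_le_right (K m) K₀
      have h1 := hlower m
      have h3 : (r + W₀) * ((min (K m) K₀ : ℕ) : ℝ) ≤ (r + W₀) * K₀ :=
        mul_le_mul_of_nonneg_left hmin (by linarith)
      have h2 : r * m - B - w (K m) ≤ U (K m) := by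
        rw [hB]
        linarith
      rw [le_div_iff₀ hmpos]
      have hexp : (r - B/(m:ℝ) - w (K m)/m) * m = r * m - B - w (K m) := by
        field_simp
      rw [hexp]
      exact h2
    · filter_upwards [eventually_ge_atTop 1] with m hm1
      have hmpos : (0:ℝ) < m := by exact_mod_cast hm1
      rw [div_le_iff₀ hmpos]
      exact hupper m
  -- conclude
  apply constructAAR c htop p hp (fun m => cond m (Kf cond m)) hSinf hScinf
  have hten : Tendsto (fun m => ((U (K m) / (m:ℝ) : ℝ) : EReal)) atTop (𝓝 ((r:ℝ) : EReal)) :=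
    EReal.tendsto_coe.mpr hUlim
  apply hten.congr
  intro m
  congr 1
  rw [Kf_count]


lemma aar_subset (c : ℕ → ℝ) (htop : Tendsto c atTop atTop) (α : EReal)
    (hα : α ∈ AAR (interleave (fun _ => 0) c)) : 0 ≤ α := by
  obtain ⟨p, hp, hten⟩ := hα
  set y : ℕ → ℝ := fun n => interleave (fun _ => 0) c (p n) with hy
  obtain ⟨N, hN⟩ := (htop.eventually_ge_atTop 0).exists_forall_of_atTop
  set e := Equiv.ofBijective p hp with he
  set F : Finset ℕ := Finset.image e.symm (Finset.range (2*N)) with hF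
  have hyF : ∀ i, i ∉ F → 0 ≤ y i := by
    intro i hi
    have hpi : 2*N ≤ p i := by
      by_contra hlt
      push_neg at hlt
      apply hi
      rw [hF]
      exact Finset.mem_image.2 ⟨p i, Finset.mem_range.2 hlt, e.symm_apply_apply i⟩
    by_cases hpar : p i % 2 = 0
    · show (0:ℝ) ≤ interleave (fun _ => 0) c (p i)
      unfold interleave
      rw [if_pos hpar]
    · show (0:ℝ) ≤ interleave (fun _ => 0) c (p i)
      unfold interleave
      rw [if_neg hpar]
      exact hN _ (by omega)
  set B : ℝ := ∑ i ∈ F, |y i| with hB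
  have hsum : ∀ m, -B ≤ ∑ i ∈ Finset.range m, y i := by
    intro m
    have hsplit : ∑ i ∈ Finset.range m, y i
        = ∑ i ∈ (Finset.range m ∩ F), y i + ∑ i ∈ (Finset.range m \ F), y i :=
      (Finset.sum_inter_add_sum_sdiff _ _ _).symm
    have h2 : (0:ℝ) ≤ ∑ i ∈ (Finset.range m \ F), y i :=
      Finset.sum_nonneg (fun i hi => hyF i (Finset.mem_sdiff.1 hi).2)
    have h3 : ∑ i ∈ (Finset.range m ∩ F), |y i| ≤ B :=
      Finset.sum_le_sum_of_subset_of_nonneg (Finset.inter_subset_right)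
        (fun i _ _ => abs_nonneg _)
    have h4 : -(∑ i ∈ (Finset.range m ∩ F), |y i|) ≤ ∑ i ∈ (Finset.range m ∩ F), y i := by
      rw [← Finset.sum_neg_distrib]
      exact Finset.sum_le_sum (fun i _ => neg_abs_le _)
    linarith
  have hglim : Tendsto (fun m : ℕ => (((-B) / (m:ℝ) : ℝ) : EReal)) atTop (𝓝 (0:EReal)) := by
    have h1 : Tendsto (fun m : ℕ => ((-B) / (m:ℝ) : ℝ)) atTop (𝓝 0) :=
      tendsto_const_div_atTop_nhds_zero_nat (-B)
    have h2 := EReal.tendsto_coe.mpr h1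
    rwa [EReal.coe_zero] at h2
  refine le_of_tendsto_of_tendsto hglim hten ?_
  filter_upwards [eventually_ge_atTop 1] with m hm1
  have hmpos : (0:ℝ) < m := by exact_mod_cast hm1
  apply EReal.coe_le_coe_iff.2
  rw [avgSeq]
  gcongr
  exact hsum m

/-- For `(a_n) = (0)||(c_n)` with `c_n → +∞`: if `1 ∈ AAR_{(a_n)}`, then
`AAR_{(a_n)}` is the extended-real interval `[0, +∞]`. -/
theorem stmt10 (c : ℕ → ℝ) (htop : Tendsto c atTop atTop)
    (h1 : (1 : EReal) ∈ AAR (interleave (fun _ => 0) c)) :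
    AAR (interleave (fun _ => 0) c) = {α : EReal | 0 ≤ α} := by
  ext α
  simp only [Set.mem_setOf_eq]
  constructor
  · exact fun h => aar_subset c htop α h
  · intro h0
    induction α using EReal.rec with
    | bot => simp at h0
    | coe r =>
      have hr0 : (0:ℝ) ≤ r := by exact_mod_cast h0
      rcases eq_or_lt_of_le hr0 with heq | hlt
      · rw [← heq, EReal.coe_zero]
        exact zero_mem_AAR c htop
      · obtain ⟨p, hp, hten⟩ := h1
        have havg : Tendsto (fun n => avgSeq
            (fun i => interleave (fun _ => 0) c (p i)) n) atTop (𝓝 1) := by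
          have h2 := hten
          rw [show (1:EReal) = ((1:ℝ):EReal) from (EReal.coe_one).symm] at h2
          exact EReal.tendsto_coe.1 h2
        exact real_mem_AAR c htop p hp havg r hlt
    | top => exact top_mem_AAR c htop
end

section
/- Let k ≥ 1 be a natural number and let (a_n) = (b_n)||(c_n), where b_n ≡ 0 and c_n = n^k. Then AAR_{(a_n)} is the extended-real closed interval [0, +∞], i.e. AAR_{(a_n)} = {α ∈ ℝ̄ : 0 ≤ α}. -/
open Filter Topology

namespace Stmt12

/-- natural-number partial sums `∑_{j<m} (j+1)^k` -/
def Tn (k m : ℕ) : ℕ := ∑ j ∈ Finset.range m, (j + 1) ^ k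

lemma Tn_succ (k m : ℕ) : Tn k (m + 1) = Tn k m + (m + 1) ^ k :=
  Finset.sum_range_succ _ _

lemma le_Tn (k m : ℕ) : m ≤ Tn k m := by
  calc m = ∑ _j ∈ Finset.range m, 1 := by simp
  _ ≤ Tn k m := Finset.sum_le_sum fun j _ => Nat.one_le_pow _ _ (by omega)

lemma Tn_pos (k m : ℕ) (hm : 1 ≤ m) : 0 < Tn k m := lt_of_lt_of_le hm (le_Tn k m)

lemma Tn_quad (k : ℕ) (hk : 1 ≤ k) (m : ℕ) : m * (m + 1) ≤ 2 * Tn k m := by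
  induction m with
  | zero => simp
  | succ m ih =>
    rw [Tn_succ]
    have h1 : m + 1 ≤ (m + 1) ^ k := Nat.le_self_pow (by omega) _
    nlinarith [ih]

lemma Tn_half (k m : ℕ) : (m - m / 2) * (m / 2 + 1) ^ k ≤ Tn k m := by
  have hsub : Finset.Ico (m / 2) m ⊆ Finset.range m := by
    intro j hj
    simp only [Finset.mem_Ico] at hj
    simp only [Finset.mem_range]
    omega
  calc (m - m / 2) * (m / 2 + 1) ^ k
      = ∑ _j ∈ Finset.Ico (m / 2) m, (m / 2 + 1) ^ k := by
        rw [Finset.sum_const, Nat.card_Ico, smul_eq_mul]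
    _ ≤ ∑ j ∈ Finset.Ico (m / 2) m, (j + 1) ^ k := by
        refine Finset.sum_le_sum fun j hj => ?_
        have : m / 2 ≤ j := (Finset.mem_Ico.mp hj).1
        exact Nat.pow_le_pow_left (by omega) k
    _ ≤ Tn k m := Finset.sum_le_sum_of_subset hsub

/-- number of `m` with `g m < n`, as least `m` with `n ≤ g m`. -/
noncomputable def cnt (g : ℕ → ℕ) (n : ℕ) : ℕ := sInf {m | n ≤ g m}

lemma cnt_spec (g : ℕ → ℕ) (hg2 : ∀ m, 2 * m + 1 ≤ g m) (n : ℕ) : n ≤ g (cnt g n) := by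
  have hne : {m | n ≤ g m}.Nonempty := ⟨n, by have := hg2 n; simp only [Set.mem_setOf_eq]; omega⟩
  exact Nat.sInf_mem hne

lemma cnt_le_iff (g : ℕ → ℕ) (hg : StrictMono g) (hg2 : ∀ m, 2 * m + 1 ≤ g m) (n m : ℕ) :
    cnt g n ≤ m ↔ n ≤ g m := by
  constructor
  · intro h
    exact (cnt_spec g hg2 n).trans (hg.monotone h)
  · intro h
    exact Nat.sInf_le h

lemma cnt_zero (g : ℕ → ℕ) : cnt g 0 = 0 :=
  Nat.le_zero.mp (Nat.sInf_le (show (0:ℕ) ≤ g 0 from Nat.zero_le _))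

lemma lt_of_lt_cnt (g : ℕ → ℕ) {n m : ℕ} (h : m < cnt g n) : g m < n := by
  have h2 : m ∉ {m | n ≤ g m} := Nat.notMem_of_lt_sInf h
  simp only [Set.mem_setOf_eq, not_le] at h2
  exact h2

lemma cnt_g (g : ℕ → ℕ) (hg : StrictMono g) (hg2 : ∀ m, 2 * m + 1 ≤ g m) (m : ℕ) :
    cnt g (g m) = m := by
  refine le_antisymm (Nat.sInf_le (le_refl (g m))) ?_
  by_contra h
  push_neg at h
  have h2 : g (cnt g (g m)) < g m := hg h
  have h3 := cnt_spec g hg2 (g m)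
  omega

lemma cnt_mono (g : ℕ → ℕ) (hg : StrictMono g) (hg2 : ∀ m, 2 * m + 1 ≤ g m) :
    Monotone (cnt g) := by
  intro n n' h
  rw [cnt_le_iff g hg hg2]
  exact h.trans (cnt_spec g hg2 n')

lemma cnt_half (g : ℕ → ℕ) (hg : StrictMono g) (hg2 : ∀ m, 2 * m + 1 ≤ g m) (n : ℕ) :
    cnt g n ≤ n / 2 := by
  rw [cnt_le_iff g hg hg2]
  have := hg2 (n / 2)
  omega

lemma cnt_le_self (g : ℕ → ℕ) (hg : StrictMono g) (hg2 : ∀ m, 2 * m + 1 ≤ g m) (n : ℕ) :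
    cnt g n ≤ n := (cnt_half g hg hg2 n).trans (Nat.div_le_self n 2)

lemma cnt_succ (g : ℕ → ℕ) (hg : StrictMono g) (hg2 : ∀ m, 2 * m + 1 ≤ g m) (n : ℕ) :
    cnt g (n + 1) = if g (cnt g n) = n then cnt g n + 1 else cnt g n := by
  split_ifs with h
  · refine le_antisymm ?_ ?_
    · rw [cnt_le_iff g hg hg2]
      have : g (cnt g n) < g (cnt g n + 1) := hg (by omega)
      omega
    · by_contra hc
      push_neg at hc
      have h2 : cnt g (n + 1) ≤ cnt g n := by omega
      rw [cnt_le_iff g hg hg2] at h2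
      omega
  · refine le_antisymm ?_ (cnt_mono g hg hg2 (by omega))
    rw [cnt_le_iff g hg hg2]
    have := cnt_spec g hg2 n
    omega

lemma cnt_tendsto (g : ℕ → ℕ) (hg : StrictMono g) (hg2 : ∀ m, 2 * m + 1 ≤ g m) :
    Tendsto (cnt g) atTop atTop := by
  refine tendsto_atTop_atTop_of_monotone (cnt_mono g hg hg2) fun b => ?_
  exact ⟨g b, (cnt_g g hg hg2 b).ge⟩

/-- the permutation: position `n` gets the odd number `2 * cnt g n + 1` if `n` is in the
range of `g` (a "big" position), and the even number `2 * (n - cnt g n)` otherwise. -/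
noncomputable def perm (g : ℕ → ℕ) (n : ℕ) : ℕ :=
  if g (cnt g n) = n then 2 * cnt g n + 1 else 2 * (n - cnt g n)

lemma e_succ (g : ℕ → ℕ) (hg : StrictMono g) (hg2 : ∀ m, 2 * m + 1 ≤ g m) (n : ℕ) :
    n + 1 - cnt g (n + 1) =
      if g (cnt g n) = n then n - cnt g n else (n - cnt g n) + 1 := by
  have h1 := cnt_le_self g hg hg2 n
  rw [cnt_succ g hg hg2]
  split_ifs <;> omega

lemma e_mono (g : ℕ → ℕ) (hg : StrictMono g) (hg2 : ∀ m, 2 * m + 1 ≤ g m) :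
    Monotone (fun n => n - cnt g n) := by
  refine monotone_nat_of_le_succ fun n => ?_
  show n - cnt g n ≤ n + 1 - cnt g (n + 1)
  rw [e_succ g hg hg2]
  split_ifs <;> omega

lemma perm_bij (g : ℕ → ℕ) (hg : StrictMono g) (hg2 : ∀ m, 2 * m + 1 ≤ g m) :
    Function.Bijective (perm g) := by
  constructor
  · -- injective
    have key : ∀ n n', n < n' → g (cnt g n) ≠ n → n - cnt g n ≠ n' - cnt g n' := by
      intro n n' hlt hnh
      have h1 : n + 1 - cnt g (n + 1) = (n - cnt g n) + 1 := by
        rw [e_succ g hg hg2, if_neg hnh]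
      have h2 : n + 1 - cnt g (n + 1) ≤ n' - cnt g n' := e_mono g hg hg2 (by omega)
      omega
    intro n n' h
    unfold perm at h
    by_cases h1 : g (cnt g n) = n <;> by_cases h2 : g (cnt g n') = n'
    · rw [if_pos h1, if_pos h2] at h
      have : cnt g n = cnt g n' := by omega
      rw [← h1, ← h2, this]
    · rw [if_pos h1, if_neg h2] at h; omega
    · rw [if_neg h1, if_pos h2] at h; omega
    · rw [if_neg h1, if_neg h2] at h
      have he : n - cnt g n = n' - cnt g n' := by omega
      rcases lt_trichotomy n n' with hc | hc | hc
      · exact absurd he (key n n' hc h1)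
      · exact hc
      · exact absurd he.symm (key n' n hc h2)
  · -- surjective
    intro v
    rcases Nat.even_or_odd v with ⟨t, ht⟩ | ⟨t, ht⟩
    · -- even: v = 2t
      have hex : Set.Nonempty {n | t < n - cnt g n} := by
        refine ⟨2 * t + 2, ?_⟩
        have := cnt_half g hg hg2 (2 * t + 2)
        simp only [Set.mem_setOf_eq]
        omega
      obtain ⟨N, hNmem, hNmin⟩ :
          ∃ N, (t < N - cnt g N) ∧ ∀ m, m < N → ¬ t < m - cnt g m :=
        ⟨sInf {n | t < n - cnt g n}, Nat.sInf_mem hex,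
          fun m hm => Nat.notMem_of_lt_sInf (s := {n | t < n - cnt g n}) hm⟩
      have hN0 : N ≠ 0 := by
        intro h0
        rw [h0] at hNmem
        omega
      have hNpred : ¬ t < (N - 1) - cnt g (N - 1) := hNmin (N - 1) (by omega)
      have hstep := e_succ g hg hg2 (N - 1)
      rw [show N - 1 + 1 = N by omega] at hstep
      have hnh : g (cnt g (N - 1)) ≠ N - 1 := by
        intro hh
        rw [if_pos hh] at hstep
        omega
      rw [if_neg hnh] at hstep
      refine ⟨N - 1, ?_⟩
      rw [perm, if_neg hnh]
      omega
    · -- odd: v = 2t + 1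
      refine ⟨g t, ?_⟩
      rw [perm, cnt_g g hg hg2, if_pos rfl]
      omega

lemma sum_eq (k : ℕ) (g : ℕ → ℕ) (hg : StrictMono g) (hg2 : ∀ m, 2 * m + 1 ≤ g m) (n : ℕ) :
    ∑ i ∈ Finset.range n,
        interleave (fun _ => 0) (fun j => ((j : ℝ) + 1) ^ k) (perm g i) =
      (Tn k (cnt g n) : ℝ) := by
  induction n with
  | zero => simp [cnt_zero, Tn]
  | succ n ih =>
    rw [Finset.sum_range_succ, ih, cnt_succ g hg hg2]
    by_cases h : g (cnt g n) = n
    · rw [if_pos h]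
      have hmod : (2 * cnt g n + 1) % 2 = 1 := by omega
      have hdiv : (2 * cnt g n + 1) / 2 = cnt g n := by omega
      rw [perm, if_pos h, interleave, if_neg (by omega), hdiv, Tn_succ]
      push_cast
      ring
    · rw [if_neg h, perm, if_neg h, interleave, if_pos (by omega)]
      simp

lemma avg_eq (k : ℕ) (g : ℕ → ℕ) (hg : StrictMono g) (hg2 : ∀ m, 2 * m + 1 ≤ g m) (n : ℕ) :
    avgSeq (fun i =>
        interleave (fun _ => 0) (fun j => ((j : ℝ) + 1) ^ k) (perm g i)) n =
      (Tn k (cnt g n) : ℝ) / n := by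
  rw [avgSeq, sum_eq k g hg hg2]

noncomputable def gTop : ℕ → ℕ := fun m => 2 * m + 1

lemma gTop_mono : StrictMono gTop := strictMono_nat_of_lt_succ fun n => by
  simp only [gTop]; omega

lemma gTop_ge : ∀ m, 2 * m + 1 ≤ gTop m := fun m => le_rfl

lemma mem_AAR_top (k : ℕ) (hk : 1 ≤ k) :
    (⊤ : EReal) ∈ AAR (interleave (fun _ => 0) (fun n => ((n : ℝ) + 1) ^ k)) := by
  refine ⟨perm gTop, perm_bij gTop gTop_mono gTop_ge, ?_⟩
  show Tendsto _ atTop (𝓝 ⊤)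
  rw [EReal.tendsto_nhds_top_iff_real]
  intro y
  have hcnt : ∀ n, cnt gTop n = n / 2 := by
    intro n
    have h1 := cnt_half gTop gTop_mono gTop_ge n
    have h2 := cnt_spec gTop gTop_ge n
    simp only [gTop] at h2
    omega
  have hreal : Tendsto (fun n =>
      avgSeq (fun i => interleave (fun _ => 0) (fun j => ((j : ℝ) + 1) ^ k) (perm gTop i)) n)
      atTop atTop := by
    have hlow : Tendsto (fun n : ℕ => ((n : ℝ) - 1) / 8) atTop atTop := by
      have h1 : Tendsto (fun n : ℕ => (n : ℝ) + (-1)) atTop atTop :=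
        tendsto_atTop_add_const_right atTop (-1) tendsto_natCast_atTop_atTop
      have h2 := h1.atTop_div_const (by norm_num : (0 : ℝ) < 8)
      simpa [sub_eq_add_neg] using h2
    refine tendsto_atTop_mono' atTop ?_ hlow
    filter_upwards [eventually_ge_atTop 2] with n hn
    rw [avg_eq k gTop gTop_mono gTop_ge, hcnt]
    have hq1 : n ≤ 2 * (n / 2) + 1 := by omega
    have hq2 : 2 * (n / 2) ≤ n := by omega
    have hT := Tn_quad k hk (n / 2)
    have hTr : ((n / 2 : ℕ) : ℝ) * ((n / 2 : ℕ) + 1) ≤ 2 * (Tn k (n / 2) : ℝ) := by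
      exact_mod_cast hT
    have hq1r : (n : ℝ) ≤ 2 * ((n / 2 : ℕ) : ℝ) + 1 := by exact_mod_cast hq1
    have hq2r : 2 * ((n / 2 : ℕ) : ℝ) ≤ (n : ℝ) := by exact_mod_cast hq2
    have hnpos : (0 : ℝ) < n := by
      have : (2 : ℝ) ≤ n := by exact_mod_cast hn
      linarith
    rw [div_le_div_iff₀ (by norm_num) hnpos]
    nlinarith [hTr, hq1r, hq2r]
  filter_upwards [hreal.eventually_gt_atTop y] with n hn
  exact_mod_cast hn

noncomputable def gZero (k : ℕ) : ℕ → ℕ := fun m => 2 * m + 1 + (m + 1) * Tn k (m + 1)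

lemma gZero_mono (k : ℕ) : StrictMono (gZero k) := strictMono_nat_of_lt_succ fun m => by
  have h1 : Tn k (m + 1) ≤ Tn k (m + 1 + 1) := by rw [Tn_succ k (m + 1)]; omega
  have h2 : (m + 1) * Tn k (m + 1) ≤ (m + 1 + 1) * Tn k (m + 1 + 1) :=
    Nat.mul_le_mul (by omega) h1
  simp only [gZero]
  omega

lemma gZero_ge (k : ℕ) : ∀ m, 2 * m + 1 ≤ gZero k m := fun m => Nat.le_add_right _ _

lemma mem_AAR_zero (k : ℕ) (hk : 1 ≤ k) :
    (((0 : ℝ) : EReal)) ∈ AAR (interleave (fun _ => 0) (fun n => ((n : ℝ) + 1) ^ k)) := by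
  refine ⟨perm (gZero k), perm_bij _ (gZero_mono k) (gZero_ge k), ?_⟩
  show Tendsto _ atTop (𝓝 ((0 : ℝ) : EReal))
  rw [EReal.tendsto_coe]
  have hct := cnt_tendsto (gZero k) (gZero_mono k) (gZero_ge k)
  refine tendsto_of_tendsto_of_tendsto_of_le_of_le' tendsto_const_nhds
    (tendsto_one_div_atTop_nhds_zero_nat.comp hct) ?_ ?_
  · filter_upwards with n
    rw [avg_eq k _ (gZero_mono k) (gZero_ge k)]
    positivity
  · filter_upwards [hct.eventually_ge_atTop 1] with n hm
    simp only [Function.comp_apply]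
    rw [avg_eq k _ (gZero_mono k) (gZero_ge k)]
    have hn1 : 1 ≤ n := by
      by_contra h
      have h0 : n = 0 := by omega
      rw [h0, cnt_zero] at hm
      omega
    set m := cnt (gZero k) n with hmdef
    have hlt : gZero k (m - 1) < n := lt_of_lt_cnt _ (by omega)
    have hkey : m * Tn k m ≤ gZero k (m - 1) := by
      simp only [gZero]
      rw [show m - 1 + 1 = m by omega]
      omega
    have hT : 0 < Tn k m := Tn_pos k m hm
    have h2 : m * Tn k m < n := lt_of_le_of_lt hkey hlt
    have h2r : (m : ℝ) * (Tn k m : ℝ) < (n : ℝ) := by exact_mod_cast h2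
    have hmpos : (0 : ℝ) < m := by exact_mod_cast hm
    have hnpos : (0 : ℝ) < n := by
      have : (1 : ℝ) ≤ n := by exact_mod_cast hn1
      linarith
    rw [div_le_div_iff₀ hnpos hmpos]
    have hTr : (1 : ℝ) ≤ Tn k m := by exact_mod_cast hT
    nlinarith

noncomputable def gPos (k : ℕ) (x : ℝ) : ℕ → ℕ :=
  fun m => 2 * m + 1 + ⌈(Tn k (m + 1) : ℝ) / x⌉₊

lemma gPos_mono (k : ℕ) (x : ℝ) (hx : 0 < x) : StrictMono (gPos k x) :=
  strictMono_nat_of_lt_succ fun m => by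
    have h0 : Tn k (m + 1) ≤ Tn k (m + 1 + 1) := by rw [Tn_succ k (m + 1)]; omega
    have h1 : (Tn k (m + 1) : ℝ) / x ≤ (Tn k (m + 1 + 1) : ℝ) / x := by
      have h0r : (Tn k (m + 1) : ℝ) ≤ (Tn k (m + 1 + 1) : ℝ) := by exact_mod_cast h0
      gcongr
    have h2 : ⌈(Tn k (m + 1) : ℝ) / x⌉₊ ≤ ⌈(Tn k (m + 1 + 1) : ℝ) / x⌉₊ :=
      Nat.ceil_le_ceil h1
    simp only [gPos]
    omega

lemma gPos_ge (k : ℕ) (x : ℝ) : ∀ m, 2 * m + 1 ≤ gPos k x m := fun m => Nat.le_add_right _ _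

lemma tendsto_linear_div_Tn (k : ℕ) (hk : 1 ≤ k) :
    Tendsto (fun m : ℕ => (2 * (m : ℝ) + 2) / (Tn k m : ℝ)) atTop (𝓝 0) := by
  refine tendsto_of_tendsto_of_tendsto_of_le_of_le' tendsto_const_nhds
    (tendsto_const_div_atTop_nhds_zero_nat 4) ?_ ?_
  · filter_upwards with m
    positivity
  · filter_upwards [eventually_ge_atTop 1] with m hm
    have hT := Tn_quad k hk m
    have hTpos : 0 < Tn k m := Tn_pos k m hm
    have hTr : (m : ℝ) * ((m : ℝ) + 1) ≤ 2 * (Tn k m : ℝ) := by exact_mod_cast hT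
    have hTp : (0 : ℝ) < Tn k m := by exact_mod_cast hTpos
    have hmp : (0 : ℝ) < m := by exact_mod_cast hm
    rw [div_le_div_iff₀ hTp hmp]
    nlinarith

lemma tendsto_pow_div_Tn (k : ℕ) (hk : 1 ≤ k) :
    Tendsto (fun m : ℕ => ((m : ℝ) + 1) ^ k / (Tn k m : ℝ)) atTop (𝓝 0) := by
  refine tendsto_of_tendsto_of_tendsto_of_le_of_le' tendsto_const_nhds
    (tendsto_const_div_atTop_nhds_zero_nat ((2 : ℝ) ^ (k + 2))) ?_ ?_
  · filter_upwards with m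
    positivity
  · filter_upwards [eventually_ge_atTop 1] with m hm
    have h1 := Tn_half k m
    have h2 : (m + 1) ^ k ≤ 2 ^ k * (m / 2 + 1) ^ k := by
      calc (m + 1) ^ k ≤ (2 * (m / 2 + 1)) ^ k := Nat.pow_le_pow_left (by omega) k
      _ = 2 ^ k * (m / 2 + 1) ^ k := mul_pow 2 _ k
    have h3 : m ≤ 4 * (m - m / 2) := by omega
    have key : m * (m + 1) ^ k ≤ 2 ^ (k + 2) * Tn k m := by
      calc m * (m + 1) ^ k ≤ (4 * (m - m / 2)) * (2 ^ k * (m / 2 + 1) ^ k) :=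
            Nat.mul_le_mul h3 h2
      _ = 4 * 2 ^ k * ((m - m / 2) * (m / 2 + 1) ^ k) := by ring
      _ ≤ 4 * 2 ^ k * Tn k m := Nat.mul_le_mul_left _ h1
      _ = 2 ^ (k + 2) * Tn k m := by rw [pow_succ, pow_succ]; ring
    have hTpos : 0 < Tn k m := Tn_pos k m hm
    have hTp : (0 : ℝ) < Tn k m := by exact_mod_cast hTpos
    have hmp : (0 : ℝ) < m := by exact_mod_cast hm
    rw [div_le_div_iff₀ hTp hmp]
    have keyr : (m : ℝ) * ((m : ℝ) + 1) ^ k ≤ 2 ^ (k + 2) * (Tn k m : ℝ) := by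
      exact_mod_cast key
    nlinarith

lemma tendsto_L (k : ℕ) (hk : 1 ≤ k) (x : ℝ) (hx : 0 < x) :
    Tendsto (fun m : ℕ => (Tn k m : ℝ) / (2 * (m : ℝ) + 2 + (Tn k (m + 1) : ℝ) / x))
      atTop (𝓝 x) := by
  have hD : Tendsto
      (fun m : ℕ => (2 * (m : ℝ) + 2 + (Tn k (m + 1) : ℝ) / x) / (Tn k m : ℝ))
      atTop (𝓝 (0 + (1 / x + 0 * (1 / x)))) := by
    refine Tendsto.congr' ?_
      (((tendsto_linear_div_Tn k hk)).add
        (tendsto_const_nhds.add ((tendsto_pow_div_Tn k hk).mul tendsto_const_nhds)))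
    filter_upwards [eventually_ge_atTop 1] with m hm
    have hTpos : (0 : ℝ) < Tn k m := by exact_mod_cast Tn_pos k m hm
    have hTsucc : (Tn k (m + 1) : ℝ) = (Tn k m : ℝ) + ((m : ℝ) + 1) ^ k := by
      rw [Tn_succ]
      push_cast
      ring
    rw [hTsucc]
    field_simp
  have hD' : Tendsto
      (fun m : ℕ => (2 * (m : ℝ) + 2 + (Tn k (m + 1) : ℝ) / x) / (Tn k m : ℝ))
      atTop (𝓝 (1 / x)) := by
    simpa using hD
  have hinv := hD'.inv₀ (by positivity)
  simp only [inv_div, one_div, inv_inv] at hinv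
  exact hinv

lemma mem_AAR_pos (k : ℕ) (hk : 1 ≤ k) (x : ℝ) (hx : 0 < x) :
    (((x : ℝ) : EReal)) ∈ AAR (interleave (fun _ => 0) (fun n => ((n : ℝ) + 1) ^ k)) := by
  have hg := gPos_mono k x hx
  have hg2 := gPos_ge k x
  refine ⟨perm (gPos k x), perm_bij _ hg hg2, ?_⟩
  show Tendsto _ atTop (𝓝 ((x : ℝ) : EReal))
  rw [EReal.tendsto_coe]
  have hct := cnt_tendsto _ hg hg2
  refine tendsto_of_tendsto_of_tendsto_of_le_of_le' ((tendsto_L k hk x hx).comp hct)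
    tendsto_const_nhds ?_ ?_
  · -- lower bound
    filter_upwards [hct.eventually_ge_atTop 1] with n hm
    simp only [Function.comp_apply]
    rw [avg_eq k _ hg hg2]
    have hn1 : 1 ≤ n := by
      by_contra h
      have h0 : n = 0 := by omega
      rw [h0, cnt_zero] at hm
      omega
    set m := cnt (gPos k x) n with hmdef
    have hspec := cnt_spec (gPos k x) hg2 n
    have hceil : (⌈(Tn k (m + 1) : ℝ) / x⌉₊ : ℝ) < (Tn k (m + 1) : ℝ) / x + 1 :=
      Nat.ceil_lt_add_one (by positivity)
    have hnD : (n : ℝ) ≤ 2 * (m : ℝ) + 2 + (Tn k (m + 1) : ℝ) / x := by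
      have hng : (n : ℝ) ≤ (gPos k x m : ℝ) := by exact_mod_cast hspec
      simp only [gPos] at hng
      push_cast at hng
      linarith
    have hnpos : (0 : ℝ) < n := by
      have : (1 : ℝ) ≤ n := by exact_mod_cast hn1
      linarith
    exact div_le_div_of_nonneg_left (by positivity) hnpos hnD
  · -- upper bound
    filter_upwards with n
    rw [avg_eq k _ hg hg2]
    rcases Nat.eq_zero_or_pos (cnt (gPos k x) n) with h0 | hpos
    · rw [h0]
      simp only [Tn, Finset.range_zero, Finset.sum_empty, Nat.cast_zero, zero_div]
      linarith
    · set m := cnt (gPos k x) n with hmdef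
      have hlt : gPos k x (m - 1) < n := lt_of_lt_cnt _ (by omega)
      have hle : (Tn k m : ℝ) / x ≤ (gPos k x (m - 1) : ℝ) := by
        simp only [gPos]
        rw [show m - 1 + 1 = m by omega]
        have hceil := Nat.le_ceil ((Tn k m : ℝ) / x)
        push_cast
        linarith
      have hnr : (Tn k m : ℝ) / x < n := lt_of_le_of_lt hle (by exact_mod_cast hlt)
      have hnpos : (0 : ℝ) < n := lt_of_le_of_lt (by positivity) hnr
      rw [div_le_iff₀ hnpos]
      rw [div_lt_iff₀ hx] at hnr
      linarith

end Stmt12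

/-- For `k ≥ 1` and `(a_n) = (0)||(n^k)` (1-indexed, so the second component is
`(n+1)^k` in 0-indexed form), `AAR_{(a_n)}` is the extended-real interval `[0, +∞]`. -/
theorem stmt12 (k : ℕ) (hk : 1 ≤ k) :
    AAR (interleave (fun _ => 0) (fun n => ((n : ℝ) + 1) ^ k)) =
      {α : EReal | 0 ≤ α} := by
  classical
  set a : ℕ → ℝ := interleave (fun _ => 0) (fun n => ((n : ℝ) + 1) ^ k) with ha
  have hc : ∀ i, 0 ≤ a i := by
    intro i
    rw [ha, interleave]
    split
    · exact le_refl 0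
    · positivity
  ext α
  simp only [Set.mem_setOf_eq]
  constructor
  · rintro ⟨p, hp, ht⟩
    refine ge_of_tendsto' ht fun n => ?_
    have h0 : (0 : ℝ) ≤ avgSeq (fun i => a (p i)) n :=
      div_nonneg (Finset.sum_nonneg fun i _ => hc _) (Nat.cast_nonneg n)
    exact EReal.coe_nonneg.mpr h0
  · intro hα
    induction α using EReal.rec with
    | bot => simp at hα
    | top =>
      exact Stmt12.mem_AAR_top k hk
    | coe x =>
      have hx : (0 : ℝ) ≤ x := by exact_mod_cast hα
      rcases hx.eq_or_lt with h | h
      · rw [← h]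
        exact Stmt12.mem_AAR_zero k hk
      · exact Stmt12.mem_AAR_pos k hk x h
end
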